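/- arXiv:1712.10208 — 11 statements merged into one kernel-verified Lean document; each statement's English description precedes it below -/
import Mathlib

section
/- Let d ≥ 1 be an integer and let p, q be real numbers with p > 1 and 0 ≤ q < p − 1. Then there is no continuously differentiable function u : (0,∞) → ℝ such that u(r) > 0 and u'(r) ≤ 0 for all r > 0, lim_{r→0⁺} u(r) = 1, lim_{r→∞} u(r) = 0, lim_{r→∞} u'(r) = 0, and the function r ↦ r^{d−1}|u'(r)|^{p−2}u'(r) is differentiable on (0,∞) with derivative equal to r^{d−1} u(r)^q at every r > 0. (Equivalently, every nonincreasing solution of the radial p-Laplace equation Δ_p u = u^q with u(0⁺)=1 and u, u' → 0 at infinity must vanish at some finite radius.) -/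
open Filter Set Topology MeasureTheory

/-- For `d ≥ 1`, `p > 1`, `0 ≤ q < p - 1`, there is no `C¹` positive
nonincreasing solution on `(0,∞)` of the radial p-Laplace equation `Δ_p u = u^q`
with `u(0⁺) = 1`, `u(∞) = 0`, `u'(∞) = 0`. -/
theorem stmt0 (d : ℕ) (hd : 1 ≤ d) (p q : ℝ) (hp : 1 < p) (hq0 : 0 ≤ q) (hq : q < p - 1) :
    ¬ ∃ u u' : ℝ → ℝ,
      (∀ r ∈ Ioi (0:ℝ), HasDerivAt u (u' r) r) ∧
      ContinuousOn u' (Ioi 0) ∧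
      (∀ r ∈ Ioi (0:ℝ), 0 < u r) ∧
      (∀ r ∈ Ioi (0:ℝ), u' r ≤ 0) ∧
      Tendsto u (𝓝[>] 0) (𝓝 1) ∧
      Tendsto u atTop (𝓝 0) ∧
      Tendsto u' atTop (𝓝 0) ∧
      (∀ r ∈ Ioi (0:ℝ),
        HasDerivAt (fun s => s ^ (d - 1) * |u' s| ^ (p - 2) * u' s)
          (r ^ (d - 1) * u r ^ q) r) := by
  rintro ⟨u, u', hderiv, hu'cont, hupos, hu'np, h0, hutop, hu'top, hPDE⟩
  obtain ⟨k, rfl⟩ : ∃ k, d = k + 1 := ⟨d - 1, (Nat.succ_pred_eq_of_pos hd).symm⟩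
  simp only [Nat.add_sub_cancel] at hPDE
  have hp0 : (0:ℝ) < p := by linarith
  have hp1 : (0:ℝ) < p - 1 := by linarith
  set w : ℝ → ℝ := fun s => s ^ k * |u' s| ^ (p - 2) * u' s with hw_def
  -- w is strictly monotone on Ioi 0
  have hwmono : StrictMonoOn w (Ioi 0) := by
    apply strictMonoOn_of_deriv_pos (convex_Ioi 0)
    · exact fun x hx => ((hPDE x hx).continuousAt).continuousWithinAt
    · intro x hx
      rw [interior_Ioi] at hx
      rw [(hPDE x hx).deriv]
      exact mul_pos (pow_pos hx k) (Real.rpow_pos_of_pos (hupos x hx) q)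
  -- u' < 0 everywhere
  have hneg : ∀ r ∈ Ioi (0:ℝ), u' r < 0 := by
    intro r hr
    rcases lt_or_eq_of_le (hu'np r hr) with h | h
    · exact h
    · exfalso
      have hwr : w r = 0 := by simp only [hw_def]; rw [h, mul_zero]
      have h2 : w (r + 1) ≤ 0 := by
        have := hu'np (r + 1) (by simp only [mem_Ioi] at hr ⊢; linarith)
        have h3 : (0:ℝ) ≤ (r+1) ^ k * |u' (r+1)| ^ (p - 2) :=
          mul_nonneg (pow_nonneg (by simp only [mem_Ioi] at hr; linarith) k)
            (Real.rpow_nonneg (abs_nonneg _) _)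
        exact mul_nonpos_of_nonneg_of_nonpos h3 this
      have h4 : w r < w (r + 1) :=
        hwmono hr (by simp only [mem_Ioi] at hr ⊢; linarith) (by linarith)
      linarith [hwr ▸ h4]
  -- g = |u'|^(p-2) u'
  set g : ℝ → ℝ := fun s => |u' s| ^ (p - 2) * u' s with hg_def
  have hkr : ∀ r : ℝ, (k:ℝ) * r ^ (k - 1) * r = k * r ^ k := by
    intro r
    cases k with
    | zero => simp
    | succ m => simp [pow_succ]; ring
  have hgderiv : ∀ r ∈ Ioi (0:ℝ), HasDerivAt g (u r ^ q - (k / r) * g r) r := by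
    intro r hr
    simp only [mem_Ioi] at hr
    have hrk : r ^ k ≠ 0 := pow_ne_zero k hr.ne'
    have hdiv : HasDerivAt (fun s => w s / s ^ k)
        ((r ^ k * u r ^ q * r ^ k - w r * ((k:ℝ) * r ^ (k - 1))) / (r ^ k) ^ 2) r :=
      (hPDE r hr).div (hasDerivAt_pow k r) hrk
    have heq : (fun s => w s / s ^ k) =ᶠ[𝓝 r] g := by
      filter_upwards [isOpen_Ioi.eventually_mem (show r ∈ Ioi (0:ℝ) from hr)] with s hs
      simp only [mem_Ioi] at hs
      field_simp [hw_def, hg_def]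
      ring
    have := hdiv.congr_of_eventuallyEq heq.symm
    convert this using 1
    · rfl
    · rfl
    have hwr : w r = r ^ k * g r := by simp [hw_def, hg_def]; ring
    rw [hwr]
    field_simp
    linear_combination (|u' r| ^ (p - 2) * u' r) * hkr r
  -- pointwise facts
  have hq1 : (0:ℝ) < q + 1 := by linarith
  have hgid : ∀ s ∈ Ioi (0:ℝ), g s = -((-u' s) ^ (p - 1)) := by
    intro s hs
    have h1 : u' s < 0 := hneg s hs
    have h3 : (0:ℝ) < -u' s := by linarith
    simp only [hg_def]
    rw [abs_of_neg h1, show p - 1 = p - 2 + 1 by ring, Real.rpow_add_one h3.ne']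
    ring
  -- energy function
  set E : ℝ → ℝ := fun s => (p - 1)/p * (-g s) ^ (p/(p-1)) - u s ^ (q+1) / (q+1)
    with hE_def
  have hEeq : ∀ s ∈ Ioi (0:ℝ),
      E s = (p-1)/p * (-u' s) ^ p - u s ^ (q+1) / (q+1) := by
    intro s hs
    have hx : (0:ℝ) < -u' s := by linarith [hneg s hs]
    have e : (-g s) ^ (p/(p-1)) = (-u' s) ^ p := by
      rw [hgid s hs, neg_neg, ← Real.rpow_mul hx.le]
      congr 1
      field_simp
    simp only [hE_def, e]
  have hEderiv : ∀ r ∈ Ioi (0:ℝ),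
      HasDerivAt E (-((k:ℝ)/r) * (-u' r) ^ p) r := by
    intro r hr
    have hr0 : (0:ℝ) < r := hr
    have hx : (0:ℝ) < -u' r := by linarith [hneg r hr]
    have hgneg : (0:ℝ) < -g r := by
      rw [hgid r hr, neg_neg]; exact Real.rpow_pos_of_pos hx _
    have h1 := (((hgderiv r hr).neg).rpow_const (p := p/(p-1)) (Or.inl hgneg.ne')).const_mul ((p-1)/p)
    have h2 := ((hderiv r hr).rpow_const (p := q+1) (Or.inl (hupos r hr).ne')).div_const (q+1)
    have := h1.sub h2
    convert this using 1
    · rfl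
    · rfl
    · rfl
    have e1 : (-g r) ^ (p/(p-1) - 1) = -u' r := by
      rw [hgid r hr, neg_neg, ← Real.rpow_mul hx.le,
        show (p-1) * (p/(p-1) - 1) = 1 by field_simp; ring, Real.rpow_one]
    have e2 : (-u' r) ^ (p-1) * (-u' r) = (-u' r) ^ p := by
      rw [← Real.rpow_add_one hx.ne' (p-1)]; norm_num
    rw [show q + 1 - 1 = q by ring, Pi.neg_apply, e1, ← e2, hgid r hr]
    field_simp
    ring
  have hEanti : AntitoneOn E (Ioi 0) := by
    apply antitoneOn_of_deriv_nonpos (convex_Ioi 0)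
    · exact fun x hx => (hEderiv x hx).continuousAt.continuousWithinAt
    · intro x hx
      rw [interior_Ioi] at hx
      exact (hEderiv x hx).differentiableAt.differentiableWithinAt
    · intro x hx
      rw [interior_Ioi] at hx
      rw [(hEderiv x hx).deriv]
      have hx0 : (0:ℝ) < x := hx
      have : (0:ℝ) ≤ ((k:ℝ)/x) * (-u' x) ^ p := by
        apply mul_nonneg (by positivity) (Real.rpow_nonneg _ _)
        linarith [hneg x hx]
      linarith
  have hElim : Tendsto E atTop (𝓝 0) := by
    have t1 : Tendsto (fun s => -u' s) atTop (𝓝 0) := by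
      simpa using hu'top.neg
    have t2 : Tendsto (fun s => (-u' s) ^ p) atTop (𝓝 0) := by
      simpa [Real.zero_rpow hp0.ne'] using t1.rpow_const (Or.inr hp0.le)
    have t3 : Tendsto (fun s => u s ^ (q+1)) atTop (𝓝 0) := by
      simpa [Real.zero_rpow hq1.ne'] using hutop.rpow_const (Or.inr hq1.le)
    have t4 : Tendsto (fun s => (p-1)/p * (-u' s) ^ p - u s ^ (q+1) / (q+1))
        atTop (𝓝 0) := by
      simpa using (t2.const_mul ((p-1)/p)).sub (t3.div_const (q+1))
    apply t4.congr'
    filter_upwards [eventually_gt_atTop (0:ℝ)] with s hs using (hEeq s hs).symm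
  have hEnn : ∀ r ∈ Ioi (0:ℝ), 0 ≤ E r := by
    intro r hr
    apply le_of_tendsto hElim
    filter_upwards [eventually_ge_atTop r, eventually_gt_atTop (0:ℝ)] with s h1 h2
    exact hEanti hr h2 h1
  -- key differential inequality
  set c : ℝ := (p/((p-1)*(q+1))) ^ (1/p) with hc_def
  have hB : (0:ℝ) < p/((p-1)*(q+1)) := by positivity
  have hc : 0 < c := Real.rpow_pos_of_pos hB _
  have hkey : ∀ r ∈ Ioi (0:ℝ), c * u r ^ ((q+1)/p) ≤ -u' r := by
    intro r hr
    have hx : (0:ℝ) < -u' r := by linarith [hneg r hr]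
    have hu : 0 < u r := hupos r hr
    have hE0 := hEnn r hr
    rw [hEeq r hr] at hE0
    have h1 : u r ^ (q+1) / (q+1) ≤ (p-1)/p * (-u' r) ^ p := by linarith
    have h1' : u r ^ (q+1) ≤ (p-1)/p * (-u' r) ^ p * (q+1) := (div_le_iff₀ hq1).mp h1
    have h2 : p/((p-1)*(q+1)) * u r ^ (q+1) ≤ (-u' r) ^ p := by
      calc p/((p-1)*(q+1)) * u r ^ (q+1)
          ≤ p/((p-1)*(q+1)) * ((p-1)/p * (-u' r) ^ p * (q+1)) :=
            mul_le_mul_of_nonneg_left h1' hB.le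
        _ = (-u' r) ^ p := by field_simp
    have h3 : (p/((p-1)*(q+1)) * u r ^ (q+1)) ^ (1/p) ≤ ((-u' r) ^ p) ^ (1/p) :=
      Real.rpow_le_rpow (by positivity) h2 (by positivity)
    have h4 : ((-u' r) ^ p) ^ (1/p) = -u' r := by
      rw [← Real.rpow_mul hx.le, mul_one_div, div_self hp0.ne', Real.rpow_one]
    have h5 : (p/((p-1)*(q+1)) * u r ^ (q+1)) ^ (1/p) = c * u r ^ ((q+1)/p) := by
      rw [Real.mul_rpow hB.le (Real.rpow_nonneg hu.le _), ← Real.rpow_mul hu.le,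
        mul_one_div]
    rw [h5, h4] at h3
    exact h3
  -- the function v = u^α decreases at a uniform rate
  set α : ℝ := (p - 1 - q)/p with hα_def
  have hα : 0 < α := by
    apply div_pos _ hp0; linarith
  have hvderiv : ∀ r ∈ Ioi (0:ℝ),
      HasDerivAt (fun s => u s ^ α) (u' r * α * u r ^ (α - 1)) r :=
    fun r hr => (hderiv r hr).rpow_const (Or.inl (hupos r hr).ne')
  have hvbound : ∀ r ∈ Ioi (0:ℝ), u' r * α * u r ^ (α - 1) ≤ -(α * c) := by
    intro r hr
    have hu : 0 < u r := hupos r hr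
    have h2 : u' r ≤ -(c * u r ^ ((q+1)/p)) := by linarith [hkey r hr]
    have h3 : u' r * (α * u r ^ (α-1)) ≤ -(c * u r ^ ((q+1)/p)) * (α * u r ^ (α-1)) :=
      mul_le_mul_of_nonneg_right h2 (by positivity)
    have h4 : u r ^ ((q+1)/p) * u r ^ (α-1) = 1 := by
      rw [← Real.rpow_add hu, show (q+1)/p + (α-1) = 0 by rw [hα_def]; field_simp; ring,
        Real.rpow_zero]
    calc u' r * α * u r ^ (α-1) = u' r * (α * u r ^ (α-1)) := by ring
      _ ≤ -(c * u r ^ ((q+1)/p)) * (α * u r ^ (α-1)) := h3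
      _ = -(α*c) * (u r ^ ((q+1)/p) * u r ^ (α-1)) := by ring
      _ = -(α*c) := by rw [h4, mul_one]
  set K : ℝ := α * c with hK_def
  have hK : 0 < K := mul_pos hα hc
  set h : ℝ → ℝ := fun s => u s ^ α + K * s with hh_def
  have hhderiv : ∀ r ∈ Ioi (0:ℝ),
      HasDerivAt h (u' r * α * u r ^ (α - 1) + K) r := by
    intro r hr
    have := (hvderiv r hr).add ((hasDerivAt_id r).const_mul K)
    rw [mul_one] at this
    exact this
  have hhanti : AntitoneOn h (Ioi 0) := by
    apply antitoneOn_of_deriv_nonpos (convex_Ioi 0)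
    · exact fun x hx => (hhderiv x hx).continuousAt.continuousWithinAt
    · intro x hx
      rw [interior_Ioi] at hx
      exact (hhderiv x hx).differentiableAt.differentiableWithinAt
    · intro x hx
      rw [interior_Ioi] at hx
      rw [(hhderiv x hx).deriv]
      linarith [hvbound x hx]
  -- contradiction
  set s₀ : ℝ := max 1 ((u 1 ^ α + K)/K + 1) with hs₀_def
  have hs₀1 : (1:ℝ) ≤ s₀ := le_max_left _ _
  have hs₀pos : s₀ ∈ Ioi (0:ℝ) := by simp only [mem_Ioi]; linarith
  have h1mem : (1:ℝ) ∈ Ioi (0:ℝ) := by norm_num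
  have hmono := hhanti h1mem hs₀pos hs₀1
  have hb : (u 1 ^ α + K)/K + 1 ≤ s₀ := le_max_right _ _
  have hKs : u 1 ^ α + K + K ≤ K * s₀ := by
    calc u 1 ^ α + K + K = K * ((u 1 ^ α + K)/K + 1) := by field_simp
      _ ≤ K * s₀ := mul_le_mul_of_nonneg_left hb hK.le
  have hv0 : 0 < u s₀ ^ α := Real.rpow_pos_of_pos (hupos s₀ hs₀pos) α
  simp only [hh_def] at hmono
  linarith
end

section
/- Let d ≥ 1 be an integer, p > 1, q ≥ 0 real, and 0 < R < ∞. Suppose u : (0,R) → ℝ is continuously differentiable with u(r) > 0 and u'(r) ≤ 0 on (0,R), lim_{r→0⁺} u(r) = 1, lim_{r→R⁻} u(r) = 0, the function r ↦ r^{d−1}|u'(r)|^{p−2}u'(r) is differentiable on (0,R) with derivative r^{d−1} u(r)^q at every r ∈ (0,R), and ∫_0^R r^{d−1}(|u'(r)|^p + u(r)^{q+1}) dr < ∞. Then lim_{r→0⁺} r^d |u'(r)|^p = 0, the limit L := lim_{r→R⁻} r^d |u'(r)|^p exists, and ((p−d)/p) ∫_0^R r^{d−1}|u'(r)|^p dr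 − (d/(q+1)) ∫_0^R r^{d−1} u(r)^{q+1} dr = ((p−1)/p) · L. -/
open Filter Set Topology MeasureTheory

private lemma hasDerivAt_pow_div (m : ℕ) (r : ℝ) (hr : r ≠ 0) :
    HasDerivAt (fun s : ℝ => s^m) ((m:ℝ) * r^m / r) r := by
  have h := hasDerivAt_pow m r
  refine h.congr_deriv (Eq.symm ?_)
  rcases Nat.eq_zero_or_pos m with h0|h0
  · simp [h0]
  · have hh : r ^ m = r^(m-1) * r := by rw [← pow_succ, Nat.sub_add_cancel h0]
    rw [hh]; field_simp

/-- Pohozaev-type identity relating the energy functional to the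
contact angle at the touchdown radius `R` for a radial solution of `Δ_p u = u^q`. -/
theorem stmt1 (d : ℕ) (hd : 1 ≤ d) (p q R : ℝ) (hp : 1 < p) (hq : 0 ≤ q)
    (hR : 0 < R)
    (u u' : ℝ → ℝ)
    (hderiv : ∀ r ∈ Ioo (0:ℝ) R, HasDerivAt u (u' r) r)
    (hu'c : ContinuousOn u' (Ioo 0 R))
    (hupos : ∀ r ∈ Ioo (0:ℝ) R, 0 < u r)
    (hu'le : ∀ r ∈ Ioo (0:ℝ) R, u' r ≤ 0)
    (hlim0 : Tendsto u (𝓝[>] 0) (𝓝 1))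
    (hlimR : Tendsto u (𝓝[<] R) (𝓝 0))
    (hode : ∀ r ∈ Ioo (0:ℝ) R,
      HasDerivAt (fun s => s ^ (d - 1) * |u' s| ^ (p - 2) * u' s)
        (r ^ (d - 1) * u r ^ q) r)
    (hint : IntegrableOn (fun r => r ^ (d - 1) * (|u' r| ^ p + u r ^ (q + 1))) (Ioo 0 R)) :
    Tendsto (fun r => r ^ d * |u' r| ^ p) (𝓝[>] 0) (𝓝 0) ∧
    ∃ L : ℝ, Tendsto (fun r => r ^ d * |u' r| ^ p) (𝓝[<] R) (𝓝 L) ∧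
      ((p - (d:ℝ)) / p) * (∫ r in Ioo (0:ℝ) R, r ^ (d - 1) * |u' r| ^ p)
        - ((d : ℝ) / (q + 1)) * (∫ r in Ioo (0:ℝ) R, r ^ (d - 1) * u r ^ (q + 1))
      = ((p - 1) / p) * L := by
  have hp0 : (0:ℝ) < p := by linarith
  have hp1 : (0:ℝ) < p - 1 := by linarith
  have hq1 : (0:ℝ) < q + 1 := by linarith
  set m : ℕ := d - 1 with hm
  have hdm : d = m + 1 := (Nat.succ_pred_eq_of_pos hd).symm
  set pp : ℝ := p / (p - 1) with hpp
  have hpp1 : 1 ≤ pp := by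
    rw [hpp, le_div_iff₀ hp1]; linarith
  set W : ℝ → ℝ := fun s => s ^ m * |u' s| ^ (p-2) * u' s with hW
  set B : ℝ → ℝ := fun s => -(W s) / s ^ m with hB
  set g : ℝ → ℝ := fun r => ((p - d)/p) * (r^m * |u' r|^p) - ((d:ℝ)/(q+1)) * (r^m * u r^(q+1))
    with hg
  set P : ℝ → ℝ := fun s => ((p-1)/p) * (s^d * |u' s|^p) - (s^d * u s^(q+1))/(q+1) with hP
  -- pointwise algebraic facts
  have habs : ∀ r ∈ Ioo (0:ℝ) R, |u' r| ^ (p-2) * u' r = -((-u' r)^(p-1)) := by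
    intro r hr
    rcases eq_or_lt_of_le (hu'le r hr) with h0 | h0
    · rw [h0]
      simp [Real.zero_rpow (show p - 1 ≠ 0 by linarith)]
    · have ha : (0:ℝ) < -u' r := by linarith
      rw [abs_of_neg h0]
      rw [show p - 1 = (p-2) + 1 by ring, Real.rpow_add_one ha.ne']
      ring
  have hBval : ∀ r ∈ Ioo (0:ℝ) R, B r = (-u' r) ^ (p-1) := by
    intro r hr
    have hrm : r ^ m ≠ 0 := pow_ne_zero _ hr.1.ne'
    rw [hB]
    field_simp
    rw [show W r = r^m * |u' r|^(p-2) * u' r from rfl, mul_assoc, habs r hr]; ring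
  have habsp : ∀ r ∈ Ioo (0:ℝ) R, |u' r| ^ p = (-u' r) ^ p := by
    intro r hr
    rw [abs_of_nonpos (hu'le r hr)]
  have hBpow : ∀ r ∈ Ioo (0:ℝ) R, B r ^ pp = |u' r| ^ p := by
    intro r hr
    have ha : 0 ≤ -u' r := neg_nonneg.mpr (hu'le r hr)
    rw [hBval r hr, habsp r hr, ← Real.rpow_mul ha]
    congr 1
    rw [hpp]; field_simp
  have hBpow1 : ∀ r ∈ Ioo (0:ℝ) R, B r ^ (pp - 1) = -u' r := by
    intro r hr
    have ha : 0 ≤ -u' r := neg_nonneg.mpr (hu'le r hr)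
    rw [hBval r hr, ← Real.rpow_mul ha]
    have : (p - 1) * (pp - 1) = 1 := by rw [hpp]; field_simp; ring
    rw [this, Real.rpow_one]
  have hWval : ∀ r ∈ Ioo (0:ℝ) R, W r = -(r^m * (-u' r)^(p-1)) := by
    intro r hr
    rw [show W r = r^m * |u' r|^(p-2) * u' r from rfl, mul_assoc, habs r hr]; ring
  have hap : ∀ r ∈ Ioo (0:ℝ) R, |u' r| ^ p = (-u' r) * (-u' r)^(p-1) := by
    intro r hr
    rw [habsp r hr]
    rcases eq_or_lt_of_le (hu'le r hr) with h0 | h0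
    · rw [h0]; simp [Real.zero_rpow hp0.ne', Real.zero_rpow (show p - 1 ≠ 0 by linarith)]
    · have ha : (0:ℝ) < -u' r := by linarith
      rw [show p = 1 + (p-1) by ring, Real.rpow_add ha, Real.rpow_one,
        show 1 + (p-1) - 1 = p - 1 by ring]
  have hmr : ((m:ℕ):ℝ) = (d:ℝ) - 1 := by
    rw [hm, Nat.cast_sub hd]; norm_num
  have hPderiv : ∀ r ∈ Ioo (0:ℝ) R, HasDerivAt P (g r) r := by
    intro r hr
    have hrne : r ≠ 0 := hr.1.ne'
    have hpne : p ≠ 0 := hp0.ne'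
    have hp1ne : p - 1 ≠ 0 := hp1.ne'
    have hq1ne : q + 1 ≠ 0 := hq1.ne'
    have hrm : r ^ m ≠ 0 := pow_ne_zero _ hrne
    have hBd : HasDerivAt B ((-(r ^ m * u r ^ q) * r ^ m - (-(W r)) * ((m:ℝ) * r^m / r)) / (r^m)^2) r :=
      ((hode r hr).neg).div (hasDerivAt_pow_div m r hrne) hrm
    have hφ : HasDerivAt (fun x : ℝ => x ^ pp) (pp * B r ^ (pp - 1)) (B r) :=
      Real.hasDerivAt_rpow_const (Or.inr hpp1)
    have hΦ : HasDerivAt (fun s => B s ^ pp)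
        ((pp * B r ^ (pp - 1)) * ((-(r ^ m * u r ^ q) * r ^ m - (-(W r)) * ((m:ℝ) * r^m / r)) / (r^m)^2)) r :=
      hφ.comp r hBd
    have hud : HasDerivAt (fun s => u s ^ (q+1)) (((q+1) * u r ^ (q+1-1)) * u' r) r :=
      (Real.hasDerivAt_rpow_const (Or.inl (hupos r hr).ne')).comp r (hderiv r hr)
    have hrd : HasDerivAt (fun s : ℝ => s ^ d) ((d:ℝ) * r^d / r) r := hasDerivAt_pow_div d r hrne
    have hPhat : HasDerivAt (fun s => ((p-1)/p) * (s^d * (B s ^ pp)) - (s^d * u s^(q+1))/(q+1))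
        ( ((p-1)/p) * (((d:ℝ) * r^d / r) * B r ^ pp + r^d * ((pp * B r ^ (pp - 1)) * ((-(r ^ m * u r ^ q) * r ^ m - (-(W r)) * ((m:ℝ) * r^m / r)) / (r^m)^2)))
          - (((d:ℝ) * r^d / r) * u r ^ (q+1) + r^d * (((q+1) * u r ^ (q+1-1)) * u' r))/(q+1) ) r :=
      ((hrd.mul hΦ).const_mul _).sub ((hrd.mul hud).div_const _)
    have heq : P =ᶠ[𝓝 r] (fun s => ((p-1)/p) * (s^d * (B s ^ pp)) - (s^d * u s^(q+1))/(q+1)) := by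
      filter_upwards [Ioo_mem_nhds hr.1 hr.2] with s hs
      rw [hP]; simp only [hBpow s hs]
    have hPd := hPhat.congr_of_eventuallyEq heq
    refine hPd.congr_deriv (Eq.symm ?_)
    rw [hg]
    simp only [hBpow r hr, hBpow1 r hr]
    simp only [hBpow r hr, hBpow1 r hr, hWval r hr, hap r hr,
      show q + 1 - 1 = q by ring, show r^d = r^m * r from by rw [hdm, pow_succ], hmr, hpp]
    field_simp
    ring
  -- integrability
  have hpne : p ≠ 0 := hp0.ne'
  have hp1ne : p - 1 ≠ 0 := hp1.ne'
  have hq1ne : q + 1 ≠ 0 := hq1.ne'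
  have hIoo : MeasurableSet (Ioo (0:ℝ) R) := measurableSet_Ioo
  have hcu : ContinuousOn u (Ioo 0 R) := fun r hr => (hderiv r hr).continuousAt.continuousWithinAt
  have hcont1 : ContinuousOn (fun r => r^m * |u' r|^p) (Ioo 0 R) :=
    (continuous_pow m).continuousOn.mul (hu'c.abs.rpow_const (fun x _ => Or.inr hp0.le))
  have hcont2 : ContinuousOn (fun r => r^m * u r^(q+1)) (Ioo 0 R) :=
    (continuous_pow m).continuousOn.mul (hcu.rpow_const (fun x _ => Or.inr hq1.le))
  have h1int : IntegrableOn (fun r => r^m * |u' r|^p) (Ioo 0 R) := by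
    apply hint.mono' (hcont1.aestronglyMeasurable hIoo)
    filter_upwards [ae_restrict_mem hIoo] with r hr
    have h1 : (0:ℝ) ≤ r^m := pow_nonneg hr.1.le m
    have h2 : (0:ℝ) ≤ |u' r|^p := Real.rpow_nonneg (abs_nonneg _) p
    have h3 : (0:ℝ) ≤ u r^(q+1) := Real.rpow_nonneg (hupos r hr).le _
    rw [Real.norm_eq_abs, abs_of_nonneg (mul_nonneg h1 h2)]
    nlinarith
  have h2int : IntegrableOn (fun r => r^m * u r^(q+1)) (Ioo 0 R) := by
    apply hint.mono' (hcont2.aestronglyMeasurable hIoo)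
    filter_upwards [ae_restrict_mem hIoo] with r hr
    have h1 : (0:ℝ) ≤ r^m := pow_nonneg hr.1.le m
    have h2 : (0:ℝ) ≤ |u' r|^p := Real.rpow_nonneg (abs_nonneg _) p
    have h3 : (0:ℝ) ≤ u r^(q+1) := Real.rpow_nonneg (hupos r hr).le _
    rw [Real.norm_eq_abs, abs_of_nonneg (mul_nonneg h1 h3)]
    nlinarith
  have hgint : IntegrableOn g (Ioo 0 R) := by
    rw [hg]; exact (h1int.const_mul _).sub (h2int.const_mul _)
  -- FTC
  have hsub : ∀ {a b : ℝ}, a ∈ Ioo (0:ℝ) R → b ∈ Ioo (0:ℝ) R → uIcc a b ⊆ Ioo (0:ℝ) R :=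
    fun ha hb => (ordConnected_Ioo).uIcc_subset ha hb
  set c : ℝ := R/2 with hc
  have hcmem : c ∈ Ioo (0:ℝ) R := ⟨by positivity, by rw [hc]; linarith⟩
  have hFTC : ∀ x ∈ Ioo (0:ℝ) R, ∫ t in c..x, g t = P x - P c := by
    intro x hx
    apply intervalIntegral.integral_eq_sub_of_hasDerivAt
    · intro t ht; exact hPderiv t (hsub hcmem hx ht)
    · rw [intervalIntegrable_iff]
      exact hgint.mono_set (Set.uIoc_subset_uIcc.trans (hsub hcmem hx))
  have hgint0c : IntervalIntegrable g volume 0 c := by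
    rw [intervalIntegrable_iff_integrableOn_Ioc_of_le hcmem.1.le]
    exact hgint.mono_set (fun t ht => ⟨ht.1, lt_of_le_of_lt ht.2 hcmem.2⟩)
  have hgintcR : IntervalIntegrable g volume c R := by
    rw [intervalIntegrable_iff_integrableOn_Ioc_of_le hcmem.2.le,
      integrableOn_Ioc_iff_integrableOn_Ioo]
    exact hgint.mono_set (fun t ht => ⟨lt_trans hcmem.1 ht.1, ht.2⟩)
  -- limits of the primitive
  have hFcontR : ContinuousOn (fun x => ∫ t in c..x, g t) (uIcc c R) :=
    intervalIntegral.continuousOn_primitive_interval' hgintcR left_mem_uIcc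
  have huIccR : uIcc c R = Icc c R := uIcc_of_le hcmem.2.le
  have hFlimR : Tendsto (fun x => ∫ t in c..x, g t) (𝓝[<] R) (𝓝 (∫ t in c..R, g t)) := by
    have h1 := (hFcontR R (by rw [huIccR]; exact right_mem_Icc.mpr hcmem.2.le)).tendsto
    rw [← nhdsWithin_Ioo_eq_nhdsLT hcmem.2]
    exact h1.mono_left (nhdsWithin_mono _ (by rw [huIccR]; exact Ioo_subset_Icc_self))
  have hFcont0 : ContinuousOn (fun x => ∫ t in c..x, g t) (uIcc c 0) :=
    intervalIntegral.continuousOn_primitive_interval' hgint0c.symm left_mem_uIcc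
  have huIcc0 : uIcc c 0 = Icc 0 c := uIcc_of_ge hcmem.1.le
  have hFlim0 : Tendsto (fun x => ∫ t in c..x, g t) (𝓝[>] 0) (𝓝 (∫ t in c..0, g t)) := by
    have h1 := (hFcont0 0 (by rw [huIcc0]; exact left_mem_Icc.mpr hcmem.1.le)).tendsto
    rw [← nhdsWithin_Ioo_eq_nhdsGT hcmem.1]
    exact h1.mono_left (nhdsWithin_mono _ (by rw [huIcc0]; exact Ioo_subset_Icc_self))
  -- limits of P
  have hPlimR : Tendsto P (𝓝[<] R) (𝓝 (P c + ∫ t in c..R, g t)) := by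
    have h := hFlimR.const_add (P c)
    apply h.congr'
    filter_upwards [Ioo_mem_nhdsLT_of_mem (⟨hcmem.2, le_refl R⟩ : R ∈ Ioc c R)] with x hx
    have hx' : x ∈ Ioo (0:ℝ) R := ⟨lt_trans hcmem.1 hx.1, hx.2⟩
    rw [hFTC x hx']; ring
  have hPlim0 : Tendsto P (𝓝[>] 0) (𝓝 (P c + ∫ t in c..0, g t)) := by
    have h := hFlim0.const_add (P c)
    apply h.congr'
    filter_upwards [Ioo_mem_nhdsGT_of_mem (⟨le_refl (0:ℝ), hcmem.1⟩ : (0:ℝ) ∈ Ico 0 c)] with x hx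
    have hx' : x ∈ Ioo (0:ℝ) R := ⟨hx.1, lt_trans hx.2 hcmem.2⟩
    rw [hFTC x hx']; ring
  -- limits of the tail term r^d * u^(q+1)
  have htail0 : Tendsto (fun r => r^d * u r^(q+1)) (𝓝[>] 0) (𝓝 0) := by
    have h1 : Tendsto (fun r : ℝ => r^d) (𝓝[>] 0) (𝓝 0) := by
      have h := ((continuous_pow d).tendsto (0:ℝ)).mono_left (nhdsWithin_le_nhds (s := Ioi (0:ℝ)))
      simpa [zero_pow (show d ≠ 0 by omega)] using h
    have h2 : Tendsto (fun r => u r^(q+1)) (𝓝[>] 0) (𝓝 1) := by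
      have hcr : ContinuousAt (fun x : ℝ => x^(q+1)) 1 :=
        Real.continuousAt_rpow_const 1 (q+1) (Or.inl one_ne_zero)
      have h := hcr.tendsto.comp hlim0
      simpa [Real.one_rpow, Function.comp_def] using h
    simpa using h1.mul h2
  have htailR : Tendsto (fun r => r^d * u r^(q+1)) (𝓝[<] R) (𝓝 0) := by
    have h1 : Tendsto (fun r : ℝ => r^d) (𝓝[<] R) (𝓝 (R^d)) :=
      ((continuous_pow d).tendsto R).mono_left (nhdsWithin_le_nhds (s := Iio R))
    have h2 : Tendsto (fun r => u r^(q+1)) (𝓝[<] R) (𝓝 0) := by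
      have hcr : ContinuousAt (fun x : ℝ => x^(q+1)) 0 :=
        Real.continuousAt_rpow_const 0 (q+1) (Or.inr hq1.le)
      have h := hcr.tendsto.comp hlimR
      simpa [Real.zero_rpow hq1ne, Function.comp_def] using h
    simpa using h1.mul h2
  -- key pointwise identity
  have hkey : ∀ r ∈ Ioo (0:ℝ) R,
      r^d * |u' r|^p = (p/(p-1)) * (P r + (r^d * u r^(q+1))/(q+1)) := by
    intro r hr
    rw [hP]
    field_simp
    ring
  -- main limits
  have hmainR : Tendsto (fun r => r^d * |u' r|^p) (𝓝[<] R)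
      (𝓝 ((p/(p-1)) * (P c + ∫ t in c..R, g t))) := by
    have h := (hPlimR.add (htailR.div_const (q+1))).const_mul (p/(p-1))
    have h' : Tendsto (fun r => (p/(p-1)) * (P r + (r^d * u r^(q+1))/(q+1))) (𝓝[<] R)
        (𝓝 ((p/(p-1)) * (P c + ∫ t in c..R, g t))) := by
      convert h using 2
      rw [zero_div, add_zero]
    apply Tendsto.congr' ?_ h'
    filter_upwards [Ioo_mem_nhdsLT_of_mem (⟨hcmem.2, le_refl R⟩ : R ∈ Ioc c R)] with x hx
    exact (hkey x ⟨lt_trans hcmem.1 hx.1, hx.2⟩).symm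
  have hmain0 : Tendsto (fun r => r^d * |u' r|^p) (𝓝[>] 0)
      (𝓝 ((p/(p-1)) * (P c + ∫ t in c..0, g t))) := by
    have h := (hPlim0.add (htail0.div_const (q+1))).const_mul (p/(p-1))
    have h' : Tendsto (fun r => (p/(p-1)) * (P r + (r^d * u r^(q+1))/(q+1))) (𝓝[>] 0)
        (𝓝 ((p/(p-1)) * (P c + ∫ t in c..0, g t))) := by
      convert h using 2
      rw [zero_div, add_zero]
    apply Tendsto.congr' ?_ h'
    filter_upwards [Ioo_mem_nhdsGT_of_mem (⟨le_refl (0:ℝ), hcmem.1⟩ : (0:ℝ) ∈ Ico 0 c)] with x hx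
    exact (hkey x ⟨hx.1, lt_trans hx.2 hcmem.2⟩).symm
  set l0 : ℝ := P c + ∫ t in c..0, g t with hl0def
  set lR : ℝ := P c + ∫ t in c..R, g t with hlRdef
  have hMnonneg : 0 ≤ (p/(p-1)) * l0 := by
    apply ge_of_tendsto hmain0
    filter_upwards [self_mem_nhdsWithin] with r hr
    have hr0 : (0:ℝ) < r := hr
    positivity
  have hM : (p/(p-1)) * l0 = 0 := by
    by_contra hne
    have hMpos : 0 < (p/(p-1)) * l0 := lt_of_le_of_ne hMnonneg (Ne.symm hne)
    set M := (p/(p-1)) * l0 with hMdef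
    have hev : ∀ᶠ r in 𝓝[>] (0:ℝ), M/2 < r^d * |u' r|^p :=
      hmain0.eventually (eventually_gt_nhds (by linarith))
    obtain ⟨s, hs, hsub'⟩ := hev.exists_mem
    rw [mem_nhdsGT_iff_exists_Ioo_subset] at hs
    obtain ⟨ε, hε, hIooSub⟩ := hs
    have hε0 : (0:ℝ) < ε := hε
    set ε' : ℝ := min ε R with hε'def
    have hε'0 : 0 < ε' := lt_min hε0 hR
    have hIooR : Ioo (0:ℝ) ε' ⊆ Ioo 0 R :=
      fun x hx => ⟨hx.1, lt_of_lt_of_le hx.2 (min_le_right _ _)⟩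
    have hbound : ∀ x ∈ Ioo (0:ℝ) ε', M/2 < x^d * |u' x|^p :=
      fun x hx => hsub' x (hIooSub ⟨hx.1, lt_of_lt_of_le hx.2 (min_le_left _ _)⟩)
    have hinv : IntegrableOn (fun x : ℝ => x^(-1:ℝ)) (Ioo 0 ε') := by
      have hig : IntegrableOn (fun x => (2/M) * (x^m * |u' x|^p)) (Ioo 0 ε') :=
        (h1int.mono_set hIooR).const_mul _
      apply hig.mono' ?_ ?_
      · exact ContinuousOn.aestronglyMeasurable
          (ContinuousOn.rpow_const continuousOn_id (fun x hx => Or.inl (ne_of_gt hx.1)))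
          measurableSet_Ioo
      · filter_upwards [ae_restrict_mem measurableSet_Ioo] with x hx
        have hx0 : 0 < x := hx.1
        have hkey2 := hbound x hx
        have hxd : x^d = x * x^m := by rw [hdm, pow_succ]; ring
        rw [hxd] at hkey2
        rw [Real.norm_eq_abs, Real.rpow_neg_one, abs_of_nonneg (inv_nonneg.mpr hx0.le)]
        have h3 : x⁻¹ * (M/2) < x⁻¹ * (x * x^m * |u' x|^p) :=
          mul_lt_mul_of_pos_left hkey2 (inv_pos.mpr hx0)
        have h3' : x⁻¹ * (x * x^m * |u' x|^p) = x^m * |u' x|^p := by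
          field_simp
        rw [h3'] at h3
        have h4 : (2/M) * (x⁻¹ * (M/2)) ≤ (2/M) * (x^m * |u' x|^p) :=
          mul_le_mul_of_nonneg_left h3.le (by positivity)
        have h5 : (2/M) * (x⁻¹ * (M/2)) = x⁻¹ := by
          field_simp
        linarith
    have := (intervalIntegral.integrableOn_Ioo_rpow_iff hε'0).mp hinv
    norm_num at this
  have hppne : p/(p-1) ≠ 0 := by positivity
  have hl0 : l0 = 0 := (mul_eq_zero.mp hM).resolve_left hppne
  constructor
  · exact hM ▸ hmain0
  refine ⟨(p/(p-1)) * lR, hmainR, ?_⟩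
  have hPc : P c = ∫ t in (0:ℝ)..c, g t := by
    have h1 : P c + ∫ t in c..0, g t = 0 := by rw [← hl0def]; exact hl0
    have h2 : ∫ t in c..0, g t = -∫ t in (0:ℝ)..c, g t := intervalIntegral.integral_symm 0 c
    linarith
  have hIooEq : ∫ r in Ioo (0:ℝ) R, g r = lR := by
    have hadj := intervalIntegral.integral_add_adjacent_intervals hgint0c hgintcR
    have h0R : ∫ t in (0:ℝ)..R, g t = ∫ r in Ioo (0:ℝ) R, g r := by
      rw [intervalIntegral.integral_of_le hR.le, integral_Ioc_eq_integral_Ioo]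
    rw [hlRdef, hPc, ← h0R, ← hadj]
  have hsplit : ∫ r in Ioo (0:ℝ) R, g r
      = ((p - (d:ℝ))/p) * (∫ r in Ioo (0:ℝ) R, r^m * |u' r|^p)
        - ((d:ℝ)/(q+1)) * (∫ r in Ioo (0:ℝ) R, r^m * u r^(q+1)) := by
    rw [hg, integral_sub (h1int.const_mul _) (h2int.const_mul _),
      integral_const_mul, integral_const_mul]
  rw [← hsplit, hIooEq]
  field_simp
end

section
/- Let d ≥ 1 be an integer, p > d, q > 0, and 0 < r₁ < r₂. For i = 1, 2, let u_i : [r_i, ∞) → ℝ be a continuously differentiable, nonincreasing, nonnegative function with u_i(r_i) = 1, lim_{r→∞} u_i(r) = 0, u_i'(r) < 0 at every r > r_i with u_i(r) > 0, such that the function r ↦ r^{d−1}|u_i'(r)|^{p−2}u_i'(r) is differentiable on (r_i, ∞) with derivative r^{d−1} u_i(r)^q. Then u₂(r) > u₁(r) for every r ≥ r₂ at which u₂(r) > 0. -/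
open Filter Set Topology MeasureTheory


lemma phi_eq_nonneg {p x : ℝ} (hp : 1 < p) (hx : 0 ≤ x) : |x| ^ (p-2) * x = x ^ (p-1) := by
  rcases eq_or_lt_of_le hx with h | h
  · rw [← h]; simp [Real.zero_rpow (by linarith : p - 1 ≠ 0)]
  · rw [abs_of_pos h, ← Real.rpow_add_one h.ne']
    ring_nf

lemma phi_eq_neg {p x : ℝ} (hp : 1 < p) (hx : x < 0) : |x| ^ (p-2) * x = -((-x) ^ (p-1)) := by
  rw [abs_of_neg hx]
  have : (-x) ^ (p-1) = (-x) ^ (p-2) * (-x) := by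
    rw [← Real.rpow_add_one (by linarith : -x ≠ 0)]; ring_nf
  rw [this]; ring

lemma phi_strictMono {p : ℝ} (hp : 1 < p) : StrictMono (fun x : ℝ => |x| ^ (p-2) * x) := by
  intro x y hxy
  simp only
  rcases lt_or_ge x 0 with hx | hx
  · rcases lt_or_ge y 0 with hy | hy
    · rw [phi_eq_neg hp hx, phi_eq_neg hp hy, neg_lt_neg_iff]
      exact Real.rpow_lt_rpow (by linarith) (by linarith) (by linarith)
    · rw [phi_eq_neg hp hx, phi_eq_nonneg hp hy]
      have h1 : 0 < (-x) ^ (p-1) := Real.rpow_pos_of_pos (by linarith) _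
      have h2 : 0 ≤ y ^ (p-1) := Real.rpow_nonneg hy _
      linarith
  · rw [phi_eq_nonneg hp hx, phi_eq_nonneg hp (le_trans hx hxy.le)]
    exact Real.rpow_lt_rpow hx hxy (by linarith)

lemma phi_hasDerivAt {p x : ℝ} (hp : 1 < p) (hx : x < 0) :
    HasDerivAt (fun x : ℝ => |x| ^ (p-2) * x) ((p-1) * (-x) ^ (p-2)) x := by
  have h1 : HasDerivAt (fun y : ℝ => -((-y) ^ (p-1))) ((p-1) * (-x) ^ (p-2)) x := by
    have h2 : HasDerivAt (fun y : ℝ => (y : ℝ) ^ (p-1)) ((p-1) * (-x) ^ (p-1-1)) (-x) :=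
      Real.hasDerivAt_rpow_const (Or.inl (by linarith))
    have h3 := (h2.comp x (hasDerivAt_neg x)).neg
    have : (p - 1) * (-x) ^ (p - 1 - 1) * -1 = -((p-1) * (-x) ^ (p-2)) := by ring_nf
    rw [this, neg_neg] at h3
    exact h3
  refine h1.congr_of_eventuallyEq ?_
  filter_upwards [Iio_mem_nhds hx] with y hy
  rw [phi_eq_neg hp hy]

/-- reverse Lipschitz bound for φ on a compact interval of negatives -/
lemma phi_sub_ge {p A B : ℝ} (hp : 1 < p) (hB : B < 0) (hAB : A ≤ B) :
    ∃ c > 0, ∀ x ∈ Icc A B, ∀ y ∈ Icc A B,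
      c * |y - x| ≤ |(|y| ^ (p-2) * y) - (|x| ^ (p-2) * x)| := by
  have hA : A < 0 := lt_of_le_of_lt hAB hB
  set c : ℝ := (p-1) * min ((-A) ^ (p-2)) ((-B) ^ (p-2)) with hc
  have hc0 : 0 < c := by
    apply mul_pos (by linarith)
    exact lt_min (Real.rpow_pos_of_pos (by linarith) _) (Real.rpow_pos_of_pos (by linarith) _)
  have hder : ∀ t ∈ Icc A B, c ≤ (p-1) * (-t) ^ (p-2) := by
    intro t ht
    have ht0 : t < 0 := lt_of_le_of_lt ht.2 hB
    have h1 : min ((-A) ^ (p-2)) ((-B) ^ (p-2)) ≤ (-t) ^ (p-2) := by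
      rcases le_or_gt 2 p with h2 | h2
      · exact le_trans (min_le_right _ _)
          (Real.rpow_le_rpow (by linarith) (by linarith [ht.2]) (by linarith))
      · exact le_trans (min_le_left _ _)
          (Real.rpow_le_rpow_of_nonpos (by linarith) (by linarith [ht.1]) (by linarith))
    calc c ≤ (p-1) * ((-t) ^ (p-2)) := by
            apply mul_le_mul_of_nonneg_left h1 (by linarith)
      _ = _ := by ring
  -- ψ = φ - c • id is monotone on Icc A B
  have hmono : MonotoneOn (fun x : ℝ => |x| ^ (p-2) * x - c * x) (Icc A B) := by
    apply monotoneOn_of_hasDerivWithinAt_nonneg (convex_Icc A B)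
    · intro t ht
      have ht0 : t < 0 := lt_of_le_of_lt ht.2 hB
      exact ((phi_hasDerivAt hp ht0).sub ((hasDerivAt_id t).const_mul c)).continuousAt.continuousWithinAt
    · intro t ht
      have ht' : t ∈ Icc A B := interior_subset ht
      have ht0 : t < 0 := lt_of_le_of_lt ht'.2 hB
      exact (((phi_hasDerivAt hp ht0).sub ((hasDerivAt_id t).const_mul c))).hasDerivWithinAt
    · intro t ht
      rw [interior_Icc] at ht
      have ht' : t ∈ Icc A B := Ioo_subset_Icc_self ht
      have := hder t ht'
      simp only [mul_one]
      linarith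
  have key : ∀ x ∈ Icc A B, ∀ y ∈ Icc A B, x ≤ y →
      c * (y - x) ≤ (|y| ^ (p-2) * y) - (|x| ^ (p-2) * x) := by
    intro x hx y hy hxy
    have := hmono hx hy hxy
    simp only at this
    linarith
  refine ⟨c, hc0, fun x hx y hy => ?_⟩
  rcases le_total x y with h | h
  · rw [abs_of_nonneg (by linarith : (0:ℝ) ≤ y - x),
      abs_of_nonneg (by linarith [key x hx y hy h, mul_nonneg hc0.le (by linarith : (0:ℝ) ≤ y - x)] : (0:ℝ) ≤ |y| ^ (p-2) * y - |x| ^ (p-2) * x)]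
    exact key x hx y hy h
  · rw [abs_sub_comm y x, abs_sub_comm (|y| ^ (p-2) * y) (|x| ^ (p-2) * x),
      abs_of_nonneg (by linarith : (0:ℝ) ≤ x - y),
      abs_of_nonneg (by linarith [key y hy x hx h, mul_nonneg hc0.le (by linarith : (0:ℝ) ≤ x - y)] : (0:ℝ) ≤ |x| ^ (p-2) * x - |y| ^ (p-2) * y)]
    exact key y hy x hx h

/-- Lipschitz bound for x ↦ x^q on [a,1] -/
lemma rpow_lip {q a : ℝ} (hq : 0 < q) (ha : 0 < a) :
    ∃ C ≥ 0, ∀ x ∈ Icc a 1, ∀ y ∈ Icc a 1, |y ^ q - x ^ q| ≤ C * |y - x| := by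
  set C : ℝ := q * (a ^ (q-1) + 1) with hC
  have hC0 : 0 ≤ C := by
    apply mul_nonneg hq.le
    have := Real.rpow_nonneg ha.le (q-1)
    linarith
  refine ⟨C, hC0, fun x hx y hy => ?_⟩
  have := Convex.norm_image_sub_le_of_norm_hasDerivWithin_le
    (f := fun x : ℝ => x ^ q) (f' := fun x : ℝ => q * x ^ (q-1)) (s := Icc a 1) (C := C)
    (fun t ht => (Real.hasDerivAt_rpow_const
      (Or.inl (by linarith [ht.1] : t ≠ 0))).hasDerivWithinAt)
    (fun t ht => ?_) (convex_Icc a 1) hx hy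
  · simpa [Real.norm_eq_abs] using this
  · have ht0 : 0 < t := lt_of_lt_of_le ha ht.1
    have h1 : t ^ (q-1) ≤ a ^ (q-1) + 1 := by
      rcases le_or_gt 1 q with h2 | h2
      · have : t ^ (q-1) ≤ 1 ^ (q-1) := Real.rpow_le_rpow ht0.le ht.2 (by linarith)
        rw [Real.one_rpow] at this
        have := Real.rpow_nonneg ha.le (q-1)
        linarith
      · have : t ^ (q-1) ≤ a ^ (q-1) := Real.rpow_le_rpow_of_nonpos ha ht.1 (by linarith)
        linarith
    have h2 : 0 ≤ t ^ (q-1) := Real.rpow_nonneg ht0.le _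
    rw [Real.norm_eq_abs, abs_of_nonneg (mul_nonneg hq.le h2)]
    exact mul_le_mul_of_nonneg_left h1 hq.le

set_option maxHeartbeats 1000000 in
lemma local_unique (d : ℕ) {p q r₂ σ : ℝ} (hp : 1 < p) (hq : 0 < q)
    (hr₂ : 0 < r₂) (hσ : r₂ < σ)
    {u₁ u₁' u₂ u₂' : ℝ → ℝ}
    (hd1 : ∀ s ∈ Ioi r₂, HasDerivAt u₁ (u₁' s) s)
    (hd2 : ∀ s ∈ Ioi r₂, HasDerivAt u₂ (u₂' s) s)
    (h1c : ContinuousOn u₁' (Ici r₂)) (h2c : ContinuousOn u₂' (Ici r₂))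
    (hode1 : ∀ s ∈ Ioi r₂, HasDerivAt (fun s => s ^ (d-1) * |u₁' s| ^ (p-2) * u₁' s)
        (s ^ (d-1) * u₁ s ^ q) s)
    (hode2 : ∀ s ∈ Ioi r₂, HasDerivAt (fun s => s ^ (d-1) * |u₂' s| ^ (p-2) * u₂' s)
        (s ^ (d-1) * u₂ s ^ q) s)
    (h1b : ∀ s ∈ Icc r₂ σ, u₁ s ∈ Icc (u₁ σ) 1)
    (h2b : ∀ s ∈ Icc r₂ σ, u₂ s ∈ Icc (u₁ σ) 1)
    (ha : 0 < u₁ σ)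
    (hval : u₁ σ = u₂ σ)
    (hκeq : u₁' σ = u₂' σ) (hκ : u₁' σ < 0) :
    ∃ δ > 0, r₂ < σ - δ ∧ ∀ s ∈ Icc (σ - δ) σ, u₁ s = u₂ s := by
  set A := u₁' σ + u₁' σ/2 with hA
  set B := u₁' σ/2 with hB
  have hB0 : B < 0 := by rw [hB]; linarith
  have hAB : A ≤ B := by rw [hA, hB]; linarith
  -- derivative localization
  have hcont1 : ContinuousAt u₁' σ := (h1c σ hσ.le).continuousAt (Ici_mem_nhds hσ)
  have hcont2 : ContinuousAt u₂' σ := (h2c σ hσ.le).continuousAt (Ici_mem_nhds hσ)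
  have hmemIoo : u₁' σ ∈ Ioo A B := by
    constructor
    · rw [hA]; linarith
    · rw [hB]; linarith
  have hev : ∀ᶠ s in 𝓝 σ, u₁' s ∈ Icc A B ∧ u₂' s ∈ Icc A B ∧ r₂ < s := by
    have e1 : ∀ᶠ s in 𝓝 σ, u₁' s ∈ Ioo A B :=
      hcont1.eventually_mem (isOpen_Ioo.mem_nhds hmemIoo)
    have e2 : ∀ᶠ s in 𝓝 σ, u₂' s ∈ Ioo A B := by
      apply hcont2.eventually_mem (isOpen_Ioo.mem_nhds ?_)
      rw [← hκeq]; exact hmemIoo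
    filter_upwards [e1, e2, Ioi_mem_nhds hσ] with s hs1 hs2 hs3
    exact ⟨Ioo_subset_Icc_self hs1, Ioo_subset_Icc_self hs2, hs3⟩
  obtain ⟨ε, hε0, hball⟩ := Metric.eventually_nhds_iff.mp hev
  set δ₁ := min (ε/2) ((σ - r₂)/2) with hδ₁def
  have hδ₁0 : 0 < δ₁ := lt_min (by linarith) (by linarith)
  have hδ₁r : r₂ < σ - δ₁ := by
    have : δ₁ ≤ (σ - r₂)/2 := min_le_right _ _
    linarith
  -- constants
  obtain ⟨Cq, hCq0, hCq⟩ := rpow_lip hq ha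
  obtain ⟨c, hc0, hc⟩ := phi_sub_ge hp hB0 hAB
  set m := (σ - δ₁) ^ (d-1) with hmdef
  have hm0 : 0 < m := pow_pos (by linarith) _
  set C₁ := σ ^ (d-1) * Cq with hC₁def
  have hC₁0 : 0 ≤ C₁ := mul_nonneg (pow_nonneg (by linarith) _) hCq0
  set C₂ := 1 / (c * m) with hC₂def
  have hC₂0 : 0 < C₂ := by positivity
  set K := C₁ * C₂ with hKdef
  have hK0 : 0 ≤ K := mul_nonneg hC₁0 hC₂0.le
  set δ := min δ₁ (min 1 (1/(K+1))) with hδdef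
  have hδ0 : 0 < δ := lt_min hδ₁0 (lt_min one_pos (by positivity))
  have hδδ₁ : δ ≤ δ₁ := min_le_left _ _
  have hδ1 : δ ≤ 1 := (min_le_right _ _).trans (min_le_left _ _)
  have hδK : δ ≤ 1/(K+1) := (min_le_right _ _).trans (min_le_right _ _)
  have hk : K * (δ * δ) < 1 := by
    have h1 : K * δ ≤ K * (1/(K+1)) := mul_le_mul_of_nonneg_left hδK hK0
    have h2 : K * (1/(K+1)) < 1 := by
      rw [mul_one_div, div_lt_one (by linarith)]; linarith
    nlinarith
  set J := Icc (σ - δ) σ with hJdef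
  have hσJ : σ ∈ J := ⟨by linarith, le_refl _⟩
  have hJsub : ∀ s ∈ J, r₂ < s ∧ σ - δ₁ ≤ s ∧ s ≤ σ ∧ u₁' s ∈ Icc A B ∧ u₂' s ∈ Icc A B := by
    intro s hs
    have h1 : σ - δ₁ ≤ s := by linarith [hs.1]
    have h2 : s ≤ σ := hs.2
    have hdist : dist s σ < ε := by
      rw [Real.dist_eq, abs_of_nonpos (by linarith)]
      have : δ₁ ≤ ε/2 := min_le_left _ _
      linarith
    obtain ⟨m1, m2, m3⟩ := hball hdist
    exact ⟨m3, h1, h2, m1, m2⟩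
  have hJr₂σ : ∀ s ∈ J, s ∈ Icc r₂ σ := fun s hs => ⟨(hJsub s hs).1.le, (hJsub s hs).2.2.1⟩
  -- the flux difference function
  set w : ℝ → ℝ := fun s => (fun s => s ^ (d-1) * |u₁' s| ^ (p-2) * u₁' s) s
      - (fun s => s ^ (d-1) * |u₂' s| ^ (p-2) * u₂' s) s with hwdef
  have hwderiv : ∀ t ∈ Ioi r₂, HasDerivAt w (t ^ (d-1) * (u₁ t ^ q - u₂ t ^ q)) t := by
    intro t ht
    have := (hode1 t ht).sub (hode2 t ht)
    rw [mul_sub]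
    exact this
  have hwσ : w σ = 0 := by
    simp only [hwdef]
    rw [hκeq]
    ring
  -- maxima of |g| and |w| on J
  have hJne : J.Nonempty := ⟨σ, hσJ⟩
  have hgcont : ContinuousOn (fun s => |u₁ s - u₂ s|) J := by
    apply ContinuousOn.abs
    apply ContinuousOn.sub
    · exact fun s hs => ((hd1 s (hJsub s hs).1).continuousAt).continuousWithinAt
    · exact fun s hs => ((hd2 s (hJsub s hs).1).continuousAt).continuousWithinAt
  have hwcont : ContinuousOn (fun s => |w s|) J := by
    apply ContinuousOn.abs
    exact fun s hs => ((hwderiv s (hJsub s hs).1).continuousAt).continuousWithinAt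
  obtain ⟨xG, hxGJ, hxG⟩ := isCompact_Icc.exists_isMaxOn hJne hgcont
  obtain ⟨xH, hxHJ, hxH⟩ := isCompact_Icc.exists_isMaxOn hJne hwcont
  set G := |u₁ xG - u₂ xG| with hGdef
  set H := |w xH| with hHdef
  have hG0 : 0 ≤ G := abs_nonneg _
  have hH0 : 0 ≤ H := abs_nonneg _
  have hGmax : ∀ s ∈ J, |u₁ s - u₂ s| ≤ G := fun s hs => isMaxOn_iff.mp hxG s hs
  have hHmax : ∀ s ∈ J, |w s| ≤ H := fun s hs => isMaxOn_iff.mp hxH s hs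
  -- Estimate E1 : |w s| ≤ C₁ * G * δ on J
  have hE1 : ∀ s ∈ J, |w s| ≤ C₁ * G * δ := by
    intro s hs
    have key := Convex.norm_image_sub_le_of_norm_hasDerivWithin_le
      (f := w) (f' := fun t => t ^ (d-1) * (u₁ t ^ q - u₂ t ^ q)) (s := J) (C := C₁ * G)
      (fun t ht => ((hwderiv t (hJsub t ht).1).hasDerivWithinAt))
      (fun t ht => ?_) (convex_Icc _ _) hσJ hs
    · rw [hwσ, sub_zero] at key
      calc |w s| = ‖w s‖ := rfl
        _ ≤ C₁ * G * ‖s - σ‖ := key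
        _ ≤ C₁ * G * δ := by
            apply mul_le_mul_of_nonneg_left _ (mul_nonneg hC₁0 hG0)
            rw [Real.norm_eq_abs, abs_of_nonpos (by linarith [hs.2])]
            linarith [hs.1]
    · -- pointwise derivative bound
      have ht1 : u₁ t ∈ Icc (u₁ σ) 1 := h1b t (hJr₂σ t ht)
      have ht2 : u₂ t ∈ Icc (u₁ σ) 1 := h2b t (hJr₂σ t ht)
      have hq1 : |u₁ t ^ q - u₂ t ^ q| ≤ Cq * |u₁ t - u₂ t| := hCq _ ht2 _ ht1
      have hq2 : |u₁ t - u₂ t| ≤ G := hGmax t ht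
      have htpos : (0:ℝ) ≤ t := by linarith [(hJsub t ht).1]
      have htle : t ^ (d-1) ≤ σ ^ (d-1) := pow_le_pow_left₀ htpos (hJsub t ht).2.2.1 _
      have htnn : (0:ℝ) ≤ t ^ (d-1) := pow_nonneg htpos _
      rw [Real.norm_eq_abs, abs_mul, abs_of_nonneg htnn]
      calc t ^ (d-1) * |u₁ t ^ q - u₂ t ^ q| ≤ σ ^ (d-1) * (Cq * G) := by
            apply mul_le_mul htle _ (abs_nonneg _) (pow_nonneg (by linarith) _)
            calc |u₁ t ^ q - u₂ t ^ q| ≤ Cq * |u₁ t - u₂ t| := hq1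
              _ ≤ Cq * G := mul_le_mul_of_nonneg_left hq2 hCq0
        _ = C₁ * G := by rw [hC₁def]; ring
  -- Estimate E2 : |u₁ s - u₂ s| ≤ C₂ * H * δ on J
  have hE2 : ∀ s ∈ J, |u₁ s - u₂ s| ≤ C₂ * H * δ := by
    intro s hs
    have key := Convex.norm_image_sub_le_of_norm_hasDerivWithin_le
      (f := fun s => u₁ s - u₂ s) (f' := fun t => u₁' t - u₂' t) (s := J) (C := C₂ * H)
      (fun t ht => (((hd1 t (hJsub t ht).1).sub (hd2 t (hJsub t ht).1)).hasDerivWithinAt))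
      (fun t ht => ?_) (convex_Icc _ _) hσJ hs
    · have key' : ‖u₁ s - u₂ s‖ ≤ C₂ * H * ‖s - σ‖ := by
        simpa [hval] using key
      calc |u₁ s - u₂ s| = ‖u₁ s - u₂ s‖ := rfl
        _ ≤ C₂ * H * ‖s - σ‖ := key'
        _ ≤ C₂ * H * δ := by
            apply mul_le_mul_of_nonneg_left _ (mul_nonneg hC₂0.le hH0)
            rw [Real.norm_eq_abs, abs_of_nonpos (by linarith [hs.2])]
            linarith [hs.1]
    · -- pointwise derivative bound via reverse Lipschitz of φ
      obtain ⟨htr₂, htδ₁, htσ, htm1, htm2⟩ := hJsub t ht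
      have hrev := hc _ htm2 _ htm1
      have hwt : w t = t ^ (d-1) * ((|u₁' t| ^ (p-2) * u₁' t) - (|u₂' t| ^ (p-2) * u₂' t)) := by
        simp only [hwdef]; ring
      have htm : m ≤ t ^ (d-1) := pow_le_pow_left₀ (by linarith) htδ₁ _
      have habs : m * |((|u₁' t| ^ (p-2) * u₁' t) - (|u₂' t| ^ (p-2) * u₂' t))| ≤ H := by
        have h1 : |w t| = t ^ (d-1) * |((|u₁' t| ^ (p-2) * u₁' t) - (|u₂' t| ^ (p-2) * u₂' t))| := by
          rw [hwt, abs_mul, abs_of_nonneg (pow_nonneg (by linarith : (0:ℝ) ≤ t) _)]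
        calc m * |((|u₁' t| ^ (p-2) * u₁' t) - (|u₂' t| ^ (p-2) * u₂' t))| ≤
            t ^ (d-1) * |((|u₁' t| ^ (p-2) * u₁' t) - (|u₂' t| ^ (p-2) * u₂' t))| :=
              mul_le_mul_of_nonneg_right htm (abs_nonneg _)
          _ = |w t| := h1.symm
          _ ≤ H := hHmax t ht
      rw [Real.norm_eq_abs]
      rw [hC₂def, div_mul_eq_mul_div, one_mul, le_div_iff₀ (by positivity)]
      calc |u₁' t - u₂' t| * (c * m) = m * (c * |u₁' t - u₂' t|) := by ring
        _ ≤ m * |(|u₁' t| ^ (p-2) * u₁' t) - (|u₂' t| ^ (p-2) * u₂' t)| :=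
            mul_le_mul_of_nonneg_left hrev hm0.le
        _ ≤ H := habs
  -- combine
  have hGH : G ≤ C₂ * H * δ := hE2 xG hxGJ
  have hHG : H ≤ C₁ * G * δ := hE1 xH hxHJ
  have hGzero : G ≤ 0 := by
    have h1 : C₂ * H * δ ≤ C₂ * (C₁ * G * δ) * δ :=
      mul_le_mul_of_nonneg_right (mul_le_mul_of_nonneg_left hHG hC₂0.le) hδ0.le
    have h2 : C₂ * (C₁ * G * δ) * δ = (C₁ * C₂ * (δ * δ)) * G := by ring
    have hk' : C₁ * C₂ * (δ * δ) < 1 := by rw [hKdef] at hk; exact hk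
    nlinarith [mul_nonneg (sub_nonneg.mpr hk'.le) hG0]
  refine ⟨δ, hδ0, by linarith, fun s hs => ?_⟩
  have := hGmax s hs
  have : |u₁ s - u₂ s| ≤ 0 := le_trans this hGzero
  have habs0 : |u₁ s - u₂ s| = 0 := le_antisymm this (abs_nonneg _)
  have := abs_eq_zero.mp habs0
  linarith

set_option maxHeartbeats 1000000 in
/-- Comparison principle for the `C¹` nonincreasing solutions of the
exterior Dirichlet problems `Δ_p u = u^q` on `(rᵢ,∞)`, `u(rᵢ)=1`, `u(∞)=0`:
if `r₁ < r₂` then `u₂ > u₁` wherever `u₂ > 0` (on `[r₂,∞)`). -/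
theorem stmt4 (d : ℕ) (hd : 1 ≤ d) (p q r₁ r₂ : ℝ) (hp : (d : ℝ) < p) (hq : 0 < q)
    (hr₁ : 0 < r₁) (hr : r₁ < r₂)
    (u₁ u₁' u₂ u₂' : ℝ → ℝ)
    (h1deriv : ∀ r ∈ Ici r₁, HasDerivWithinAt u₁ (u₁' r) (Ici r₁) r)
    (h1c : ContinuousOn u₁' (Ici r₁))
    (h1mono : AntitoneOn u₁ (Ici r₁))
    (h1nonneg : ∀ r ∈ Ici r₁, 0 ≤ u₁ r)
    (h1val : u₁ r₁ = 1)
    (h1lim : Tendsto u₁ atTop (𝓝 0))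
    (h1neg : ∀ r ∈ Ioi r₁, 0 < u₁ r → u₁' r < 0)
    (h1ode : ∀ r ∈ Ioi r₁,
      HasDerivAt (fun s => s ^ (d - 1) * |u₁' s| ^ (p - 2) * u₁' s)
        (r ^ (d - 1) * u₁ r ^ q) r)
    (h2deriv : ∀ r ∈ Ici r₂, HasDerivWithinAt u₂ (u₂' r) (Ici r₂) r)
    (h2c : ContinuousOn u₂' (Ici r₂))
    (h2mono : AntitoneOn u₂ (Ici r₂))
    (h2nonneg : ∀ r ∈ Ici r₂, 0 ≤ u₂ r)
    (h2val : u₂ r₂ = 1)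
    (h2lim : Tendsto u₂ atTop (𝓝 0))
    (h2neg : ∀ r ∈ Ioi r₂, 0 < u₂ r → u₂' r < 0)
    (h2ode : ∀ r ∈ Ioi r₂,
      HasDerivAt (fun s => s ^ (d - 1) * |u₂' s| ^ (p - 2) * u₂' s)
        (r ^ (d - 1) * u₂ r ^ q) r) :
    ∀ r, r₂ ≤ r → 0 < u₂ r → u₁ r < u₂ r := by
  have hp1 : 1 < p := lt_of_le_of_lt (by exact_mod_cast hd) hp
  have hr₂0 : 0 < r₂ := hr₁.trans hr
  have hd1 : ∀ s ∈ Ioi r₁, HasDerivAt u₁ (u₁' s) s := fun s hs =>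
    (h1deriv s (mem_Ici.mpr (le_of_lt hs))).hasDerivAt (Ici_mem_nhds hs)
  have hd2 : ∀ s ∈ Ioi r₂, HasDerivAt u₂ (u₂' s) s := fun s hs =>
    (h2deriv s (mem_Ici.mpr (le_of_lt hs))).hasDerivAt (Ici_mem_nhds hs)
  have u₁cont : ContinuousOn u₁ (Ici r₁) := fun s hs => (h1deriv s hs).continuousWithinAt
  have u₂cont : ContinuousOn u₂ (Ici r₂) := fun s hs => (h2deriv s hs).continuousWithinAt
  have u₁le1 : ∀ s ∈ Ici r₁, u₁ s ≤ 1 := fun s hs => by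
    rw [← h1val]; exact h1mono self_mem_Ici hs hs
  have u₂le1 : ∀ s ∈ Ici r₂, u₂ s ≤ 1 := fun s hs => by
    rw [← h2val]; exact h2mono self_mem_Ici hs hs
  have φmono := phi_strictMono hp1
  -- step 1 : u₁ r₂ < 1
  have step1 : u₁ r₂ < 1 := by
    rcases lt_or_eq_of_le (u₁le1 r₂ (le_of_lt hr)) with h | h
    · exact h
    · exfalso
      set t := (r₁ + r₂)/2 with htdef
      have ht1 : r₁ < t := by rw [htdef]; linarith
      have ht2 : t < r₂ := by rw [htdef]; linarith
      have hconst : ∀ s ∈ Icc r₁ r₂, u₁ s = 1 := by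
        intro s hs
        have l1 : u₁ r₂ ≤ u₁ s := h1mono hs.1 (le_of_lt hr) hs.2
        have l2 : u₁ s ≤ u₁ r₁ := h1mono self_mem_Ici hs.1 hs.1
        rw [h1val] at l2
        linarith [h ▸ l1]
      have hderiv0 : HasDerivAt u₁ 0 t := by
        refine (hasDerivAt_const t (1:ℝ)).congr_of_eventuallyEq ?_
        filter_upwards [Ioo_mem_nhds ht1 ht2] with s hs
        exact hconst s ⟨hs.1.le, hs.2.le⟩
      have heq := (hd1 t ht1).unique hderiv0
      have hneg := h1neg t ht1 (by rw [hconst t ⟨ht1.le, ht2.le⟩]; norm_num)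
      rw [heq] at hneg
      exact lt_irrefl 0 hneg
  have gr₂neg : u₁ r₂ - u₂ r₂ < 0 := by rw [h2val]; linarith
  -- difference of fluxes
  set w : ℝ → ℝ := fun s => (fun s => s ^ (d-1) * |u₁' s| ^ (p-2) * u₁' s) s
      - (fun s => s ^ (d-1) * |u₂' s| ^ (p-2) * u₂' s) s with hwdef
  have wderiv : ∀ t ∈ Ioi r₂, HasDerivAt w (t ^ (d-1) * (u₁ t ^ q - u₂ t ^ q)) t := by
    intro t ht
    have := (h1ode t (hr.trans ht)).sub (h2ode t ht)
    rw [mul_sub]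
    exact this
  have gderiv : ∀ t ∈ Ioi r₂, HasDerivAt (fun s => u₁ s - u₂ s) (u₁' t - u₂' t) t :=
    fun t ht => (hd1 t (hr.trans ht)).sub (hd2 t ht)
  -- from positivity of w to comparison of derivatives
  have hcmp : ∀ t ∈ Ioi r₂, 0 < w t → u₂' t < u₁' t := by
    intro t ht hw
    have htpos : 0 < t := hr₂0.trans ht
    have hwt : w t = t ^ (d-1) * ((|u₁' t| ^ (p-2) * u₁' t) - (|u₂' t| ^ (p-2) * u₂' t)) := by
      simp only [hwdef]; ring
    have h1 : 0 < t ^ (d-1) := pow_pos htpos _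
    have hsub : 0 < (|u₁' t| ^ (p-2) * u₁' t) - (|u₂' t| ^ (p-2) * u₂' t) := by
      rw [hwt] at hw
      nlinarith
    exact φmono.lt_iff_lt.mp (sub_pos.mp hsub)
  -- Part A : u₁ ≤ u₂ on [r₂, ∞)
  have hle : ∀ s, r₂ ≤ s → u₁ s - u₂ s ≤ 0 := by
    by_contra hcon
    push_neg at hcon
    obtain ⟨s₀, hs₀r, hs₀pos⟩ := hcon
    have hev : ∀ᶠ t in atTop, u₁ t < u₁ s₀ - u₂ s₀ := h1lim.eventually (gt_mem_nhds hs₀pos)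
    obtain ⟨R₀, hR₀⟩ := eventually_atTop.mp hev
    set R := max R₀ s₀ with hRdef
    have hRr₂ : r₂ ≤ R := le_trans hs₀r (le_max_right _ _)
    have hfar : ∀ t, R < t → u₁ t - u₂ t < u₁ s₀ - u₂ s₀ := by
      intro t ht
      have h1 : u₁ t < u₁ s₀ - u₂ s₀ := hR₀ t (le_trans (le_max_left _ _) ht.le)
      have h2 : 0 ≤ u₂ t := h2nonneg t (le_trans hRr₂ ht.le)
      linarith
    have hgcont : ContinuousOn (fun s => u₁ s - u₂ s) (Icc r₂ R) :=
      ((u₁cont.mono (fun x hx => le_trans hr.le hx.1)).sub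
        (u₂cont.mono (fun x hx => hx.1)))
    obtain ⟨ρ, hρmem, hρmax⟩ := isCompact_Icc.exists_isMaxOn
      ⟨r₂, left_mem_Icc.mpr hRr₂⟩ hgcont
    have hρs₀ : u₁ s₀ - u₂ s₀ ≤ u₁ ρ - u₂ ρ :=
      isMaxOn_iff.mp hρmax s₀ ⟨hs₀r, le_max_right _ _⟩
    have hglobal : ∀ t, r₂ ≤ t → u₁ t - u₂ t ≤ u₁ ρ - u₂ ρ := by
      intro t ht
      rcases le_or_gt t R with h | h
      · exact isMaxOn_iff.mp hρmax t ⟨ht, h⟩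
      · linarith [hfar t h]
    have hgρpos : 0 < u₁ ρ - u₂ ρ := lt_of_lt_of_le hs₀pos hρs₀
    have hρr₂ : r₂ < ρ := by
      rcases lt_or_eq_of_le hρmem.1 with h | h
      · exact h
      · exfalso; rw [← h] at hgρpos; linarith
    have hloc : IsLocalMax (fun s => u₁ s - u₂ s) ρ := by
      filter_upwards [Ioi_mem_nhds hρr₂] with t ht
      exact hglobal t (le_of_lt ht)
    have hder0 : u₁' ρ - u₂' ρ = 0 := hloc.hasDerivAt_eq_zero (gderiv ρ hρr₂)
    have hwρ : w ρ = 0 := by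
      simp only [hwdef]
      rw [(by linarith : u₁' ρ = u₂' ρ)]
      ring
    have hcontρ : ContinuousAt (fun s => u₁ s - u₂ s) ρ := (gderiv ρ hρr₂).continuousAt
    have hevp : ∀ᶠ t in 𝓝 ρ, 0 < u₁ t - u₂ t ∧ r₂ < t := by
      have e1 := hcontρ.eventually_mem (isOpen_Ioi.mem_nhds (show u₁ ρ - u₂ ρ ∈ Ioi 0 from hgρpos))
      filter_upwards [e1, Ioi_mem_nhds hρr₂] with t ht1 ht2
      exact ⟨ht1, ht2⟩
    obtain ⟨ε, hε0, hball⟩ := Metric.eventually_nhds_iff.mp hevp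
    set δ := ε/2 with hδdef
    have hδ0 : 0 < δ := by rw [hδdef]; linarith
    have hJ : ∀ t ∈ Icc ρ (ρ + δ), 0 < u₁ t - u₂ t ∧ r₂ < t := by
      intro t ht
      apply hball
      rw [Real.dist_eq, abs_of_nonneg (by linarith [ht.1])]
      have h2 := ht.2
      rw [hδdef] at h2
      linarith
    have hwmono : StrictMonoOn w (Icc ρ (ρ + δ)) := by
      apply strictMonoOn_of_hasDerivWithinAt_pos (convex_Icc _ _)
      · intro t ht
        exact (wderiv t (hJ t ht).2).continuousAt.continuousWithinAt
      · intro t ht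
        rw [interior_Icc] at ht
        exact (wderiv t (hJ t (Ioo_subset_Icc_self ht)).2).hasDerivWithinAt
      · intro t ht
        rw [interior_Icc] at ht
        obtain ⟨htg, htr⟩ := hJ t (Ioo_subset_Icc_self ht)
        have htpos : 0 < t := hr₂0.trans htr
        have hq2 : 0 ≤ u₂ t := h2nonneg t htr.le
        have : u₂ t ^ q < u₁ t ^ q := Real.rpow_lt_rpow hq2 (by linarith) hq
        exact mul_pos (pow_pos htpos _) (by linarith)
    have hgmono : StrictMonoOn (fun s => u₁ s - u₂ s) (Icc ρ (ρ + δ)) := by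
      apply strictMonoOn_of_hasDerivWithinAt_pos (convex_Icc _ _)
        (fun t ht => (gderiv t (hJ t ht).2).continuousAt.continuousWithinAt)
        (fun t ht => by
          rw [interior_Icc] at ht
          exact (gderiv t (hJ t (Ioo_subset_Icc_self ht)).2).hasDerivWithinAt)
      intro t ht
      rw [interior_Icc] at ht
      have htmem : t ∈ Icc ρ (ρ + δ) := Ioo_subset_Icc_self ht
      have hwt : 0 < w t := by
        have := hwmono (left_mem_Icc.mpr (by linarith)) htmem ht.1
        rw [hwρ] at this
        exact this
      have := hcmp t (hJ t htmem).2 hwt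
      linarith
    have hfin := hgmono (left_mem_Icc.mpr (by linarith))
      (right_mem_Icc.mpr (by linarith)) (by linarith)
    have := hglobal (ρ + δ) (by linarith)
    simp only at hfin
    linarith
  -- conclusion setup
  intro r hrr hpos
  by_contra hcon
  push_neg at hcon
  have hval0 : u₁ r = u₂ r := le_antisymm (by linarith [hle r hrr]) hcon
  have hr₂r : r₂ < r := by
    rcases lt_or_eq_of_le hrr with h | h
    · exact h
    · exfalso
      rw [← h] at hval0
      rw [h2val] at hval0
      linarith
  -- touching points have equal derivatives
  have touch : ∀ τ, r₂ < τ → u₁ τ = u₂ τ → u₁' τ = u₂' τ := by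
    intro τ hτ hτval
    have hloc : IsLocalMax (fun s => u₁ s - u₂ s) τ := by
      filter_upwards [Ioi_mem_nhds hτ] with t ht
      have h1 := hle t (le_of_lt ht)
      show u₁ t - u₂ t ≤ u₁ τ - u₂ τ
      rw [hτval, sub_self]
      exact h1
    have := hloc.hasDerivAt_eq_zero (gderiv τ hτ)
    linarith
  -- the touching set and its infimum
  set S := {t : ℝ | t ∈ Icc r₂ r ∧ ∀ s ∈ Icc t r, u₁ s = u₂ s} with hSdef
  have hrS : r ∈ S := by
    refine ⟨⟨hr₂r.le, le_refl r⟩, fun s hs => ?_⟩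
    have : s = r := le_antisymm hs.2 hs.1
    rw [this]; exact hval0
  have hSne : S.Nonempty := ⟨r, hrS⟩
  have hSbdd : BddBelow S := ⟨r₂, fun t ht => ht.1.1⟩
  set T := sInf S with hTdef
  have hTmem1 : r₂ ≤ T := le_csInf hSne (fun t ht => ht.1.1)
  have hTler : T ≤ r := csInf_le hSbdd hrS
  have hopen : ∀ s, T < s → s ≤ r → u₁ s = u₂ s := by
    intro s hTs hsr
    obtain ⟨t', ht'S, ht'lt⟩ := exists_lt_of_csInf_lt hSne hTs
    exact ht'S.2 s ⟨ht'lt.le, hsr⟩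
  have hvalT : u₁ T = u₂ T := by
    rcases eq_or_lt_of_le hTler with hTr | hTr
    · rw [hTr]; exact hval0
    · have h1 : Tendsto (fun s => u₁ s - u₂ s) (𝓝[>] T) (𝓝 (u₁ T - u₂ T)) := by
        apply ContinuousWithinAt.tendsto
        apply ContinuousWithinAt.mono _ (show Ioi T ⊆ Ici r₂ from fun x hx => le_trans hTmem1 (le_of_lt hx))
        exact ((u₁cont.mono (fun x hx => le_trans hr.le hx)).sub u₂cont).continuousWithinAt hTmem1
      have hev0 : ∀ᶠ s in 𝓝[>] T, u₁ s - u₂ s = 0 := by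
        have h3 : ∀ᶠ s in 𝓝[>] T, s < r :=
          eventually_nhdsWithin_of_eventually_nhds
            (eventually_iff_exists_mem.mpr ⟨Iio r, Iio_mem_nhds hTr, fun x hx => hx⟩)
        filter_upwards [h3, self_mem_nhdsWithin] with s hsr hsT
        rw [sub_eq_zero]
        exact hopen s hsT hsr.le
      have h2 : Tendsto (fun s => u₁ s - u₂ s) (𝓝[>] T) (𝓝 0) :=
        Tendsto.congr' (hev0.mono fun s hs => hs.symm) tendsto_const_nhds
      have := tendsto_nhds_unique h1 h2
      linarith
  have hTr₂ : r₂ < T := by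
    rcases eq_or_lt_of_le hTmem1 with h | h
    · exfalso
      rw [← h] at hvalT
      rw [h2val] at hvalT
      linarith
    · exact h
  have hu₂T : 0 < u₂ T := lt_of_lt_of_le hpos (h2mono hTmem1 hrr hTler)
  have hu₁T : 0 < u₁ T := by rw [hvalT]; exact hu₂T
  have hκeq : u₁' T = u₂' T := touch T hTr₂ hvalT
  have hκneg : u₁' T < 0 := h1neg T (hr.trans hTr₂) hu₁T
  have h1b : ∀ s ∈ Icc r₂ T, u₁ s ∈ Icc (u₁ T) 1 := by
    intro s hs
    have hs1 : s ∈ Ici r₁ := le_trans hr.le hs.1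
    constructor
    · exact h1mono hs1 (le_trans hr.le hTmem1) hs.2
    · exact u₁le1 s hs1
  have h2b : ∀ s ∈ Icc r₂ T, u₂ s ∈ Icc (u₁ T) 1 := by
    intro s hs
    constructor
    · rw [hvalT]; exact h2mono hs.1 hTmem1 hs.2
    · exact u₂le1 s hs.1
  obtain ⟨δ, hδ0, hδr, hδeq⟩ := local_unique d hp1 hq hr₂0 hTr₂
    (fun s hs => hd1 s (hr.trans hs)) hd2
    (h1c.mono (fun x hx => le_trans hr.le hx)) h2c
    (fun s hs => h1ode s (hr.trans hs)) h2ode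
    h1b h2b hu₁T hvalT hκeq hκneg
  have hTS : T - δ ∈ S := by
    refine ⟨⟨by linarith, by linarith⟩, fun s hs => ?_⟩
    rcases le_total s T with h | h
    · exact hδeq s ⟨hs.1, h⟩
    · rcases eq_or_lt_of_le h with h' | h'
      · rw [← h']; exact hvalT
      · exact hopen s h' hs.2
  have := csInf_le hSbdd hTS
  linarith
end

section
/- Let q ≥ 0 and let d be an integer and p a real with p > d > 1. Suppose u, v : (0,∞) → ℝ are continuously differentiable, nonincreasing, nonnegative, satisfy lim_{r→0⁺} u(r) = lim_{r→0⁺} v(r) = 1 and lim_{r→∞} u(r) = lim_{r→∞} v(r) = 0, have strictly negative derivative at every point where the function is positive, and the functions r ↦ r^{d−1}|u'(r)|^{p−2}u'(r) and r ↦ r^{d−1}|v'(r)|^{p−2}v'(r) are differentiable on (0,∞) with derivatives r^{d−1} u(r)^q and r^{d−1} v(r)^q respectively. Then u(r) = v(r) for all r > 0. -/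
open Filter Set Topology MeasureTheory

private lemma fmono_aux (p : ℝ) (hp2 : 0 < p - 2) :
    ∀ a b : ℝ, 0 ≤ a → a < b → |a| ^ (p - 2) * a < |b| ^ (p - 2) * b := by
  intro a b ha hab
  have hb : 0 < b := lt_of_le_of_lt ha hab
  rw [abs_of_nonneg ha, abs_of_pos hb]
  rcases eq_or_lt_of_le ha with h | h
  · rw [← h]
    simp only [mul_zero]
    positivity
  · exact mul_lt_mul' (Real.rpow_le_rpow h.le hab.le hp2.le) hab h.le
      (Real.rpow_pos_of_pos hb _)

private lemma fmono (p : ℝ) (hp2' : 2 < p) :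
    StrictMono (fun t : ℝ => |t| ^ (p - 2) * t) := by
  have hp2 : 0 < p - 2 := by linarith
  intro a b hab
  simp only
  rcases le_or_gt 0 a with ha | ha
  · exact fmono_aux p hp2 a b ha hab
  · rcases le_or_gt 0 b with hb | hb
    · have h1 : |a| ^ (p - 2) * a < 0 :=
        mul_neg_of_pos_of_neg (Real.rpow_pos_of_pos (abs_pos.mpr ha.ne) _) ha
      have h2 : 0 ≤ |b| ^ (p - 2) * b :=
        mul_nonneg (Real.rpow_nonneg (abs_nonneg b) _) hb
      linarith
    · have h3 := fmono_aux p hp2 (-b) (-a) (by linarith) (by linarith)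
      rw [abs_neg, abs_neg, mul_neg, mul_neg] at h3
      linarith

private lemma key6 (d : ℕ) (p q : ℝ) (hq : 0 ≤ q) (hd : 1 < d) (hp : (d : ℝ) < p)
    (u u' v v' : ℝ → ℝ)
    (huderiv : ∀ r ∈ Ioi (0:ℝ), HasDerivAt u (u' r) r)
    (hu0 : Tendsto u (𝓝[>] 0) (𝓝 1))
    (huinf : Tendsto u atTop (𝓝 0))
    (huode : ∀ r ∈ Ioi (0:ℝ),
      HasDerivAt (fun s => s ^ (d - 1) * |u' s| ^ (p - 2) * u' s)
        (r ^ (d - 1) * u r ^ q) r)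
    (hvderiv : ∀ r ∈ Ioi (0:ℝ), HasDerivAt v (v' r) r)
    (hvnn : ∀ r ∈ Ioi (0:ℝ), 0 ≤ v r)
    (hv0 : Tendsto v (𝓝[>] 0) (𝓝 1))
    (hvinf : Tendsto v atTop (𝓝 0))
    (hvode : ∀ r ∈ Ioi (0:ℝ),
      HasDerivAt (fun s => s ^ (d - 1) * |v' s| ^ (p - 2) * v' s)
        (r ^ (d - 1) * v r ^ q) r) :
    ∀ r ∈ Ioi (0:ℝ), u r ≤ v r := by
  have hp2 : 2 < p := by
    have : (2:ℝ) ≤ (d:ℝ) := by exact_mod_cast hd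
    linarith
  by_contra hcon
  push_neg at hcon
  obtain ⟨r0, hr0, hur0⟩ := hcon
  have hr0p : (0:ℝ) < r0 := hr0
  set h : ℝ → ℝ := fun r => u r - v r with hh
  have hM : 0 < h r0 := sub_pos.mpr hur0
  have hcontat : ∀ x ∈ Ioi (0:ℝ), ContinuousAt h x := fun x hx =>
    ((huderiv x hx).continuousAt).sub ((hvderiv x hx).continuousAt)
  have htend0 : Tendsto h (𝓝[>] (0:ℝ)) (𝓝 0) := by
    have := hu0.sub hv0
    simpa using this
  have htendinf : Tendsto h atTop (𝓝 0) := by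
    simpa using huinf.sub hvinf
  -- small near 0
  obtain ⟨δ, hδ, hsub⟩ := mem_nhdsGT_iff_exists_Ioo_subset.mp
    (htend0.eventually_lt_const hM)
  -- small near ∞
  obtain ⟨T, hT⟩ := eventually_atTop.mp (htendinf.eventually_lt_const hM)
  set a : ℝ := min δ r0 / 2 with ha
  have hap : 0 < a := by
    have : 0 < min δ r0 := lt_min hδ hr0p
    positivity
  have haδ : a < δ := by
    have h1 : min δ r0 ≤ δ := min_le_left _ _
    have : 0 < min δ r0 := lt_min hδ hr0p
    linarith
  have har0 : a < r0 := by
    have h1 : min δ r0 ≤ r0 := min_le_right _ _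
    have : 0 < min δ r0 := lt_min hδ hr0p
    linarith
  set b : ℝ := max T (r0 + 1) with hb
  have hr0b : r0 < b := lt_of_lt_of_le (by linarith) (le_max_right _ _)
  have hab : a < b := lt_trans har0 hr0b
  have hIccpos : Icc a b ⊆ Ioi (0:ℝ) := fun x hx => lt_of_lt_of_le hap hx.1
  have hcontOn : ContinuousOn h (Icc a b) := fun x hx =>
    (hcontat x (hIccpos hx)).continuousWithinAt
  obtain ⟨m, hmIcc, hmax⟩ := isCompact_Icc.exists_isMaxOn (nonempty_Icc.mpr hab.le) hcontOn
  have hr0mem : r0 ∈ Icc a b := ⟨har0.le, hr0b.le⟩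
  have hmr0 : h r0 ≤ h m := hmax hr0mem
  have hmpos : 0 < h m := lt_of_lt_of_le hM hmr0
  have hm0 : 0 < m := lt_of_lt_of_le hap hmIcc.1
  have hma : a < m := by
    rcases eq_or_lt_of_le hmIcc.1 with he | hl
    · exfalso
      have haIoo : a ∈ Ioo (0:ℝ) δ := ⟨hap, haδ⟩
      have : h a < h r0 := hsub haIoo
      rw [he] at this
      linarith
    · exact hl
  have hmb : m < b := by
    rcases eq_or_lt_of_le hmIcc.2 with he | hl
    · exfalso
      have : h b < h r0 := hT b (le_max_left _ _)
      rw [← he] at this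
      linarith
    · exact hl
  have hloc : IsLocalMax h m := hmax.isLocalMax (Icc_mem_nhds hma hmb)
  have hderivm : HasDerivAt h (u' m - v' m) m := (huderiv m hm0).sub (hvderiv m hm0)
  have hm0' : u' m = v' m := by
    have := hloc.hasDerivAt_eq_zero hderivm
    linarith
  -- key monotone-comparison step
  have step : ∀ s, 0 < s → s < m → (∀ x ∈ Icc s m, 0 < h x) → h m ≤ h s := by
    intro s hs hsm hpos
    set w : ℝ → ℝ := fun x =>
      x ^ (d - 1) * |u' x| ^ (p - 2) * u' x - x ^ (d - 1) * |v' x| ^ (p - 2) * v' x with hw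
    have hIccpos' : Icc s m ⊆ Ioi (0:ℝ) := fun x hx => lt_of_lt_of_le hs hx.1
    have hwderiv : ∀ x ∈ Ioi (0:ℝ),
        HasDerivAt w (x ^ (d - 1) * u x ^ q - x ^ (d - 1) * v x ^ q) x :=
      fun x hx => (huode x hx).sub (hvode x hx)
    have hwmono : MonotoneOn w (Icc s m) := by
      apply monotoneOn_of_deriv_nonneg (convex_Icc s m)
      · exact fun x hx => ((hwderiv x (hIccpos' hx)).continuousAt).continuousWithinAt
      · intro x hx
        rw [interior_Icc] at hx
        have hx0 : (0:ℝ) < x := lt_trans hs hx.1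
        exact ((hwderiv x hx0).differentiableAt).differentiableWithinAt
      · intro x hx
        rw [interior_Icc] at hx
        have hx0 : (0:ℝ) < x := lt_trans hs hx.1
        rw [(hwderiv x hx0).deriv]
        have hxm : x ∈ Icc s m := ⟨hx.1.le, hx.2.le⟩
        have h1 : 0 < h x := hpos x hxm
        have h1' : v x ≤ u x := by
          have : 0 < u x - v x := h1
          linarith
        have h2 : v x ^ q ≤ u x ^ q := Real.rpow_le_rpow (hvnn x hx0) h1' hq
        have h3 : (0:ℝ) ≤ x ^ (d - 1) := le_of_lt (pow_pos hx0 _)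
        have := mul_le_mul_of_nonneg_left h2 h3
        linarith
    have hmm : m ∈ Icc s m := right_mem_Icc.mpr hsm.le
    have hwm : w m = 0 := by
      simp only [hw, hm0']
      ring
    have hwle : ∀ x ∈ Icc s m, w x ≤ 0 := fun x hx => by
      have := hwmono hx hmm hx.2
      linarith [hwm ▸ this]
    have hule : ∀ x ∈ Icc s m, u' x ≤ v' x := by
      intro x hx
      have hx0 : (0:ℝ) < x := lt_of_lt_of_le hs hx.1
      have hxd : (0:ℝ) < x ^ (d - 1) := pow_pos hx0 _
      have hwx := hwle x hx
      simp only [hw] at hwx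
      have h1 : x ^ (d - 1) * (|u' x| ^ (p - 2) * u' x)
          ≤ x ^ (d - 1) * (|v' x| ^ (p - 2) * v' x) := by
        rw [← mul_assoc, ← mul_assoc]
        linarith
      have h2 : |u' x| ^ (p - 2) * u' x ≤ |v' x| ^ (p - 2) * v' x :=
        le_of_mul_le_mul_left h1 hxd
      exact (fmono p hp2).le_iff_le.mp h2
    have hanti : AntitoneOn h (Icc s m) := by
      apply antitoneOn_of_deriv_nonpos (convex_Icc s m)
      · exact fun x hx => (hcontat x (hIccpos' hx)).continuousWithinAt
      · intro x hx
        rw [interior_Icc] at hx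
        have hx0 : (0:ℝ) < x := lt_trans hs hx.1
        exact ((huderiv x hx0).sub (hvderiv x hx0)).differentiableAt.differentiableWithinAt
      · intro x hx
        rw [interior_Icc] at hx
        have hx0 : (0:ℝ) < x := lt_trans hs hx.1
        have hdx : HasDerivAt h (u' x - v' x) x := (huderiv x hx0).sub (hvderiv x hx0)
        rw [hdx.deriv]
        have := hule x ⟨hx.1.le, hx.2.le⟩
        linarith
    exact hanti (left_mem_Icc.mpr hsm.le) hmm hsm.le
  -- define the last point where h ≤ 0 before m
  set S : Set ℝ := {x ∈ Ioc (0:ℝ) m | h x ≤ 0} with hS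
  rcases S.eq_empty_or_nonempty with hSe | hSne
  · -- h > 0 on (0, m]
    have hposall : ∀ x ∈ Ioc (0:ℝ) m, 0 < h x := by
      intro x hx
      by_contra hcx
      push_neg at hcx
      have : x ∈ S := ⟨hx, hcx⟩
      rw [hSe] at this
      exact absurd this (notMem_empty x)
    have hev : ∀ᶠ s in 𝓝[>] (0:ℝ), h m ≤ h s := by
      filter_upwards [Ioo_mem_nhdsGT_of_mem (⟨le_refl (0:ℝ), hm0⟩ : (0:ℝ) ∈ Ico 0 m)]
        with s hs
      exact step s hs.1 hs.2 (fun x hx =>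
        hposall x ⟨lt_of_lt_of_le hs.1 hx.1, hx.2⟩)
    have : h m ≤ 0 := ge_of_tendsto htend0 hev
    linarith
  · set α : ℝ := sSup S with hα
    obtain ⟨x₀, hx₀⟩ := id hSne
    have hbdd : BddAbove S := ⟨m, fun x hx => hx.1.2⟩
    have hx₀α : x₀ ≤ α := le_csSup hbdd hx₀
    have hαpos : 0 < α := lt_of_lt_of_le hx₀.1.1 hx₀α
    have hαm : α ≤ m := csSup_le hSne (fun x hx => hx.1.2)
    have hhα : h α ≤ 0 := by
      by_contra hcα
      push_neg at hcα
      have hca : ContinuousAt h α := hcontat α hαpos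
      have hev : h ⁻¹' (Ioi 0) ∈ 𝓝 α := hca (Ioi_mem_nhds hcα)
      obtain ⟨ε, hε, hball⟩ := Metric.mem_nhds_iff.mp hev
      obtain ⟨x, hxS, hxgt⟩ := exists_lt_of_lt_csSup hSne (by linarith : α - ε < α)
      have hxα : x ≤ α := le_csSup hbdd hxS
      have hxball : x ∈ Metric.ball α ε := by
        rw [Real.ball_eq_Ioo]
        exact ⟨hxgt, by linarith⟩
      have : 0 < h x := hball hxball
      exact absurd hxS.2 (by linarith)
    have hαltm : α < m := by
      rcases eq_or_lt_of_le hαm with he | hl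
      · exfalso; rw [he] at hhα; linarith
      · exact hl
    have hposall : ∀ x ∈ Ioc α m, 0 < h x := by
      intro x hx
      by_contra hcx
      push_neg at hcx
      have hxS : x ∈ S := ⟨⟨lt_trans hαpos hx.1, hx.2⟩, hcx⟩
      exact absurd (le_csSup hbdd hxS) (not_le.mpr hx.1)
    have hev : ∀ᶠ s in 𝓝[>] α, h m ≤ h s := by
      filter_upwards [Ioo_mem_nhdsGT_of_mem (⟨le_refl α, hαltm⟩ : α ∈ Ico α m)]
        with s hs
      exact step s (lt_trans hαpos hs.1) hs.2 (fun x hx =>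
        hposall x ⟨lt_of_lt_of_le hs.1 hx.1, hx.2⟩)
    have hlim : Tendsto h (𝓝[>] α) (𝓝 (h α)) :=
      (hcontat α hαpos).continuousWithinAt.tendsto
    have : h m ≤ h α := ge_of_tendsto hlim hev
    linarith

/-- Uniqueness of `C¹` nonincreasing solutions of
`Δ_p u = u^q` on `(0,∞)` with `u(0⁺)=1`, `u(∞)=0`, for `q ≥ 0` and `p > d > 1`. -/
theorem stmt6 (d : ℕ) (p q : ℝ) (hq : 0 ≤ q) (hd : 1 < d) (hp : (d : ℝ) < p)
    (u u' v v' : ℝ → ℝ)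
    (huderiv : ∀ r ∈ Ioi (0:ℝ), HasDerivAt u (u' r) r)
    (huc : ContinuousOn u' (Ioi 0))
    (humono : AntitoneOn u (Ioi 0))
    (hunn : ∀ r ∈ Ioi (0:ℝ), 0 ≤ u r)
    (hu0 : Tendsto u (𝓝[>] 0) (𝓝 1))
    (huinf : Tendsto u atTop (𝓝 0))
    (huneg : ∀ r ∈ Ioi (0:ℝ), 0 < u r → u' r < 0)
    (huode : ∀ r ∈ Ioi (0:ℝ),
      HasDerivAt (fun s => s ^ (d - 1) * |u' s| ^ (p - 2) * u' s)
        (r ^ (d - 1) * u r ^ q) r)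
    (hvderiv : ∀ r ∈ Ioi (0:ℝ), HasDerivAt v (v' r) r)
    (hvc : ContinuousOn v' (Ioi 0))
    (hvmono : AntitoneOn v (Ioi 0))
    (hvnn : ∀ r ∈ Ioi (0:ℝ), 0 ≤ v r)
    (hv0 : Tendsto v (𝓝[>] 0) (𝓝 1))
    (hvinf : Tendsto v atTop (𝓝 0))
    (hvneg : ∀ r ∈ Ioi (0:ℝ), 0 < v r → v' r < 0)
    (hvode : ∀ r ∈ Ioi (0:ℝ),
      HasDerivAt (fun s => s ^ (d - 1) * |v' s| ^ (p - 2) * v' s)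
        (r ^ (d - 1) * v r ^ q) r) :
    ∀ r > (0:ℝ), u r = v r := by
  intro r hr
  exact le_antisymm
    (key6 d p q hq hd hp u u' v v' huderiv hu0 huinf huode hvderiv hvnn hv0 hvinf hvode r hr)
    (key6 d p q hq hd hp v v' u u' hvderiv hv0 hvinf hvode huderiv hunn hu0 huinf huode r hr)
end

section
/- Let d ≥ 1 be an integer and p > d a real number. Set a = (p−d)/(d(p−1)), b = p/(p−1), 𝓑(a,b) = ∫_0^1 t^{a−1}(1−t)^{b−1} dt, R = d · 𝓑(a,b)^{−(p−1)/p}, and define u(r) = d^{−p/(p−1)} R^{p/(p−1)} ∫_{(r/R)^d}^1 t^{a−1}(1−t)^{b−1} dt for 0 ≤ r ≤ R. Then u(0) = 1, u(R) = 0, u is continuously differentiable on (0,R) with u'(r) < 0 there, lim_{r→R⁻} u'(r) = 0, and for every r ∈ (0,R) the function s ↦ s^{d−1}|u'(s)|^{p−2}u'(s) is differentiable at r with derivative equal to r^{d−1}. In other words, u is a closed-form solution of the free boundary problem (|u'|^{p−2}u')' + ((d−1)/r)|u'|^{p−2}u' = u^0 = 1 on (0,R), u(0)=1, u(R)=u'(R)=0.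 -/
open Filter Set Topology MeasureTheory

set_option maxHeartbeats 2000000 in
/-- Closed form solution (via the incomplete Beta function) of the
free boundary problem `(|u'|^{p-2}u')' + ((d-1)/r)|u'|^{p-2}u' = 1` on `(0,R)`,
with `u(0)=1`, `u(R)=u'(R)=0`, for `p > d ≥ 1` and `q = 0`. -/
theorem stmt7 (d : ℕ) (hd : 1 ≤ d) (p : ℝ) (hp : (d : ℝ) < p)
    (a b R : ℝ)
    (ha : a = (p - (d : ℝ)) / ((d : ℝ) * (p - 1)))
    (hb : b = p / (p - 1))
    (hR : R = (d : ℝ) *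
      (∫ t in Ioo (0:ℝ) 1, t ^ (a - 1) * (1 - t) ^ (b - 1)) ^ (-((p - 1) / p)))
    (u : ℝ → ℝ)
    (hu : ∀ r, u r = (d : ℝ) ^ (-(p / (p - 1))) * R ^ (p / (p - 1)) *
      ∫ t in Ioo ((r / R) ^ d) (1:ℝ), t ^ (a - 1) * (1 - t) ^ (b - 1)) :
    u 0 = 1 ∧ u R = 0 ∧
    (∀ r ∈ Ioo (0:ℝ) R, DifferentiableAt ℝ u r) ∧
    ContinuousOn (deriv u) (Ioo 0 R) ∧
    (∀ r ∈ Ioo (0:ℝ) R, deriv u r < 0) ∧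
    Tendsto (deriv u) (𝓝[<] R) (𝓝 0) ∧
    (∀ r ∈ Ioo (0:ℝ) R,
      HasDerivAt (fun s => s ^ (d - 1) * |deriv u s| ^ (p - 2) * deriv u s)
        (r ^ (d - 1)) r) := by
  have hd0 : (0:ℝ) < d := by exact_mod_cast hd
  have hd1 : (1:ℝ) ≤ d := by exact_mod_cast hd
  have hdn0 : d ≠ 0 := by omega
  have hp1 : (1:ℝ) < p := lt_of_le_of_lt hd1 hp
  have hp0 : (0:ℝ) < p := by linarith
  have hp1' : (0:ℝ) < p - 1 := by linarith
  have ha0 : 0 < a := by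
    rw [ha]; exact div_pos (by linarith) (by positivity)
  have hb1 : 0 < b - 1 := by
    have : b - 1 = 1 / (p - 1) := by rw [hb]; field_simp; ring
    rw [this]; positivity
  set φ : ℝ → ℝ := fun t => t ^ (a - 1) * (1 - t) ^ (b - 1) with hφdef
  have hφmeas : Measurable φ :=
    (measurable_id.pow_const (a - 1)).mul
      ((measurable_const.sub measurable_id).pow_const (b - 1))
  have hφpos : ∀ t ∈ Ioo (0:ℝ) 1, 0 < φ t := by
    intro t ht
    exact mul_pos (Real.rpow_pos_of_pos ht.1 _)
      (Real.rpow_pos_of_pos (by linarith [ht.2]) _)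
  have hφca : ∀ t ∈ Ioo (0:ℝ) 1, ContinuousAt φ t := by
    intro t ht
    have c1 : ContinuousAt (fun y : ℝ => y ^ (a - 1)) t :=
      Real.continuousAt_rpow_const _ _ (Or.inl ht.1.ne')
    have c2 : ContinuousAt (fun y : ℝ => (1 - y) ^ (b - 1)) t := by
      have := (Real.continuousAt_rpow_const (1 - t) (b - 1)
        (Or.inl (by nlinarith [ht.2] : (0:ℝ) < 1 - t).ne'))
      exact this.comp ((continuous_const.sub continuous_id).continuousAt)
    exact c1.mul c2
  have hInt : IntegrableOn φ (Ioo (0:ℝ) 1) := by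
    have h1 : IntegrableOn (fun t : ℝ => t ^ (a - 1)) (Ioo (0:ℝ) 1) := by
      have h := (intervalIntegral.intervalIntegrable_rpow' (a := 0) (b := 1) (r := a - 1)
        (by linarith)).1
      exact h.mono_set Ioo_subset_Ioc_self
    apply Integrable.mono' h1 hφmeas.aestronglyMeasurable.restrict
    filter_upwards [ae_restrict_mem measurableSet_Ioo] with t ht
    have h0 : (0:ℝ) ≤ t := ht.1.le
    have h1t : (0:ℝ) ≤ 1 - t := by linarith [ht.2]
    rw [Real.norm_eq_abs, abs_of_nonneg
      (mul_nonneg (Real.rpow_nonneg h0 _) (Real.rpow_nonneg h1t _))]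
    have hle : (1 - t) ^ (b - 1) ≤ 1 :=
      Real.rpow_le_one h1t (by linarith [ht.1]) (by linarith)
    calc t ^ (a - 1) * (1 - t) ^ (b - 1) ≤ t ^ (a - 1) * 1 :=
          mul_le_mul_of_nonneg_left hle (Real.rpow_nonneg h0 _)
      _ = t ^ (a - 1) := mul_one _
  have hII : IntervalIntegrable φ volume 0 1 := by
    rw [intervalIntegrable_iff_integrableOn_Ioo_of_le zero_le_one]
    exact hInt
  set B : ℝ := ∫ t in Ioo (0:ℝ) 1, φ t with hBdef
  have hBeq : B = ∫ t in (0:ℝ)..1, φ t := by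
    rw [intervalIntegral.integral_of_le zero_le_one, integral_Ioc_eq_integral_Ioo]
  have hB : 0 < B := by
    rw [hBeq]
    exact intervalIntegral.intervalIntegral_pos_of_pos_on hII hφpos zero_lt_one
  have hRB : R = (d : ℝ) * B ^ (-((p - 1) / p)) := hR
  have hR0 : 0 < R := by
    rw [hRB]; positivity
  set p' : ℝ := p / (p - 1) with hp'def
  set C : ℝ := (d : ℝ) ^ (-p') * R ^ p' with hCdef
  have hC : 0 < C := by positivity
  have hCB : C * B = 1 := by
    have h1 : R ^ p' = (d : ℝ) ^ p' * B⁻¹ := by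
      rw [hRB, Real.mul_rpow hd0.le (Real.rpow_nonneg hB.le _),
        ← Real.rpow_mul hB.le,
        show (-((p - 1) / p)) * p' = -1 by rw [hp'def]; field_simp,
        Real.rpow_neg_one]
    rw [hCdef, h1]
    rw [show (d:ℝ) ^ (-p') * ((d:ℝ) ^ p' * B⁻¹) * B
        = ((d:ℝ) ^ (-p') * (d:ℝ) ^ p') * (B⁻¹ * B) by ring,
      ← Real.rpow_add hd0, neg_add_cancel, Real.rpow_zero,
      inv_mul_cancel₀ hB.ne', one_mul]
  have huC : ∀ r, u r = C * ∫ t in Ioo ((r / R) ^ d) (1:ℝ), φ t := hu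
  -- splitting the integral
  have hsub : ∀ x ∈ Icc (0:ℝ) 1, IntervalIntegrable φ volume 0 x := by
    intro x hx
    exact hII.mono_set (by
      rw [uIcc_of_le hx.1, uIcc_of_le zero_le_one]
      exact Icc_subset_Icc le_rfl hx.2)
  have hsplit : ∀ x ∈ Icc (0:ℝ) 1,
      (∫ t in Ioo x 1, φ t) = B - ∫ t in (0:ℝ)..x, φ t := by
    intro x hx
    have h2 : IntervalIntegrable φ volume x 1 := hII.mono_set (by
      rw [uIcc_of_le hx.2, uIcc_of_le zero_le_one]
      exact Icc_subset_Icc hx.1 le_rfl)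
    have hadd := intervalIntegral.integral_add_adjacent_intervals (hsub x hx) h2
    have hx1 : (∫ t in x..1, φ t) = ∫ t in Ioo x 1, φ t := by
      rw [intervalIntegral.integral_of_le hx.2, integral_Ioc_eq_integral_Ioo]
    rw [← hx1, hBeq]
    linarith [hadd]
  -- the explicit derivative
  set D : ℝ → ℝ := fun r => -(C * φ ((r / R) ^ d) * (↑d * (r / R) ^ (d - 1) * R⁻¹))
    with hDdef
  have hUD : ∀ r ∈ Ioo (0:ℝ) R, HasDerivAt u (D r) r := by
    intro r hr
    have hx0 : 0 < r / R := div_pos hr.1 hR0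
    have hx1 : r / R < 1 := (div_lt_one hR0).2 hr.2
    have hs0 : 0 < (r / R) ^ d := pow_pos hx0 d
    have hs1 : (r / R) ^ d < 1 := pow_lt_one₀ hx0.le hx1 hdn0
    have hg : HasDerivAt (fun s : ℝ => (s / R) ^ d)
        (↑d * (r / R) ^ (d - 1) * R⁻¹) r := by
      have h := ((hasDerivAt_id r).div_const R).pow d
      simpa [one_div, Pi.pow_def] using h
    have hF : HasDerivAt (fun y => ∫ t in (0:ℝ)..y, φ t)
        (φ ((r / R) ^ d)) ((r / R) ^ d) := by
      refine intervalIntegral.integral_hasDerivAt_right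
        (hsub _ ⟨hs0.le, hs1.le⟩) ?_ (hφca _ ⟨hs0, hs1⟩)
      exact ⟨univ, univ_mem, hφmeas.aestronglyMeasurable.restrict⟩
    have hcomp : HasDerivAt (fun s : ℝ => ∫ t in (0:ℝ)..((s / R) ^ d), φ t)
        (φ ((r / R) ^ d) * (↑d * (r / R) ^ (d - 1) * R⁻¹)) r :=
      by have := hF.comp r hg; exact this
    have hmain : HasDerivAt
        (fun s : ℝ => C * (B - ∫ t in (0:ℝ)..((s / R) ^ d), φ t)) (D r) r := by
      have := (hcomp.const_sub B).const_mul C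
      refine this.congr_deriv ?_
      rw [hDdef]; ring
    refine hmain.congr_of_eventuallyEq ?_
    filter_upwards [Ioo_mem_nhds hr.1 hr.2] with s hs
    have hsx0 : 0 < s / R := div_pos hs.1 hR0
    have hsx1 : s / R < 1 := (div_lt_one hR0).2 hs.2
    rw [huC s, hsplit _ ⟨(pow_pos hsx0 d).le, (pow_lt_one₀ hsx0.le hsx1 hdn0).le⟩]
  have hderiv : ∀ r ∈ Ioo (0:ℝ) R, deriv u r = D r :=
    fun r hr => (hUD r hr).deriv
  have hDneg : ∀ r ∈ Ioo (0:ℝ) R, D r < 0 := by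
    intro r hr
    have hx0 : 0 < r / R := div_pos hr.1 hR0
    have hx1 : r / R < 1 := (div_lt_one hR0).2 hr.2
    have hφp : 0 < φ ((r / R) ^ d) :=
      hφpos _ ⟨pow_pos hx0 d, pow_lt_one₀ hx0.le hx1 hdn0⟩
    have : 0 < C * φ ((r / R) ^ d) * (↑d * (r / R) ^ (d - 1) * R⁻¹) := by
      have h1 : (0:ℝ) < ↑d * (r / R) ^ (d - 1) * R⁻¹ := by positivity
      positivity
    simpa [hDdef] using neg_neg_of_pos this
  -- the algebraic identity
  have hkey : ∀ r ∈ Ioo (0:ℝ) R,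
      r ^ (d - 1) * |D r| ^ (p - 2) * D r = (r ^ d - R ^ d) / d := by
    intro r hr
    have hx0 : 0 < r / R := div_pos hr.1 hR0
    have hx1 : r / R < 1 := (div_lt_one hR0).2 hr.2
    have hs0 : 0 < (r / R) ^ d := pow_pos hx0 d
    have hs1 : (r / R) ^ d < 1 := pow_lt_one₀ hx0.le hx1 hdn0
    have hφp : 0 < φ ((r / R) ^ d) := hφpos _ ⟨hs0, hs1⟩
    set M : ℝ := C * φ ((r / R) ^ d) * (↑d * (r / R) ^ (d - 1) * R⁻¹) with hMdef
    have hM0 : 0 < M := by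
      have h1 : (0:ℝ) < ↑d * (r / R) ^ (d - 1) * R⁻¹ := by positivity
      positivity
    have hDr : D r = -M := rfl
    rw [hDr, abs_neg, abs_of_pos hM0]
    have hstep : r ^ (d - 1) * M ^ (p - 2) * (-M)
        = -(r ^ (d - 1) * M ^ (p - 1)) := by
      rw [show p - 1 = (p - 2) + 1 by ring, Real.rpow_add hM0, Real.rpow_one]
      ring
    rw [hstep]
    have h1s : 0 < 1 - (r / R) ^ d := by linarith
    have hmain : r ^ (d - 1) * M ^ (p - 1) = R ^ d / d * (1 - (r / R) ^ d) := by
      have hL : 0 < r ^ (d - 1) * M ^ (p - 1) :=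
        mul_pos (pow_pos hr.1 _) (Real.rpow_pos_of_pos hM0 _)
      have hRs : 0 < R ^ d / d * (1 - (r / R) ^ d) := by positivity
      have hcast : ((d - 1 : ℕ) : ℝ) = (d : ℝ) - 1 := by
        push_cast [Nat.cast_sub hd]; ring
      have hlogM : Real.log M
          = (-p' * Real.log d + p' * Real.log R)
            + ((a - 1) * ((d : ℝ) * (Real.log r - Real.log R))
              + (b - 1) * Real.log (1 - (r / R) ^ d))
            + (Real.log d + ((d : ℝ) - 1) * (Real.log r - Real.log R)
              - Real.log R) := by
        rw [hMdef]
        rw [Real.log_mul (by positivity) (by positivity),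
          Real.log_mul hC.ne' hφp.ne']
        congr 1
        · congr 1
          · rw [hCdef, Real.log_mul (by positivity) (by positivity),
              Real.log_rpow hd0, Real.log_rpow hR0]
          · rw [hφdef]
            simp only []
            rw [Real.log_mul (Real.rpow_pos_of_pos hs0 _).ne'
                (Real.rpow_pos_of_pos h1s _).ne',
              Real.log_rpow hs0, Real.log_rpow h1s, Real.log_pow,
              Real.log_div hr.1.ne' hR0.ne']
        · rw [Real.log_mul (by positivity) (by positivity),
            Real.log_mul (by positivity) (by positivity),
            Real.log_pow, Real.log_div hr.1.ne' hR0.ne', Real.log_inv, hcast]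
          ring
      have hlog : Real.log (r ^ (d - 1) * M ^ (p - 1))
          = Real.log (R ^ d / d * (1 - (r / R) ^ d)) := by
        rw [Real.log_mul (pow_pos hr.1 _).ne' (Real.rpow_pos_of_pos hM0 _).ne',
          Real.log_rpow hM0, Real.log_pow, hlogM,
          Real.log_mul (by positivity) h1s.ne',
          Real.log_div (by positivity) hd0.ne', Real.log_pow, hcast]
        rw [ha, hb, hp'def]
        field_simp
        ring
      calc r ^ (d - 1) * M ^ (p - 1)
          = Real.exp (Real.log (r ^ (d - 1) * M ^ (p - 1))) :=
            (Real.exp_log hL).symm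
        _ = Real.exp (Real.log (R ^ d / d * (1 - (r / R) ^ d))) := by rw [hlog]
        _ = R ^ d / d * (1 - (r / R) ^ d) := Real.exp_log hRs
    rw [hmain, div_pow]
    have hRd : (R:ℝ) ^ d ≠ 0 := by positivity
    field_simp
    ring
  refine ⟨?_, ?_, ?_, ?_, ?_, ?_, ?_⟩
  · -- u 0 = 1
    rw [huC 0]
    rw [zero_div, zero_pow hdn0]
    exact hCB
  · -- u R = 0
    rw [huC R, div_self hR0.ne', one_pow, Ioo_self]
    simp
  · exact fun r hr => (hUD r hr).differentiableAt
  · -- continuity of deriv u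
    have hDcont : ContinuousOn D (Ioo 0 R) := by
      have hg1 : ContinuousOn (fun r : ℝ => (r / R) ^ d) (Ioo 0 R) :=
        ((continuous_id.div_const R).pow d).continuousOn
      have hmaps : MapsTo (fun r : ℝ => (r / R) ^ d) (Ioo 0 R) (Ioo 0 1) := by
        intro r hr
        have hx0 : 0 < r / R := div_pos hr.1 hR0
        have hx1 : r / R < 1 := (div_lt_one hR0).2 hr.2
        exact ⟨pow_pos hx0 d, pow_lt_one₀ hx0.le hx1 hdn0⟩
      have hφcomp : ContinuousOn (fun r : ℝ => φ ((r / R) ^ d)) (Ioo 0 R) :=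
        ContinuousOn.comp (fun t ht => (hφca t ht).continuousWithinAt) hg1 hmaps
      have : ContinuousOn (fun r : ℝ =>
          -(C * φ ((r / R) ^ d) * (↑d * (r / R) ^ (d - 1) * R⁻¹))) (Ioo 0 R) := by
        apply ContinuousOn.neg
        exact (continuousOn_const.mul hφcomp).mul
          ((continuousOn_const.mul
            (((continuous_id.div_const R).pow (d - 1)).continuousOn)).mul
            continuousOn_const)
      exact this
    exact ContinuousOn.congr hDcont hderiv
  · exact fun r hr => (hderiv r hr) ▸ hDneg r hr
  · -- limit of deriv u at R from the left
    have hmem : Ioo (0:ℝ) R ∈ 𝓝[<] R := Ioo_mem_nhdsLT hR0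
    have hDt : Tendsto D (𝓝[<] R) (𝓝 0) := by
      have hg1 : Tendsto (fun r : ℝ => (r / R) ^ d) (𝓝[<] R) (𝓝 1) := by
        have : Tendsto (fun r : ℝ => (r / R) ^ d) (𝓝 R) (𝓝 ((R / R) ^ d)) :=
          ((continuous_id.div_const R).pow d).continuousAt
        rw [div_self hR0.ne', one_pow] at this
        exact this.mono_left nhdsWithin_le_nhds
      have h1 : Tendsto (fun r : ℝ => ((r / R) ^ d) ^ (a - 1)) (𝓝[<] R) (𝓝 1) := by
        have hc : ContinuousAt (fun y : ℝ => y ^ (a - 1)) 1 :=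
          Real.continuousAt_rpow_const _ _ (Or.inl one_ne_zero)
        have := hc.tendsto.comp hg1
        simpa [Function.comp_def, Real.one_rpow] using this
      have h2 : Tendsto (fun r : ℝ => (1 - (r / R) ^ d) ^ (b - 1)) (𝓝[<] R) (𝓝 0) := by
        have hc : ContinuousAt (fun y : ℝ => y ^ (b - 1)) 0 :=
          Real.continuousAt_rpow_const _ _ (Or.inr (by linarith))
        have hto0 : Tendsto (fun r : ℝ => 1 - (r / R) ^ d) (𝓝[<] R) (𝓝 0) := by
          have := (tendsto_const_nhds (x := (1:ℝ))).sub hg1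
          simpa using this
        have := hc.tendsto.comp hto0
        simpa [Function.comp_def, Real.zero_rpow (by positivity : b - 1 ≠ 0)] using this
      have h3 : Tendsto (fun r : ℝ => ↑d * (r / R) ^ (d - 1) * R⁻¹) (𝓝[<] R)
          (𝓝 (↑d * (R / R) ^ (d - 1) * R⁻¹)) := by
        exact (((continuous_const.mul ((continuous_id.div_const R).pow (d - 1))).mul
          continuous_const).continuousAt).tendsto.mono_left nhdsWithin_le_nhds
      have hφt : Tendsto (fun r : ℝ => φ ((r / R) ^ d)) (𝓝[<] R) (𝓝 0) := by
        have := h1.mul h2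
        rw [one_mul] at this
        exact this
      have := ((tendsto_const_nhds (x := C)).mul hφt).mul h3
      rw [mul_zero, zero_mul] at this
      simpa [hDdef] using this.neg
    refine hDt.congr' ?_
    filter_upwards [hmem] with r hr
    exact (hderiv r hr).symm
  · -- the ODE
    intro r hr
    have heq : (fun s => s ^ (d - 1) * |deriv u s| ^ (p - 2) * deriv u s)
        =ᶠ[𝓝 r] (fun s => (s ^ d - R ^ d) / d) := by
      filter_upwards [Ioo_mem_nhds hr.1 hr.2] with s hs
      rw [hderiv s hs, hkey s hs]
    have hpow : HasDerivAt (fun s : ℝ => (s ^ d - R ^ d) / d) (r ^ (d - 1)) r := by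
      have h1 : HasDerivAt (fun s : ℝ => s ^ d) (↑d * r ^ (d - 1)) r :=
        hasDerivAt_pow d r
      have h2 := (h1.sub_const (R ^ d)).div_const (d : ℝ)
      convert h2 using 1
      · rfl
      · rfl
      field_simp
    exact hpow.congr_of_eventuallyEq heq
end

section
/- Let p > 1 and q ≥ 0 be real numbers. (i) If q = p−1, the function u(r) = e^{−(p−1)^{−1/p} r} satisfies u(0) = 1, lim_{r→∞} u(r) = 0, and the function r ↦ |u'(r)|^{p−2}u'(r) is differentiable on (0,∞) with derivative u(r)^q at every r > 0. (ii) If 0 ≤ q < p−1, set R = (p−1)^{1/p}(q+1)^{1/p} / (p^{1/p−1}(p−q−1)); then the function u defined by u(r) = (1 − r/R)^{p/(p−q−1)} for 0 ≤ r ≤ R and u(r) = 0 for r > R satisfies u(0) = 1, u(R) = 0, lim_{r→R⁻} u'(r) = 0, and r ↦ |u'(r)|^{p−2}u'(r) is differentiable on (0,R) with derivative u(r)^q. (iii) If q > p−1, set c = p^{1/p−1}(q+1−p)/((p−1)^{1/p}(q+1)^{1/p}); then u(r) = (1 + c r)^{−p/(q+1−p)} satisfies u(0) = 1, lim_{r→∞}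 u(r) = 0, and r ↦ |u'(r)|^{p−2}u'(r) is differentiable on (0,∞) with derivative u(r)^q. -/
open Filter Set Topology MeasureTheory

private lemma hasDerivAt_rpow_comp {f : ℝ → ℝ} {b r : ℝ} (e : ℝ)
    (hf : HasDerivAt f b r) (h : 0 < f r) :
    HasDerivAt (fun s => f s ^ e) (e * f r ^ (e - 1) * b) r := by
  have h2 := (Real.hasDerivAt_rpow_const (x := f r) (p := e) (Or.inl h.ne')).comp r hf
  exact h2

private lemma abs_pow_mul_neg {y p : ℝ} (hy : 0 < y) :
    |(-y)| ^ (p - 2) * (-y) = -(y ^ (p - 1)) := by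
  rw [abs_neg, abs_of_pos hy, show p - 1 = p - 2 + 1 by ring,
    Real.rpow_add_one hy.ne']
  ring

private lemma exp_rpow' (x y : ℝ) : Real.exp x ^ y = Real.exp (x * y) := by
  rw [Real.rpow_def_of_pos (Real.exp_pos x), Real.log_exp]

private lemma key_mc {p t A c : ℝ} (hp : 1 < p) (ht : 0 < t) (hA : 0 < A)
    (hc : c = p ^ (1 / p - 1) * t / ((p - 1) ^ (1 / p) * A ^ (1 / p))) :
    p / t * c = (p / ((p - 1) * A)) ^ (1 / p) := by
  have hp0 : 0 < p := by linarith
  have hp1 : 0 < p - 1 := by linarith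
  rw [Real.div_rpow hp0.le (mul_pos hp1 hA).le, Real.mul_rpow hp1.le hA.le, hc]
  have hpe : p ^ (1 / p) = p * p ^ (1 / p - 1) := by
    rw [show (1 / p) = (1 / p - 1) + 1 by ring, Real.rpow_add_one hp0.ne']
    ring
  rw [hpe]
  have h1 : (p - 1 : ℝ) ^ (1 / p) ≠ 0 := (Real.rpow_pos_of_pos hp1 _).ne'
  have h2 : (A : ℝ) ^ (1 / p) ≠ 0 := (Real.rpow_pos_of_pos hA _).ne'
  field_simp

private lemma key_mcp {p t A c : ℝ} (hp : 1 < p) (ht : 0 < t) (hA : 0 < A)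
    (hc : c = p ^ (1 / p - 1) * t / ((p - 1) ^ (1 / p) * A ^ (1 / p))) :
    (p / t * c) ^ p = p / ((p - 1) * A) := by
  have hp0 : 0 < p := by linarith
  have hp1 : 0 < p - 1 := by linarith
  have hX : 0 ≤ p / ((p - 1) * A) := le_of_lt (div_pos hp0 (mul_pos hp1 hA))
  rw [key_mc hp ht hA hc, ← Real.rpow_mul hX, one_div_mul_cancel hp0.ne',
    Real.rpow_one]

private lemma key_coeff {p t A c : ℝ} (hp : 1 < p) (ht : 0 < t) (hA : 0 < A)
    (hc : c = p ^ (1 / p - 1) * t / ((p - 1) ^ (1 / p) * A ^ (1 / p))) :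
    (p / t * c) ^ (p - 1) * (A / t * (p - 1)) * c = 1 := by
  have hp0 : 0 < p := by linarith
  have hp1 : 0 < p - 1 := by linarith
  have hc0 : 0 < c := by
    rw [hc]
    exact div_pos (mul_pos (Real.rpow_pos_of_pos hp0 _) ht)
      (mul_pos (Real.rpow_pos_of_pos hp1 _) (Real.rpow_pos_of_pos hA _))
  have hm : 0 < p / t * c := mul_pos (div_pos hp0 ht) hc0
  have h1 : (p / t * c) ^ (p - 1) = (p / t * c) ^ p / (p / t * c) := by
    rw [Real.rpow_sub hm, Real.rpow_one]
  rw [h1, key_mcp hp ht hA hc]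
  field_simp

/-- Closed form solutions of the one-dimensional Euler-Lagrange
problem `(|u'|^{p-2}u')' = u^q` with `u(0)=1`, in the three regimes
`q = p-1`, `q < p-1` (compact support, zero contact angle) and `q > p-1`. -/
theorem stmt8 (p q : ℝ) (hp : 1 < p) (hq : 0 ≤ q) :
    (q = p - 1 → ∀ u : ℝ → ℝ,
      (∀ r, u r = Real.exp (-((p - 1) ^ (-(1 / p)) * r))) →
      u 0 = 1 ∧ Tendsto u atTop (𝓝 0) ∧
      ∀ r ∈ Ioi (0:ℝ),
        HasDerivAt (fun s => |deriv u s| ^ (p - 2) * deriv u s) (u r ^ q) r) ∧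
    (q < p - 1 → ∀ R : ℝ,
      R = (p - 1) ^ (1 / p) * (q + 1) ^ (1 / p) / (p ^ (1 / p - 1) * (p - q - 1)) →
      ∀ u : ℝ → ℝ,
      (∀ r, u r = if r ≤ R then (1 - r / R) ^ (p / (p - q - 1)) else 0) →
      u 0 = 1 ∧ u R = 0 ∧ Tendsto (deriv u) (𝓝[<] R) (𝓝 0) ∧
      ∀ r ∈ Ioo (0:ℝ) R,
        HasDerivAt (fun s => |deriv u s| ^ (p - 2) * deriv u s) (u r ^ q) r) ∧
    (p - 1 < q → ∀ c : ℝ,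
      c = p ^ (1 / p - 1) * (q + 1 - p) / ((p - 1) ^ (1 / p) * (q + 1) ^ (1 / p)) →
      ∀ u : ℝ → ℝ,
      (∀ r, u r = (1 + c * r) ^ (-(p / (q + 1 - p)))) →
      u 0 = 1 ∧ Tendsto u atTop (𝓝 0) ∧
      ∀ r ∈ Ioi (0:ℝ),
        HasDerivAt (fun s => |deriv u s| ^ (p - 2) * deriv u s) (u r ^ q) r) := by
  refine ⟨?_, ?_, ?_⟩
  · intro hqe u hu
    have hp1 : 0 < p - 1 := by linarith
    set a := (p - 1) ^ (-(1 / p)) with ha_def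
    have ha : 0 < a := Real.rpow_pos_of_pos hp1 _
    have hufun : u = fun r => Real.exp (-(a * r)) := funext hu
    subst hufun
    have hap : a ^ p = (p - 1)⁻¹ := by
      rw [ha_def, ← Real.rpow_mul hp1.le,
        show -(1 / p) * p = -1 by field_simp, Real.rpow_neg_one]
    have hd : ∀ s : ℝ, HasDerivAt (fun r : ℝ => Real.exp (-(a * r)))
        (-(a * Real.exp (-(a * s)))) s := by
      intro s
      have h0 : HasDerivAt (fun r : ℝ => -(a * r)) (-a) s := by
        have h := ((hasDerivAt_id s).const_mul a).neg
        simp at h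
        exact h
      have h2 := (Real.hasDerivAt_exp (-(a * s))).comp s h0
      refine h2.congr_deriv (Eq.symm ?_)
      ring
    refine ⟨by simp, ?_, ?_⟩
    · have h1 : Tendsto (fun r : ℝ => a * r) atTop atTop :=
        tendsto_id.const_mul_atTop ha
      exact Real.tendsto_exp_atBot.comp (tendsto_neg_atTop_atBot.comp h1)
    · intro r hr
      have hG : HasDerivAt (fun s : ℝ => -(a ^ (p - 1) * Real.exp (-((p - 1) * (a * s)))))
          ((fun r : ℝ => Real.exp (-(a * r))) r ^ q) r := by
        have h0 : HasDerivAt (fun s : ℝ => -((p - 1) * (a * s))) (-((p - 1) * a)) r := by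
          have h := (((hasDerivAt_id r).const_mul a).const_mul (p - 1)).neg
          simp [mul_assoc] at h
          exact h
        have h1 := ((Real.hasDerivAt_exp (-((p - 1) * (a * r)))).comp r h0).const_mul
          (a ^ (p - 1)) |>.neg
        refine h1.congr_deriv (Eq.symm ?_)
        beta_reduce
        rw [hqe, exp_rpow', show -(a * r) * (p - 1) = -((p - 1) * (a * r)) by ring]
        have hone : a ^ (p - 1) * ((p - 1) * a) = 1 := by
          have haa : a ^ (p - 1) * a = a ^ p := by
            rw [← Real.rpow_add_one ha.ne' (p - 1), sub_add_cancel]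
          calc a ^ (p - 1) * ((p - 1) * a) = a ^ (p - 1) * a * (p - 1) := by ring
            _ = 1 := by rw [haa, hap]; field_simp
        calc Real.exp (-((p - 1) * (a * r)))
            = a ^ (p - 1) * ((p - 1) * a) * Real.exp (-((p - 1) * (a * r))) := by
              rw [hone, one_mul]
          _ = -(a ^ (p - 1) * (Real.exp (-((p - 1) * (a * r))) * -((p - 1) * a))) := by ring
      refine hG.congr_of_eventuallyEq (Filter.Eventually.of_forall fun s => ?_)
      show |deriv (fun r : ℝ => Real.exp (-(a * r))) s| ^ (p - 2)
          * deriv (fun r : ℝ => Real.exp (-(a * r))) s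
        = -(a ^ (p - 1) * Real.exp (-((p - 1) * (a * s))))
      rw [(hd s).deriv]
      have hy : 0 < a * Real.exp (-(a * s)) := mul_pos ha (Real.exp_pos _)
      rw [abs_pow_mul_neg hy, Real.mul_rpow ha.le (Real.exp_pos _).le, exp_rpow',
        show -(a * s) * (p - 1) = -((p - 1) * (a * s)) by ring]
  · intro hlt R hR u hu
    have hp0 : 0 < p := by linarith
    have hp1 : 0 < p - 1 := by linarith
    have ht : 0 < p - q - 1 := by linarith
    have hA : 0 < q + 1 := by linarith
    have hR0 : 0 < R := by
      rw [hR]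
      exact div_pos (mul_pos (Real.rpow_pos_of_pos hp1 _) (Real.rpow_pos_of_pos hA _))
        (mul_pos (Real.rpow_pos_of_pos hp0 _) ht)
    have hcR : 1 / R = p ^ (1 / p - 1) * (p - q - 1) / ((p - 1) ^ (1 / p) * (q + 1) ^ (1 / p)) := by
      rw [hR, one_div_div]
    have hm : 0 < p / (p - q - 1) := div_pos hp0 ht
    have hm1 : 1 < p / (p - q - 1) := (one_lt_div ht).mpr (by linarith)
    -- derivative of u on Iio R
    have hd : ∀ s : ℝ, s < R → HasDerivAt u
        (p / (p - q - 1) * (1 - s / R) ^ (p / (p - q - 1) - 1) * (-(1 / R))) s := by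
      intro s hs
      have hb : (0:ℝ) < 1 - s / R := by
        have := (div_lt_one hR0).mpr hs; linarith
      have h0 : HasDerivAt (fun x : ℝ => 1 - x / R) (-(1 / R)) s := by
        simpa using ((hasDerivAt_id s).div_const R).const_sub 1
      refine (hasDerivAt_rpow_comp _ h0 hb).congr_of_eventuallyEq ?_
      filter_upwards [Iio_mem_nhds hs] with x hx
      rw [hu x, if_pos hx.le]
    refine ⟨?_, ?_, ?_, ?_⟩
    · rw [hu 0, if_pos hR0.le]
      norm_num
    · rw [hu R, if_pos le_rfl, div_self hR0.ne', sub_self, Real.zero_rpow hm.ne']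
    · -- tendsto of deriv
      have h1 : Tendsto (fun s : ℝ => 1 - s / R) (𝓝[<] R) (𝓝 0) := by
        have hcont : Continuous fun s : ℝ => 1 - s / R := by continuity
        have h : Tendsto (fun s : ℝ => 1 - s / R) (𝓝[<] R) (𝓝 (1 - R / R)) :=
          (hcont.tendsto R).mono_left nhdsWithin_le_nhds
        simpa [div_self hR0.ne'] using h
      have h2 : ContinuousAt (fun x : ℝ => x ^ (p / (p - q - 1) - 1)) 0 :=
        Real.continuousAt_rpow_const _ _ (Or.inr (by linarith))
      have h3 := h2.tendsto.comp h1
      rw [Real.zero_rpow (by linarith : p / (p - q - 1) - 1 ≠ 0)] at h3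
      have h4 := (h3.const_mul (p / (p - q - 1))).mul_const (-(1 / R))
      rw [mul_zero, zero_mul] at h4
      refine Tendsto.congr' ?_ h4
      filter_upwards [self_mem_nhdsWithin] with s hs
      simp only [Function.comp_apply]
      exact ((hd s hs).deriv).symm
    · intro r hr
      obtain ⟨hr1, hr2⟩ := hr
      have hbr : (0:ℝ) < 1 - r / R := by
        have := (div_lt_one hR0).mpr hr2; linarith
      set E := (p / (p - q - 1) - 1) * (p - 1) with hE_def
      have hG : HasDerivAt
          (fun s : ℝ => -((p / (p - q - 1) * (1 / R)) ^ (p - 1) * (1 - s / R) ^ E))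
          (u r ^ q) r := by
        have h0 : HasDerivAt (fun x : ℝ => 1 - x / R) (-(1 / R)) r := by
          simpa using ((hasDerivAt_id r).div_const R).const_sub 1
        have h1 := ((hasDerivAt_rpow_comp E h0 hbr).const_mul
          ((p / (p - q - 1) * (1 / R)) ^ (p - 1))).neg
        refine h1.congr_deriv (Eq.symm ?_)
        rw [hu r, if_pos hr2.le, ← Real.rpow_mul hbr.le]
        have hEq : p / (p - q - 1) * q = E - 1 := by
          rw [hE_def]; field_simp; ring
        rw [hEq]
        have hnegE : E = (q + 1) / (p - q - 1) * (p - 1) := by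
          rw [hE_def, div_sub' ht.ne']; ring_nf
        have h2 : -((p / (p - q - 1) * (1 / R)) ^ (p - 1) * (E * (1 - r / R) ^ (E - 1) * -(1 / R)))
            = ((p / (p - q - 1) * (1 / R)) ^ (p - 1) * ((q + 1) / (p - q - 1) * (p - 1)) * (1 / R))
              * (1 - r / R) ^ (E - 1) := by
          rw [hnegE]; ring
        rw [h2, key_coeff hp ht hA hcR, one_mul]
      refine hG.congr_of_eventuallyEq ?_
      filter_upwards [Iio_mem_nhds hr2] with s hs
      show |deriv u s| ^ (p - 2) * deriv u s
        = -((p / (p - q - 1) * (1 / R)) ^ (p - 1) * (1 - s / R) ^ E)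
      rw [(hd s hs).deriv]
      have hbs : (0:ℝ) < 1 - s / R := by
        have := (div_lt_one hR0).mpr hs; linarith
      have hyrw : p / (p - q - 1) * (1 - s / R) ^ (p / (p - q - 1) - 1) * (-(1 / R))
          = -(p / (p - q - 1) * (1 / R) * (1 - s / R) ^ (p / (p - q - 1) - 1)) := by ring
      rw [hyrw]
      have hy : 0 < p / (p - q - 1) * (1 / R) * (1 - s / R) ^ (p / (p - q - 1) - 1) :=
        mul_pos (mul_pos hm (by positivity)) (Real.rpow_pos_of_pos hbs _)
      rw [abs_pow_mul_neg hy,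
        Real.mul_rpow (mul_pos hm (by positivity : (0:ℝ) < 1 / R)).le
          (Real.rpow_pos_of_pos hbs _).le,
        ← Real.rpow_mul hbs.le, ← hE_def]
  · intro hlt c hc u hu
    have hp0 : 0 < p := by linarith
    have hp1 : 0 < p - 1 := by linarith
    have ht : 0 < q + 1 - p := by linarith
    have hA : 0 < q + 1 := by linarith
    have hc0 : 0 < c := by
      rw [hc]
      exact div_pos (mul_pos (Real.rpow_pos_of_pos hp0 _) ht)
        (mul_pos (Real.rpow_pos_of_pos hp1 _) (Real.rpow_pos_of_pos hA _))
    have hm : 0 < p / (q + 1 - p) := div_pos hp0 ht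
    have hufun : u = fun r => (1 + c * r) ^ (-(p / (q + 1 - p))) := funext hu
    subst hufun
    refine ⟨by norm_num, ?_, ?_⟩
    · have h1 : Tendsto (fun r : ℝ => 1 + c * r) atTop atTop :=
        tendsto_atTop_add_const_left _ 1 (tendsto_id.const_mul_atTop hc0)
      exact (tendsto_rpow_neg_atTop hm).comp h1
    · intro r hr
      rw [mem_Ioi] at hr
      have hd : ∀ s : ℝ, 0 < s → HasDerivAt (fun x : ℝ => (1 + c * x) ^ (-(p / (q + 1 - p))))
          (-(p / (q + 1 - p)) * (1 + c * s) ^ (-(p / (q + 1 - p)) - 1) * c) s := by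
        intro s hs
        have hb : (0:ℝ) < 1 + c * s := by nlinarith
        have h0 : HasDerivAt (fun x : ℝ => 1 + c * x) c s := by
          simpa using ((hasDerivAt_id s).const_mul c).const_add 1
        exact hasDerivAt_rpow_comp _ h0 hb
      have hbr : (0:ℝ) < 1 + c * r := by nlinarith
      set E := (-(p / (q + 1 - p)) - 1) * (p - 1) with hE_def
      have hG : HasDerivAt
          (fun s : ℝ => -((p / (q + 1 - p) * c) ^ (p - 1) * (1 + c * s) ^ E))
          ((fun x : ℝ => (1 + c * x) ^ (-(p / (q + 1 - p)))) r ^ q) r := by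
        have h0 : HasDerivAt (fun x : ℝ => 1 + c * x) c r := by
          simpa using ((hasDerivAt_id r).const_mul c).const_add 1
        have h1 := ((hasDerivAt_rpow_comp E h0 hbr).const_mul
          ((p / (q + 1 - p) * c) ^ (p - 1))).neg
        refine h1.congr_deriv (Eq.symm ?_)
        beta_reduce
        rw [← Real.rpow_mul hbr.le]
        have hEq : -(p / (q + 1 - p)) * q = E - 1 := by
          rw [hE_def]; field_simp; ring
        rw [hEq]
        have hnegE : -E = (q + 1) / (q + 1 - p) * (p - 1) := by
          rw [hE_def]; field_simp; ring
        have h2 : -((p / (q + 1 - p) * c) ^ (p - 1) * (E * (1 + c * r) ^ (E - 1) * c))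
            = ((p / (q + 1 - p) * c) ^ (p - 1) * ((q + 1) / (q + 1 - p) * (p - 1)) * c)
              * (1 + c * r) ^ (E - 1) := by
          rw [← hnegE]; ring
        rw [h2, key_coeff hp ht hA hc, one_mul]
      refine hG.congr_of_eventuallyEq ?_
      filter_upwards [Ioi_mem_nhds hr] with s hs
      rw [mem_Ioi] at hs
      show |deriv (fun x : ℝ => (1 + c * x) ^ (-(p / (q + 1 - p)))) s| ^ (p - 2)
          * deriv (fun x : ℝ => (1 + c * x) ^ (-(p / (q + 1 - p)))) s
        = -((p / (q + 1 - p) * c) ^ (p - 1) * (1 + c * s) ^ E)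
      rw [(hd s hs).deriv]
      have hbs : (0:ℝ) < 1 + c * s := by nlinarith
      have hyrw : -(p / (q + 1 - p)) * (1 + c * s) ^ (-(p / (q + 1 - p)) - 1) * c
          = -(p / (q + 1 - p) * c * (1 + c * s) ^ (-(p / (q + 1 - p)) - 1)) := by ring
      rw [hyrw]
      have hy : 0 < p / (q + 1 - p) * c * (1 + c * s) ^ (-(p / (q + 1 - p)) - 1) :=
        mul_pos (mul_pos hm hc0) (Real.rpow_pos_of_pos hbs _)
      rw [abs_pow_mul_neg hy,
        Real.mul_rpow (mul_pos hm hc0).le (Real.rpow_pos_of_pos hbs _).le,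
        ← Real.rpow_mul hbs.le, ← hE_def]
end

section
/- Let d ≥ 1 be an integer and p, q, m real numbers with p > 1, 0 < q < p − 1, and m > q. Then there is no continuously differentiable function u : [0,∞) → ℝ such that u(r) > 0 and u'(r) ≤ 0 for all r ≥ 0, u'(0) = 0, lim_{r→∞} u(r) = 0, lim_{r→∞} u'(r) = 0, and the function r ↦ r^{d−1}|u'(r)|^{p−2}u'(r) is differentiable on (0,∞) with derivative r^{d−1}(u(r)^q − u(r)^m) at every r > 0. (Equivalently, every nonincreasing solution of Δ_p u + u^m = u^q with u'(0)=0 must vanish at some finite radius.) -/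
open Filter Set Topology MeasureTheory

set_option maxHeartbeats 1000000 in
/-- For `p > 1`, `0 < q < p-1`, `m > q`, every positive nonincreasing
`C¹` solution on `[0,∞)` of the radial generalized Lane-Emden equation
`Δ_p u + u^m = u^q` with `u'(0) = 0` must vanish at a finite radius: no such
everywhere-positive solution tending to `0` at infinity exists. -/
theorem stmt12 (d : ℕ) (hd : 1 ≤ d) (p q m : ℝ) (hp : 1 < p) (hq0 : 0 < q)
    (hq : q < p - 1) (hm : q < m) :
    ¬ ∃ u u' : ℝ → ℝ,
      (∀ r ∈ Ici (0:ℝ), HasDerivWithinAt u (u' r) (Ici 0) r) ∧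
      ContinuousOn u' (Ici 0) ∧
      (∀ r ∈ Ici (0:ℝ), 0 < u r) ∧
      (∀ r ∈ Ici (0:ℝ), u' r ≤ 0) ∧
      u' 0 = 0 ∧
      Tendsto u atTop (𝓝 0) ∧
      Tendsto u' atTop (𝓝 0) ∧
      (∀ r ∈ Ioi (0:ℝ),
        HasDerivAt (fun s => s ^ (d - 1) * |u' s| ^ (p - 2) * u' s)
          (r ^ (d - 1) * (u r ^ q - u r ^ m)) r) := by
  rintro ⟨u, u', hu, hc, hpos, hle, h0, hulim, hu'lim, heq⟩
  have hp0 : (0:ℝ) < p := by linarith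
  have hp1 : (0:ℝ) < p - 1 := by linarith
  have hq1 : (0:ℝ) < q + 1 := by linarith
  have hm1 : (0:ℝ) < m + 1 := by linarith
  have hmq : (0:ℝ) < m - q := by linarith
  set A : ℝ := (m + 1) / (2 * (q + 1)) with hA
  have hA0 : 0 < A := by positivity
  set δ : ℝ := min (1/2) (A ^ (1/(m-q))) with hδdef
  have hδ0 : 0 < δ := lt_min (by norm_num) (Real.rpow_pos_of_pos hA0 _)
  have hδ1 : δ ≤ 1/2 := min_le_left _ _
  have hδA : ∀ v : ℝ, 0 < v → v ≤ δ → v ^ (m-q) ≤ A := by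
    intro v hv hvδ
    calc v ^ (m-q) ≤ (A ^ (1/(m-q))) ^ (m-q) :=
          Real.rpow_le_rpow hv.le (hvδ.trans (min_le_right _ _)) hmq.le
      _ = A := by
          rw [← Real.rpow_mul hA0.le, one_div_mul_cancel hmq.ne', Real.rpow_one]
  -- choose R
  obtain ⟨R0, hR0⟩ : ∃ R0 : ℝ, ∀ r ≥ R0, u r < δ :=
    eventually_atTop.mp (hulim.eventually_lt_const hδ0)
  set R : ℝ := max R0 1 with hRdef
  have hR1 : (1:ℝ) ≤ R := le_max_right _ _
  have hRpos : (0:ℝ) < R := lt_of_lt_of_le one_pos hR1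
  have hRδ : ∀ r, R ≤ r → u r < δ := fun r hr => hR0 r ((le_max_left _ _).trans hr)
  have hRu1 : ∀ r, R ≤ r → u r < 1 := fun r hr => (hRδ r hr).trans_le (by linarith)
  have hrpos : ∀ r : ℝ, R ≤ r → 0 < r := fun r hr => hRpos.trans_le hr
  set g : ℝ → ℝ := fun s => s ^ (d - 1) * |u' s| ^ (p - 2) * u' s with hgdef
  set w : ℝ → ℝ := fun s => |u' s| ^ (p - 2) * u' s with hwdef
  -- g is nonpositive
  have hgle : ∀ r : ℝ, 0 ≤ r → g r ≤ 0 := by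
    intro r hr
    have h1 : 0 ≤ r ^ (d-1) * |u' r| ^ (p-2) := by positivity
    exact mul_nonpos_iff.2 (Or.inl ⟨h1, hle r hr⟩)
  -- g strictly monotone on [R, ∞)
  have hsm : StrictMonoOn g (Ici R) := by
    apply strictMonoOn_of_deriv_pos (convex_Ici R)
    · exact fun r hr => ((heq r (hrpos r hr)).continuousAt).continuousWithinAt
    · intro x hx
      rw [interior_Ici] at hx
      have hx0 : (0:ℝ) < x := hrpos x hx.le
      rw [(heq x hx0).deriv]
      have h1 : u x ^ m < u x ^ q :=
        Real.rpow_lt_rpow_of_exponent_gt (hpos x hx0.le) (hRu1 x hx.le) hm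
      have h2 : (0:ℝ) < x ^ (d-1) := pow_pos hx0 _
      exact mul_pos h2 (by linarith)
  have hu'neg : ∀ r, R ≤ r → u' r < 0 := by
    intro r hr
    have hg1 : g r < g (r+1) := hsm hr (by simp only [mem_Ici]; linarith) (lt_add_one r)
    have hgr : g r < 0 := lt_of_lt_of_le hg1 (hgle _ (by linarith [hrpos r hr]))
    rcases lt_or_eq_of_le (hle r (hrpos r hr).le) with h | h
    · exact h
    · exfalso
      have : g r = 0 := by simp [hgdef, h]
      linarith
  -- derivative of w
  have hwd : ∀ r : ℝ, 0 < r → HasDerivAt w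
      ((u r ^ q - u r ^ m) - ((d-1 : ℕ) : ℝ)/r * w r) r := by
    intro r hr
    have hrne : r ≠ 0 := hr.ne'
    have hg := heq r hr
    have hcpow : HasDerivAt (fun s : ℝ => s ^ (d-1)) (((d-1:ℕ):ℝ) * r ^ (d-1-1)) r := by
      simpa using hasDerivAt_pow (d-1) r
    have hpne : r ^ (d-1) ≠ 0 := pow_ne_zero _ hrne
    have hinv := hcpow.inv hpne
    have hmul := hinv.mul hg
    have heqw : (fun s : ℝ => (s ^ (d-1))⁻¹ * (s ^ (d-1) * |u' s| ^ (p-2) * u' s))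
        =ᶠ[𝓝 r] w := by
      filter_upwards [eventually_ne_nhds hrne] with s hs
      have : s ^ (d-1) ≠ 0 := pow_ne_zero _ hs
      field_simp [hwdef]
      ring
    have hfin := hmul.congr_of_eventuallyEq heqw.symm
    refine hfin.congr_deriv ?_
    symm
    have hgr : g r = r ^ (d-1) * w r := by
      simp [hgdef, hwdef, mul_assoc]
    rw [hgr]
    obtain ⟨e, rfl⟩ : ∃ e, d = e + 1 := ⟨d - 1, by omega⟩
    simp only [Nat.add_sub_cancel]
    rcases Nat.eq_zero_or_pos e with he | he
    · subst he; simp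
    · obtain ⟨f, rfl⟩ : ∃ f, e = f + 1 := ⟨e - 1, by omega⟩
      simp only [Nat.add_sub_cancel]
      simp only [Pi.inv_apply]
      field_simp
      ring
  -- w on [R, ∞)
  have hwval : ∀ r, R ≤ r → w r = -(-u' r) ^ (p-1) := by
    intro r hr
    have hu' := hu'neg r hr
    have ha : 0 < -u' r := neg_pos.2 hu'
    have habs : |u' r| = -u' r := abs_of_neg hu'
    calc w r = (-u' r) ^ (p-2) * u' r := by rw [hwdef]; simp [habs]
      _ = -((-u' r) ^ (p-2) * (-u' r) ^ (1:ℝ)) := by rw [Real.rpow_one]; ring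
      _ = -(-u' r) ^ (p-1) := by rw [← Real.rpow_add ha, show p-2+1 = p-1 by ring]
  -- energy
  set γ : ℝ := p / (p-1) with hγ
  set E : ℝ → ℝ := fun r =>
    (p-1)/p * (-(w r)) ^ γ - (u r)^(q+1)/(q+1) + (u r)^(m+1)/(m+1) with hEdef
  set c : ℝ := ((d-1 : ℕ) : ℝ) with hc'
  have hc0 : 0 ≤ c := Nat.cast_nonneg _
  have hE : ∀ r, R ≤ r → HasDerivAt E (-(c/r * (u' r * w r))) r := by
    intro r hr
    have hr0 : 0 < r := hrpos r hr
    have hu' := hu'neg r hr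
    have ha : 0 < -u' r := neg_pos.2 hu'
    have hwv := hwval r hr
    have hx : 0 < -(w r) := by rw [hwv, neg_neg]; exact Real.rpow_pos_of_pos ha _
    have h1 : HasDerivAt (fun s => -(w s))
        (-((u r ^ q - u r ^ m) - c/r * w r)) r := (hwd r hr0).neg
    have h2 : HasDerivAt (fun x : ℝ => x ^ γ) (γ * (-(w r)) ^ (γ - 1)) (-(w r)) :=
      Real.hasDerivAt_rpow_const (Or.inl hx.ne')
    have h3 := (h2.comp r h1).const_mul ((p-1)/p)
    have hur : HasDerivAt u (u' r) r := (hu r hr0.le).hasDerivAt (Ici_mem_nhds hr0)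
    have hune : u r ≠ 0 := (hpos r hr0.le).ne'
    have h4 : HasDerivAt (fun s => (u s)^(q+1)) ((q+1) * (u r)^(q+1-1) * u' r) r :=
      (Real.hasDerivAt_rpow_const (Or.inl hune)).comp r hur
    have h5 : HasDerivAt (fun s => (u s)^(m+1)) ((m+1) * (u r)^(m+1-1) * u' r) r :=
      (Real.hasDerivAt_rpow_const (Or.inl hune)).comp r hur
    have h6 := (h3.sub (h4.div_const (q+1))).add (h5.div_const (m+1))
    refine h6.congr_deriv ?_
    symm
    have hid1 : (-(w r)) ^ (γ - 1) = -u' r := by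
      rw [hwv, neg_neg, ← Real.rpow_mul ha.le]
      rw [show (p-1) * (γ - 1) = 1 by rw [hγ]; field_simp; ring, Real.rpow_one]
    rw [hid1]
    simp only [add_sub_cancel_right, Function.comp]
    rw [hγ]
    field_simp
    ring
  have hE'le : ∀ r, R ≤ r → -(c/r * (u' r * w r)) ≤ 0 := by
    intro r hr
    have hr0 : 0 < r := hrpos r hr
    have hu' := (hu'neg r hr).le
    have hw0 : w r ≤ 0 := by
      rw [hwval r hr]
      simp only [neg_nonpos]
      exact Real.rpow_nonneg (by linarith [hu'neg r hr]) _
    have : 0 ≤ u' r * w r := mul_nonneg_iff.2 (Or.inr ⟨hu', hw0⟩)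
    have : 0 ≤ c/r * (u' r * w r) := mul_nonneg (by positivity) this
    linarith
  have hant : AntitoneOn E (Ici R) := by
    apply antitoneOn_of_deriv_nonpos (convex_Ici R)
    · exact fun r hr => (hE r hr).continuousAt.continuousWithinAt
    · intro x hx
      rw [interior_Ici] at hx
      exact (hE x hx.le).differentiableAt.differentiableWithinAt
    · intro x hx
      rw [interior_Ici] at hx
      rw [(hE x hx.le).deriv]
      exact hE'le x hx.le
  -- tendsto of E
  have hEtend : Tendsto E atTop (𝓝 0) := by
    have hFeq : (fun r => (p-1)/p * (-u' r)^p - (u r)^(q+1)/(q+1) + (u r)^(m+1)/(m+1))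
        =ᶠ[atTop] E := by
      filter_upwards [Ici_mem_atTop R] with r hr
      have ha : 0 < -u' r := neg_pos.2 (hu'neg r hr)
      simp only [hEdef]
      rw [hwval r hr, neg_neg, ← Real.rpow_mul ha.le,
        show (p-1) * γ = p by rw [hγ]; field_simp]
    have t1 : Tendsto (fun r => -u' r) atTop (𝓝 0) := by
      simpa using hu'lim.neg
    have t2 : Tendsto (fun r => (-u' r)^p) atTop (𝓝 0) := by
      have := t1.rpow_const (Or.inr hp0.le)
      simpa [Real.zero_rpow hp0.ne'] using this
    have t3 : Tendsto (fun r => (u r)^(q+1)) atTop (𝓝 0) := by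
      have := hulim.rpow_const (Or.inr hq1.le)
      simpa [Real.zero_rpow hq1.ne'] using this
    have t4 : Tendsto (fun r => (u r)^(m+1)) atTop (𝓝 0) := by
      have := hulim.rpow_const (Or.inr hm1.le)
      simpa [Real.zero_rpow hm1.ne'] using this
    have := ((t2.const_mul ((p-1)/p)).sub (t3.div_const (q+1))).add (t4.div_const (m+1))
    refine Tendsto.congr' hFeq (by simpa using this)
  have hE0 : ∀ r, R ≤ r → 0 ≤ E r := by
    intro r hr
    refine le_of_tendsto hEtend ?_
    rw [eventually_atTop]
    exact ⟨r, fun s hs => hant (mem_Ici.2 hr) (mem_Ici.2 (hr.trans hs)) hs⟩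
  -- key differential inequality
  set β : ℝ := (q+1)/p with hβ
  set c2 : ℝ := p / (2*(p-1)*(q+1)) with hc2
  have hc2pos : 0 < c2 := by rw [hc2]; positivity
  set c1 : ℝ := c2 ^ (1/p) with hc1
  have hc1pos : 0 < c1 := Real.rpow_pos_of_pos hc2pos _
  have hkey : ∀ r, R ≤ r → c1 * (u r)^β ≤ -u' r := by
    intro r hr
    have hr0 : 0 < r := hrpos r hr
    have hv : 0 < u r := hpos r hr0.le
    have ha : 0 < -u' r := neg_pos.2 (hu'neg r hr)
    set v : ℝ := u r
    have hE0r := hE0 r hr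
    have hgam : (-(w r)) ^ γ = (-u' r) ^ p := by
      rw [hwval r hr, neg_neg, ← Real.rpow_mul ha.le,
        show (p-1) * γ = p by rw [hγ]; field_simp]
    rw [hEdef] at hE0r
    simp only at hE0r
    rw [hgam] at hE0r
    set P : ℝ := (-u' r) ^ p with hPdef
    set X : ℝ := v ^ (q+1) with hX
    have hXpos : 0 < X := Real.rpow_pos_of_pos hv _
    have hZ : v ^ (m+1) ≤ X * A := by
      rw [show m+1 = (q+1)+(m-q) by ring, Real.rpow_add hv]
      exact mul_le_mul_of_nonneg_left (hδA v hv (hRδ r hr).le) hXpos.le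
    have hZ2 : v ^ (m+1) / (m+1) ≤ X / (2*(q+1)) := by
      rw [div_le_div_iff₀ hm1 (by positivity)]
      calc v^(m+1) * (2*(q+1)) ≤ (X * A) * (2*(q+1)) := by nlinarith
        _ = X * (m+1) := by rw [hA]; field_simp
    have hP : c2 * X ≤ P := by
      have h7 : X/(2*(q+1)) ≤ (p-1)/p * P := by
        have : X/(q+1) - X/(2*(q+1)) = X/(2*(q+1)) := by field_simp; ring
        linarith
      rw [show c2 * X = (p/(p-1)) * (X/(2*(q+1))) by rw [hc2]; field_simp]
      calc (p/(p-1)) * (X/(2*(q+1))) ≤ (p/(p-1)) * ((p-1)/p * P) :=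
            mul_le_mul_of_nonneg_left h7 (by positivity)
        _ = (p/(p-1) * ((p-1)/p)) * P := by ring
        _ = P := by
            have hone : p/(p-1) * ((p-1)/p) = 1 := by field_simp
            rw [hone, one_mul]
    have h8 : (c2 * X) ^ (1/p) ≤ P ^ (1/p) :=
      Real.rpow_le_rpow (mul_nonneg hc2pos.le hXpos.le) hP (one_div_nonneg.2 hp0.le)
    have h9 : P ^ (1/p) = -u' r := by
      rw [hPdef, ← Real.rpow_mul ha.le, mul_one_div, div_self hp0.ne', Real.rpow_one]
    have h10 : (c2 * X) ^ (1/p) = c1 * v ^ β := by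
      rw [Real.mul_rpow hc2pos.le hXpos.le, hc1, hX, ← Real.rpow_mul hv.le,
        mul_one_div, hβ]
    rw [← h9, ← h10]
    exact h8
  -- finish
  have hβ1 : 0 < 1 - β := by
    rw [hβ, sub_pos, div_lt_one hp0]; linarith
  set K : ℝ := (1-β) * c1 with hK
  have hKpos : 0 < K := mul_pos hβ1 hc1pos
  set φ : ℝ → ℝ := fun r => (u r)^(1-β) + K * r with hφdef
  have hφd : ∀ r, R ≤ r → HasDerivAt φ ((1-β) * (u r)^(1-β-1) * u' r + K) r := by
    intro r hr
    have hr0 : 0 < r := hrpos r hr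
    have hur : HasDerivAt u (u' r) r := (hu r hr0.le).hasDerivAt (Ici_mem_nhds hr0)
    have h1 : HasDerivAt (fun s => (u s)^(1-β)) ((1-β) * (u r)^(1-β-1) * u' r) r :=
      (Real.hasDerivAt_rpow_const (Or.inl (hpos r hr0.le).ne')).comp r hur
    have h2 : HasDerivAt (fun s : ℝ => K * s) K r := by
      simpa using (hasDerivAt_id r).const_mul K
    exact h1.add h2
  have hφ'le : ∀ r, R ≤ r → (1-β) * (u r)^(1-β-1) * u' r + K ≤ 0 := by
    intro r hr
    have hv : 0 < u r := hpos r (hrpos r hr).le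
    have hk := hkey r hr
    have hexp : (1:ℝ)-β-1 = -β := by ring
    have hnn : 0 ≤ (1-β) * (u r)^(1-β-1) := by positivity
    have h1 : (1-β) * (u r)^(1-β-1) * u' r ≤ (1-β) * (u r)^(1-β-1) * (-(c1 * (u r)^β)) :=
      mul_le_mul_of_nonneg_left (by linarith) hnn
    have h2 : (1-β) * (u r)^(1-β-1) * (-(c1 * (u r)^β)) = -K := by
      rw [hexp, hK]
      have : (u r)^(-β) * (u r)^β = 1 := by
        rw [← Real.rpow_add hv, neg_add_cancel, Real.rpow_zero]
      nlinarith [this]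
    linarith
  have hantφ : AntitoneOn φ (Ici R) := by
    apply antitoneOn_of_deriv_nonpos (convex_Ici R)
    · exact fun r hr => (hφd r hr).continuousAt.continuousWithinAt
    · intro x hx
      rw [interior_Ici] at hx
      exact (hφd x hx.le).differentiableAt.differentiableWithinAt
    · intro x hx
      rw [interior_Ici] at hx
      rw [(hφd x hx.le).deriv]
      exact hφ'le x hx.le
  set M : ℝ := (u R)^(1-β) with hM
  have hMpos : 0 < M := Real.rpow_pos_of_pos (hpos R hRpos.le) _
  set r1 : ℝ := R + M/K + 1 with hr1
  have hRr1 : R ≤ r1 := by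
    have : 0 < M/K := by positivity
    rw [hr1]; linarith
  have hφle := hantφ (mem_Ici.2 le_rfl) (mem_Ici.2 hRr1) hRr1
  rw [hφdef] at hφle
  simp only at hφle
  have hKM : K * (M/K) = M := by field_simp
  have hu1pos : 0 < (u r1)^(1-β) := Real.rpow_pos_of_pos (hpos r1 (hRpos.trans_le hRr1).le) _
  have : (u r1)^(1-β) + K * r1 ≤ M + K * R := hφle
  rw [hr1] at this
  nlinarith [this, hKM, hKpos]
end

section
/- Let d ≥ 1 be an integer, p > 1, q ≥ 0, m ≥ 0 real numbers, and 0 < R < ∞. Suppose u : [0,R] → ℝ is continuously differentiable, nonnegative, with u'(0) = 0 and u(R) = 0, and that the function r ↦ |u'(r)|^{p−2}u'(r) is differentiable on (0,R) with (|u'|^{p−2}u')'(r) + ((d−1)/r)|u'(r)|^{p−2}u'(r) + u(r)^m = u(r)^q for every r ∈ (0,R). Then ((d(p−1)+p)/p) ∫_0^R r^{d−1}|u'(r)|^p dr − (dm/(m+1)) ∫_0^R r^{d−1} u(r)^{m+1} dr + (dq/(q+1)) ∫_0^R r^{d−1} u(r)^{q+1} dr = ((p−1)/p) · R^d · |u'(R)|^p.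 -/
open Filter Set Topology MeasureTheory


private lemma aux_tendsto {e : ℝ} (he : 0 < e) :
    Tendsto (fun t : ℝ => |t| ^ e) (𝓝 0) (𝓝 0) := by
  have h1 : ContinuousAt (fun x : ℝ => x ^ e) 0 :=
    Real.continuousAt_rpow_const 0 e (Or.inr he.le)
  have h2 : Tendsto (fun t : ℝ => |t|) (𝓝 0) (𝓝 0) := by
    simpa using continuous_abs.tendsto (0 : ℝ)
  have h3 := h1.tendsto.comp h2
  simpa [Real.zero_rpow he.ne', Function.comp_def] using h3

private lemma aux_cont {p : ℝ} (hp : 1 < p) :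
    Continuous (fun x : ℝ => |x| ^ (p - 2) * x) := by
  rw [continuous_iff_continuousAt]
  intro x
  rcases eq_or_ne x 0 with rfl | hx
  · have hb : ∀ t : ℝ, ‖|t| ^ (p - 2) * t‖ ≤ |t| ^ (p - 1) := by
      intro t
      rcases eq_or_ne t 0 with rfl | ht
      · simp [Real.zero_rpow (by linarith : p - 1 ≠ 0)]
      · have : ‖|t| ^ (p - 2) * t‖ = |t| ^ (p - 2) * |t| := by
          rw [Real.norm_eq_abs, abs_mul, abs_of_nonneg (Real.rpow_nonneg (abs_nonneg t) _)]
        rw [this, ← Real.rpow_add_one (abs_ne_zero.mpr ht), show p - 2 + 1 = p - 1 by ring]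
    have h0 : Tendsto (fun t : ℝ => |t| ^ (p - 2) * t) (𝓝 0) (𝓝 0) :=
      squeeze_zero_norm hb (aux_tendsto (by linarith))
    simpa [ContinuousAt] using h0
  · exact (continuous_abs.continuousAt.rpow_const
      (Or.inl (abs_ne_zero.mpr hx))).mul continuousAt_id

private lemma aux_deriv_abs {c : ℝ} (hc : 1 < c) (x : ℝ) :
    HasDerivAt (fun t : ℝ => |t| ^ c) (c * |x| ^ (c - 2) * x) x := by
  rcases lt_trichotomy x 0 with hx | rfl | hx
  · have hne : (-x : ℝ) ≠ 0 := ne_of_gt (by linarith)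
    have h1 : HasDerivAt (fun t : ℝ => (-t) ^ c) ((c * (-x) ^ (c - 1)) * (-1)) x :=
      (Real.hasDerivAt_rpow_const (x := -x) (p := c) (Or.inl hne)).comp x (hasDerivAt_neg' x)
    have h2 : (fun t : ℝ => |t| ^ c) =ᶠ[𝓝 x] fun t => (-t) ^ c := by
      filter_upwards [Iio_mem_nhds hx] with t ht
      rw [abs_of_neg ht]
    have h3 := h1.congr_of_eventuallyEq h2
    convert h3 using 1
    · rfl
    · rfl
    rw [abs_of_neg hx, show c - 1 = (c - 2) + 1 by ring, Real.rpow_add_one hne]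
    ring
  · have h0 : HasDerivAt (fun t : ℝ => |t| ^ c) 0 0 := by
      rw [hasDerivAt_iff_tendsto_slope]
      apply squeeze_zero_norm' (a := fun t : ℝ => |t| ^ (c - 1))
      · filter_upwards [self_mem_nhdsWithin] with t (ht : t ≠ 0)
        have : slope (fun t : ℝ => |t| ^ c) 0 t = |t| ^ c / t := by
          simp [slope_def_field, Real.zero_rpow (by linarith : c ≠ 0)]
        rw [this, Real.norm_eq_abs, abs_div, abs_of_nonneg (Real.rpow_nonneg (abs_nonneg t) _),
          show c = (c - 1) + 1 by ring, Real.rpow_add_one (abs_ne_zero.mpr ht)]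
        rw [mul_div_assoc, div_self (abs_ne_zero.mpr ht), mul_one,
          show c - 1 + 1 - 1 = c - 1 by ring]
      · exact (aux_tendsto (by linarith)).mono_left nhdsWithin_le_nhds
    convert h0 using 1
    simp
  · have hne : (x : ℝ) ≠ 0 := ne_of_gt hx
    have h1 : HasDerivAt (fun t : ℝ => t ^ c) (c * x ^ (c - 1)) x :=
      Real.hasDerivAt_rpow_const (Or.inl hne)
    have h2 : (fun t : ℝ => |t| ^ c) =ᶠ[𝓝 x] fun t => t ^ c := by
      filter_upwards [Ioi_mem_nhds hx] with t ht
      rw [abs_of_pos ht]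
    have h3 := h1.congr_of_eventuallyEq h2
    convert h3 using 1
    · rfl
    · rfl
    rw [abs_of_pos hx, show c - 1 = (c - 2) + 1 by ring, Real.rpow_add_one hne]
    ring

private lemma aux_mul_self {p : ℝ} (hp : 1 < p) (x : ℝ) :
    (|x| ^ (p - 2) * x) * x = |x| ^ p := by
  rcases eq_or_ne x 0 with rfl | hx
  · simp [Real.zero_rpow (by linarith : p ≠ 0)]
  · have hax : |x| ≠ 0 := abs_ne_zero.mpr hx
    have hxx : x * x = |x| * |x| := (abs_mul_abs_self x).symm
    calc (|x| ^ (p - 2) * x) * x = |x| ^ (p - 2) * (|x| * |x|) := by rw [mul_assoc, hxx]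
    _ = |x| ^ p := by
        rw [← mul_assoc, ← Real.rpow_add_one hax, ← Real.rpow_add_one hax,
          show p - 2 + 1 + 1 = p by ring]

private lemma aux_abs_w {p : ℝ} (hp : 1 < p) (x : ℝ) :
    |(|x| ^ (p - 2) * x)| = |x| ^ (p - 1) := by
  rcases eq_or_ne x 0 with rfl | hx
  · simp [Real.zero_rpow (by linarith : p - 1 ≠ 0)]
  · rw [abs_mul, abs_of_nonneg (Real.rpow_nonneg (abs_nonneg x) _),
      ← Real.rpow_add_one (abs_ne_zero.mpr hx), show p - 2 + 1 = p - 1 by ring]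

private lemma aux_w_pow {p : ℝ} (hp : 1 < p) (x : ℝ) :
    |(|x| ^ (p - 2) * x)| ^ (p / (p - 1)) = |x| ^ p := by
  rw [aux_abs_w hp, ← Real.rpow_mul (abs_nonneg x),
    show (p - 1) * (p / (p - 1)) = p by
      have h1 : p - 1 ≠ 0 := by linarith
      field_simp]

private lemma aux_phi2 {p : ℝ} (hp : 1 < p) (x : ℝ) :
    |(|x| ^ (p - 2) * x)| ^ (p / (p - 1) - 2) * (|x| ^ (p - 2) * x) = x := by
  rcases eq_or_ne x 0 with rfl | hx
  · simp
  · have h1 : p - 1 ≠ 0 := by linarith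
    have hax : (0:ℝ) < |x| := abs_pos.mpr hx
    rw [aux_abs_w hp, ← Real.rpow_mul (abs_nonneg x),
      show (p - 1) * (p / (p - 1) - 2) = 2 - p by field_simp; ring,
      ← mul_assoc, ← Real.rpow_add hax]
    norm_num

private lemma aux_rpow_succ {x e : ℝ} (he : e + 1 ≠ 0) : x ^ e * x = x ^ (e + 1) := by
  rcases eq_or_ne x 0 with rfl | hx
  · simp [Real.zero_rpow he]
  · rw [Real.rpow_add_one hx]

/-- Pohozaev-type identity for solutions of the radial generalized
Lane-Emden equation `Δ_p u + u^m = u^q` on `(0,R)`, relating the auxiliary energy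
functional to the contact angle `|u'(R)|` at the free boundary. -/
theorem stmt13 (d : ℕ) (hd : 1 ≤ d) (p q m R : ℝ) (hp : 1 < p) (hq : 0 ≤ q)
    (hm : 0 ≤ m) (hR : 0 < R)
    (u u' : ℝ → ℝ)
    (hderiv : ∀ r ∈ Icc (0:ℝ) R, HasDerivWithinAt u (u' r) (Icc 0 R) r)
    (hc : ContinuousOn u' (Icc 0 R))
    (hnn : ∀ r ∈ Icc (0:ℝ) R, 0 ≤ u r)
    (h0 : u' 0 = 0)
    (huR : u R = 0)
    (hode : ∀ r ∈ Ioo (0:ℝ) R,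
      HasDerivAt (fun s => |u' s| ^ (p - 2) * u' s)
        (u r ^ q - u r ^ m - (((d : ℝ) - 1) / r) * (|u' r| ^ (p - 2) * u' r)) r) :
    (((d : ℝ) * (p - 1) + p) / p) * (∫ r in Ioo (0:ℝ) R, r ^ (d - 1) * |u' r| ^ p)
      - (((d : ℝ) * m) / (m + 1)) * (∫ r in Ioo (0:ℝ) R, r ^ (d - 1) * u r ^ (m + 1))
      + (((d : ℝ) * q) / (q + 1)) * (∫ r in Ioo (0:ℝ) R, r ^ (d - 1) * u r ^ (q + 1))
    = ((p - 1) / p) * R ^ d * |u' R| ^ p := by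
  have hp0 : p ≠ 0 := by linarith
  have hp1 : p - 1 ≠ 0 := by linarith
  have hm1 : m + 1 ≠ 0 := by linarith
  have hq1 : q + 1 ≠ 0 := by linarith
  set c : ℝ := p / (p - 1) with hcdef
  have hc1 : 1 < c := by
    rw [hcdef, lt_div_iff₀ (by linarith : (0:ℝ) < p - 1)]
    linarith
  set w : ℝ → ℝ := fun s => |u' s| ^ (p - 2) * u' s with hwdef
  set k : ℕ := d - 1 with hkdef
  have hdk : k + 1 = d := Nat.succ_pred_eq_of_pos hd
  have hkc : (k : ℝ) = (d : ℝ) - 1 := by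
    have h := congrArg (Nat.cast : ℕ → ℝ) hdk
    push_cast at h
    linarith
  -- continuity facts
  have hu_cont : ContinuousOn u (Icc 0 R) := fun r hr => (hderiv r hr).continuousWithinAt
  have hw_cont : ContinuousOn w (Icc 0 R) := (aux_cont hp).comp_continuousOn hc
  have hA0 : ContinuousOn (fun r : ℝ => |u' r| ^ p) (Icc 0 R) :=
    hc.abs.rpow_const fun r _ => Or.inr (by linarith)
  have hB0 : ContinuousOn (fun r : ℝ => u r ^ (m + 1)) (Icc 0 R) :=
    hu_cont.rpow_const fun r _ => Or.inr (by linarith)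
  have hC0 : ContinuousOn (fun r : ℝ => u r ^ (q + 1)) (Icc 0 R) :=
    hu_cont.rpow_const fun r _ => Or.inr (by linarith)
  have hA_cont : ContinuousOn (fun r : ℝ => r ^ k * |u' r| ^ p) (Icc 0 R) :=
    (continuous_pow k).continuousOn.mul hA0
  have hB_cont : ContinuousOn (fun r : ℝ => r ^ k * u r ^ (m + 1)) (Icc 0 R) :=
    (continuous_pow k).continuousOn.mul hB0
  have hC_cont : ContinuousOn (fun r : ℝ => r ^ k * u r ^ (q + 1)) (Icc 0 R) :=
    (continuous_pow k).continuousOn.mul hC0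
  have hintA : IntegrableOn (fun r : ℝ => r ^ k * |u' r| ^ p) (Ioo 0 R) :=
    (hA_cont.integrableOn_Icc).mono_set Ioo_subset_Icc_self
  have hintB : IntegrableOn (fun r : ℝ => r ^ k * u r ^ (m + 1)) (Ioo 0 R) :=
    (hB_cont.integrableOn_Icc).mono_set Ioo_subset_Icc_self
  have hintC : IntegrableOn (fun r : ℝ => r ^ k * u r ^ (q + 1)) (Ioo 0 R) :=
    (hC_cont.integrableOn_Icc).mono_set Ioo_subset_Icc_self
  have hu' : ∀ r ∈ Ioo (0:ℝ) R, HasDerivAt u (u' r) r := fun r hr =>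
    (hderiv r (Ioo_subset_Icc_self hr)).hasDerivAt (Icc_mem_nhds hr.1 hr.2)
  -- FTC part 1
  have hF1d : ∀ r ∈ Ioo (0:ℝ) R, HasDerivAt (fun s => (s ^ k * w s) * u s)
      (r ^ k * u r ^ (q + 1) - r ^ k * u r ^ (m + 1) + r ^ k * |u' r| ^ p) r := by
    intro r hr
    have hr0 : (r : ℝ) ≠ 0 := ne_of_gt hr.1
    have hWd := (hasDerivAt_pow k r).mul (hode r hr)
    have hprod := hWd.mul (hu' r hr)
    convert hprod using 1
    · rfl
    · rfl
    · rfl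
    have hcancel : ((k : ℝ)) * r ^ (k - 1) = r ^ k * (((d:ℝ) - 1) / r) := by
      rw [← hkc]
      rcases Nat.eq_zero_or_pos k with hk0 | hk0
      · simp [hk0]
      · have hk1 : r ^ (k - 1) * r = r ^ k := by
          rw [← pow_succ, Nat.sub_add_cancel hk0]
        rw [← hk1]
        field_simp
    have h1 : (|u' r| ^ (p - 2) * u' r) * u' r = |u' r| ^ p := aux_mul_self hp (u' r)
    have h2 : u r ^ q * u r = u r ^ (q + 1) := aux_rpow_succ hq1
    have h3 : u r ^ m * u r = u r ^ (m + 1) := aux_rpow_succ hm1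
    have hwr : w r = |u' r| ^ (p - 2) * u' r := rfl
    simp only [Pi.mul_apply, hwr]
    linear_combination (-(r:ℝ) ^ k) * h2 + ((r:ℝ) ^ k) * h3 + (-(r:ℝ) ^ k) * h1
      + (-((|u' r| ^ (p - 2) * u' r) * u r)) * hcancel
  have hF1cont : ContinuousOn (fun s => (s ^ k * w s) * u s) (Icc 0 R) :=
    ((continuous_pow k).continuousOn.mul hw_cont).mul hu_cont
  have hg1int : IntervalIntegrable
      (fun r => r ^ k * u r ^ (q + 1) - r ^ k * u r ^ (m + 1) + r ^ k * |u' r| ^ p)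
      volume 0 R := by
    apply ContinuousOn.intervalIntegrable
    rw [uIcc_of_le hR.le]
    exact (hC_cont.sub hB_cont).add hA_cont
  have hFTC1 : (∫ r in Ioo (0:ℝ) R,
      (r ^ k * u r ^ (q + 1) - r ^ k * u r ^ (m + 1) + r ^ k * |u' r| ^ p)) = 0 := by
    rw [← integral_Ioc_eq_integral_Ioo, ← intervalIntegral.integral_of_le hR.le,
      intervalIntegral.integral_eq_sub_of_hasDerivAt_of_le hR.le hF1cont hF1d hg1int]
    have hw0 : w 0 = 0 := by
      simp [hwdef, h0]
    simp [huR, hw0]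
  have hsplit1 : (∫ r in Ioo (0:ℝ) R,
      (r ^ k * u r ^ (q + 1) - r ^ k * u r ^ (m + 1) + r ^ k * |u' r| ^ p))
      = (∫ r in Ioo (0:ℝ) R, r ^ k * u r ^ (q + 1))
        - (∫ r in Ioo (0:ℝ) R, r ^ k * u r ^ (m + 1))
        + (∫ r in Ioo (0:ℝ) R, r ^ k * |u' r| ^ p) := by
    have hCB : IntegrableOn
        (fun r : ℝ => r ^ k * u r ^ (q + 1) - r ^ k * u r ^ (m + 1)) (Ioo 0 R) :=
      hintC.sub hintB
    rw [integral_add hCB hintA, integral_sub hintC hintB]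
  -- FTC part 2
  set c1 : ℝ := (d : ℝ) * (p - 1) / p - ((d : ℝ) - 1) with hc1def
  set c2 : ℝ := (d : ℝ) / (m + 1) with hc2def
  set c3 : ℝ := (d : ℝ) / (q + 1) with hc3def
  set G : ℝ → ℝ := fun s =>
    ((p - 1) / p) * |u' s| ^ p + u s ^ (m + 1) / (m + 1) - u s ^ (q + 1) / (q + 1) with hGdef
  have hF2d : ∀ r ∈ Ioo (0:ℝ) R, HasDerivAt (fun s => s ^ (k + 1) * G s)
      (c1 * (r ^ k * |u' r| ^ p) + c2 * (r ^ k * u r ^ (m + 1))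
        - c3 * (r ^ k * u r ^ (q + 1))) r := by
    intro r hr
    have hr0 : (r : ℝ) ≠ 0 := ne_of_gt hr.1
    have hu'r := hu' r hr
    have hwd := hode r hr
    have hA1 : HasDerivAt (fun s => |u' s| ^ p)
        ((c * |w r| ^ (c - 2) * w r)
          * (u r ^ q - u r ^ m - (((d:ℝ) - 1) / r) * (|u' r| ^ (p - 2) * u' r))) r := by
      have hcomp : HasDerivAt (fun s => |w s| ^ c)
          ((c * |w r| ^ (c - 2) * w r)
            * (u r ^ q - u r ^ m - (((d:ℝ) - 1) / r) * (|u' r| ^ (p - 2) * u' r))) r :=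
        (aux_deriv_abs hc1 (w r)).comp r hwd
      have hfun : (fun s => |w s| ^ c) = fun s => |u' s| ^ p := by
        funext s
        rw [hwdef, hcdef]
        exact aux_w_pow hp (u' s)
      rw [← hfun]
      exact hcomp
    have hBd : HasDerivAt (fun s => u s ^ (m + 1)) ((m + 1) * u r ^ m * u' r) r := by
      have h := (Real.hasDerivAt_rpow_const (x := u r) (p := m + 1)
        (Or.inr (by linarith))).comp r hu'r
      rw [show m + 1 - 1 = m by ring] at h
      exact h
    have hCd : HasDerivAt (fun s => u s ^ (q + 1)) ((q + 1) * u r ^ q * u' r) r := by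
      have h := (Real.hasDerivAt_rpow_const (x := u r) (p := q + 1)
        (Or.inr (by linarith))).comp r hu'r
      rw [show q + 1 - 1 = q by ring] at h
      exact h
    have hGd : HasDerivAt G
        (((p - 1) / p) * ((c * |w r| ^ (c - 2) * w r)
            * (u r ^ q - u r ^ m - (((d:ℝ) - 1) / r) * (|u' r| ^ (p - 2) * u' r)))
          + ((m + 1) * u r ^ m * u' r) / (m + 1) - ((q + 1) * u r ^ q * u' r) / (q + 1)) r :=
      ((hA1.const_mul ((p - 1) / p)).add (hBd.div_const (m + 1))).sub (hCd.div_const (q + 1))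
    have hphi : |w r| ^ (c - 2) * w r = u' r := by
      rw [hwdef, hcdef]
      exact aux_phi2 hp (u' r)
    have hGd' : HasDerivAt G (-(((d:ℝ) - 1) / r) * |u' r| ^ p) r := by
      convert hGd using 1
      rw [mul_assoc c, hphi, hcdef,
        show |u' r| ^ p = (|u' r| ^ (p - 2) * u' r) * u' r from (aux_mul_self hp (u' r)).symm]
      field_simp
      ring
    have hprod := (hasDerivAt_pow (k + 1) r).mul hGd'
    convert hprod using 1
    · rfl
    · rfl
    · rfl
    simp only [Nat.add_sub_cancel, hGdef]
    push_cast
    rw [hkc, hc1def, hc2def, hc3def]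
    have hpow : r ^ (k + 1) = r ^ k * r := pow_succ r k
    rw [hpow]
    field_simp
    ring
  have hF2cont : ContinuousOn (fun s => s ^ (k + 1) * G s) (Icc 0 R) := by
    apply (continuous_pow (k + 1)).continuousOn.mul
    rw [hGdef]
    exact ((continuousOn_const.mul hA0).add (hB0.div_const _)).sub (hC0.div_const _)
  have hg2int : IntervalIntegrable
      (fun r => c1 * (r ^ k * |u' r| ^ p) + c2 * (r ^ k * u r ^ (m + 1))
        - c3 * (r ^ k * u r ^ (q + 1))) volume 0 R := by
    apply ContinuousOn.intervalIntegrable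
    rw [uIcc_of_le hR.le]
    exact ((continuousOn_const.mul hA_cont).add
      (continuousOn_const.mul hB_cont)).sub (continuousOn_const.mul hC_cont)
  have hFTC2 : (∫ r in Ioo (0:ℝ) R,
      (c1 * (r ^ k * |u' r| ^ p) + c2 * (r ^ k * u r ^ (m + 1))
        - c3 * (r ^ k * u r ^ (q + 1))))
      = ((p - 1) / p) * R ^ d * |u' R| ^ p := by
    rw [← integral_Ioc_eq_integral_Ioo, ← intervalIntegral.integral_of_le hR.le,
      intervalIntegral.integral_eq_sub_of_hasDerivAt_of_le hR.le hF2cont hF2d hg2int]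
    simp only [hGdef, huR, Real.zero_rpow hm1, Real.zero_rpow hq1, zero_div, add_zero,
      sub_zero, ne_eq, Nat.succ_ne_zero, not_false_iff, zero_pow, zero_mul, sub_zero]
    rw [hdk]
    ring
  have hsplit2 : (∫ r in Ioo (0:ℝ) R,
      (c1 * (r ^ k * |u' r| ^ p) + c2 * (r ^ k * u r ^ (m + 1))
        - c3 * (r ^ k * u r ^ (q + 1))))
      = c1 * (∫ r in Ioo (0:ℝ) R, r ^ k * |u' r| ^ p)
        + c2 * (∫ r in Ioo (0:ℝ) R, r ^ k * u r ^ (m + 1))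
        - c3 * (∫ r in Ioo (0:ℝ) R, r ^ k * u r ^ (q + 1)) := by
    have hP1 : IntegrableOn (fun r : ℝ => c1 * (r ^ k * |u' r| ^ p)) (Ioo 0 R) :=
      hintA.const_mul c1
    have hP2 : IntegrableOn (fun r : ℝ => c2 * (r ^ k * u r ^ (m + 1))) (Ioo 0 R) :=
      hintB.const_mul c2
    have hP3 : IntegrableOn (fun r : ℝ => c3 * (r ^ k * u r ^ (q + 1))) (Ioo 0 R) :=
      hintC.const_mul c3
    have hP12 : IntegrableOn (fun r : ℝ => c1 * (r ^ k * |u' r| ^ p)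
        + c2 * (r ^ k * u r ^ (m + 1))) (Ioo 0 R) := hP1.add hP2
    rw [integral_sub hP12 hP3, integral_add hP1 hP2,
      integral_const_mul, integral_const_mul, integral_const_mul]
  -- assemble
  set I : ℝ := ∫ r in Ioo (0:ℝ) R, r ^ k * |u' r| ^ p with hIdef
  set Jm : ℝ := ∫ r in Ioo (0:ℝ) R, r ^ k * u r ^ (m + 1) with hJmdef
  set Jq : ℝ := ∫ r in Ioo (0:ℝ) R, r ^ k * u r ^ (q + 1) with hJqdef
  have h1 : Jq - Jm + I = 0 := by rw [← hsplit1]; exact hFTC1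
  have h2 : c1 * I + c2 * Jm - c3 * Jq = ((p - 1) / p) * R ^ d * |u' R| ^ p := by
    rw [← hsplit2]; exact hFTC2
  have key : ((d : ℝ) * (p - 1) + p) / p * I - (d : ℝ) * m / (m + 1) * Jm
      + (d : ℝ) * q / (q + 1) * Jq
      = (c1 * I + c2 * Jm - c3 * Jq) + (d : ℝ) * (Jq - Jm + I) := by
    rw [hc1def, hc2def, hc3def]
    field_simp
    ring
  rw [key, h1, mul_zero, add_zero]
  exact h2
end

section
/- Let d ≥ 1 be an integer, p > 1, α > 1 and R > 0 real numbers. Define H(r) = (R^{p/(p−1)} − r^{p/(p−1)})^α for 0 ≤ r ≤ R, A = (p−1)(α−1)(p/(p−1))^p α^{p−1} R^{p/(p−1)}, and B = (d + p(α−1))(p/(p−1))^{p−1} α^{p−1}. Then for every r ∈ (0,R), the function s ↦ |H'(s)|^{p−2}H'(s) is differentiable at r and (|H'|^{p−2}H')'(r) + ((d−1)/r)|H'(r)|^{p−2}H'(r) = A · H(r)^{((α−1)(p−1)−1)/α} − B · H(r)^{((α−1)(p−1))/α}. -/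
open Filter Set Topology MeasureTheory

/-- The Barenblatt-type profile
`H(r) = (R^{p/(p-1)} - r^{p/(p-1)})^α` satisfies
`Δ_p H = A H^{((α-1)(p-1)-1)/α} - B H^{((α-1)(p-1))/α}` in radial form on `(0,R)`. -/
theorem stmt16 (d : ℕ) (hd : 1 ≤ d) (p α R : ℝ) (hp : 1 < p) (hα : 1 < α) (hR : 0 < R)
    (H : ℝ → ℝ) (A B : ℝ)
    (hH : ∀ r ∈ Icc (0:ℝ) R, H r = (R ^ (p / (p - 1)) - r ^ (p / (p - 1))) ^ α)
    (hA : A = (p - 1) * (α - 1) * (p / (p - 1)) ^ p * α ^ (p - 1) * R ^ (p / (p - 1)))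
    (hB : B = ((d : ℝ) + p * (α - 1)) * (p / (p - 1)) ^ (p - 1) * α ^ (p - 1)) :
    ∀ r ∈ Ioo (0:ℝ) R, DifferentiableAt ℝ H r ∧
      HasDerivAt (fun s => |deriv H s| ^ (p - 2) * deriv H s)
        (A * H r ^ (((α - 1) * (p - 1) - 1) / α) - B * H r ^ ((α - 1) * (p - 1) / α)
          - (((d : ℝ) - 1) / r) * (|deriv H r| ^ (p - 2) * deriv H r)) r := by
  have hp1 : (0:ℝ) < p - 1 := by linarith
  set β : ℝ := p / (p - 1) with hβ
  have hβ1 : 1 < β := by rw [hβ, lt_div_iff₀ hp1]; linarith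
  have hβ0 : (0:ℝ) < β := by linarith
  have hα0 : (0:ℝ) < α := by linarith
  set k : ℝ := (α - 1) * (p - 1) with hk
  set c : ℝ := (α * β) ^ (p - 1) with hc
  -- positivity of W on Ioo
  have hWpos : ∀ s ∈ Ioo (0:ℝ) R, 0 < R ^ β - s ^ β := by
    intro s hs
    have := Real.rpow_lt_rpow hs.1.le hs.2 hβ0
    linarith
  -- derivative of the inner function
  have hinner : ∀ s : ℝ, s ≠ 0 →
      HasDerivAt (fun t : ℝ => R ^ β - t ^ β) (-(β * s ^ (β - 1))) s := by
    intro s hs0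
    have h1 : HasDerivAt (fun t : ℝ => t ^ β) (β * s ^ (β - 1)) s :=
      Real.hasDerivAt_rpow_const (Or.inl hs0)
    exact h1.const_sub (R ^ β)
  -- derivative of H on Ioo
  have hDeriv : ∀ s ∈ Ioo (0:ℝ) R,
      HasDerivAt H (-(α * β) * s ^ (β - 1) * (R ^ β - s ^ β) ^ (α - 1)) s := by
    intro s hs
    have hne : R ^ β - s ^ β ≠ 0 := ne_of_gt (hWpos s hs)
    have h2 := (hinner s (ne_of_gt hs.1)).rpow_const (p := α) (Or.inl hne)
    have hEq : H =ᶠ[nhds s] fun t => (R ^ β - t ^ β) ^ α := by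
      filter_upwards [Ioo_mem_nhds hs.1 hs.2] with t ht
      exact hH t ⟨ht.1.le, ht.2.le⟩
    have h3 := h2.congr_of_eventuallyEq hEq
    refine h3.congr_deriv ?_
    ring
  -- pointwise formula for the p-Laplacian flux
  have hφ : ∀ s ∈ Ioo (0:ℝ) R,
      |deriv H s| ^ (p - 2) * deriv H s = -(c * (s * (R ^ β - s ^ β) ^ k)) := by
    intro s hs
    have hW : 0 < R ^ β - s ^ β := hWpos s hs
    have hs0 : 0 < s := hs.1
    have hd : deriv H s = -(α * β) * s ^ (β - 1) * (R ^ β - s ^ β) ^ (α - 1) :=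
      (hDeriv s hs).deriv
    set E : ℝ := (α * β) * s ^ (β - 1) * (R ^ β - s ^ β) ^ (α - 1) with hE
    have hE0 : 0 < E := by
      apply mul_pos (mul_pos (mul_pos hα0 hβ0) _) _
      · exact Real.rpow_pos_of_pos hs0 _
      · exact Real.rpow_pos_of_pos hW _
    have habs : |deriv H s| = E := by
      rw [hd]; rw [show -(α * β) * s ^ (β - 1) * (R ^ β - s ^ β) ^ (α - 1) = -E by
        rw [hE]; ring]
      rw [abs_neg, abs_of_pos hE0]
    have hdE : deriv H s = -E := by rw [hd, hE]; ring
    rw [habs, hdE]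
    have h1 : E ^ (p - 2) * E = E ^ (p - 1) := by
      rw [show p - 1 = p - 2 + 1 by ring, Real.rpow_add_one hE0.ne']
    have h2 : E ^ (p - 1) = c * (s * (R ^ β - s ^ β) ^ k) := by
      rw [hE, Real.mul_rpow (by positivity) (Real.rpow_nonneg hW.le _),
        Real.mul_rpow (by positivity) (Real.rpow_nonneg hs0.le _),
        ← Real.rpow_mul hs0.le, ← Real.rpow_mul hW.le]
      have e1 : (β - 1) * (p - 1) = 1 := by
        rw [hβ]; field_simp; ring
      rw [e1, Real.rpow_one, hc, hk]
      ring_nf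
    rw [mul_neg, h1, h2]
  intro r hr
  have hr0 : 0 < r := hr.1
  have hrR : r < R := hr.2
  have hW : 0 < R ^ β - r ^ β := hWpos r hr
  refine ⟨(hDeriv r hr).differentiableAt, ?_⟩
  -- derivative of the model flux ψ
  have hWder : HasDerivAt (fun s : ℝ => (R ^ β - s ^ β) ^ k)
      (-(β * r ^ (β - 1)) * k * (R ^ β - r ^ β) ^ (k - 1)) r :=
    (hinner r hr0.ne').rpow_const (Or.inl hW.ne')
  have hψ : HasDerivAt (fun s : ℝ => -(c * (s * (R ^ β - s ^ β) ^ k)))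
      (-(c * (1 * (R ^ β - r ^ β) ^ k +
        r * (-(β * r ^ (β - 1)) * k * (R ^ β - r ^ β) ^ (k - 1))))) r := by
    exact (((hasDerivAt_id r).mul hWder).const_mul c).neg
  have hEq : (fun s => |deriv H s| ^ (p - 2) * deriv H s)
      =ᶠ[nhds r] fun s : ℝ => -(c * (s * (R ^ β - s ^ β) ^ k)) := by
    filter_upwards [Ioo_mem_nhds hr0 hrR] with s hs
    exact hφ s hs
  have hmain := hψ.congr_of_eventuallyEq hEq
  -- identify the derivative value
  have hval : A * H r ^ (((α - 1) * (p - 1) - 1) / α) - B * H r ^ ((α - 1) * (p - 1) / α)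
      - (((d : ℝ) - 1) / r) * (|deriv H r| ^ (p - 2) * deriv H r)
      = -(c * (1 * (R ^ β - r ^ β) ^ k +
        r * (-(β * r ^ (β - 1)) * k * (R ^ β - r ^ β) ^ (k - 1)))) := by
    set W : ℝ := R ^ β - r ^ β with hWdef
    have hHr : H r = W ^ α := hH r ⟨hr0.le, hrR.le⟩
    have hpow : ∀ e : ℝ, H r ^ (e / α) = W ^ e := by
      intro e
      rw [hHr, ← Real.rpow_mul hW.le]
      congr 1
      field_simp
    rw [hφ r hr, show ((α - 1) * (p - 1) - 1) / α = (k - 1) / α by rw [hk],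
      show (α - 1) * (p - 1) / α = k / α by rw [hk], hpow, hpow]
    have f1 : W ^ k = W ^ (k - 1) * W := by
      rw [← Real.rpow_add_one hW.ne']; congr 1; ring
    have f2 : r ^ β = r ^ (β - 1) * r := by
      rw [← Real.rpow_add_one hr0.ne']; congr 1; ring
    have f3 : c = α ^ (p - 1) * β ^ (p - 1) := by
      rw [hc, Real.mul_rpow hα0.le hβ0.le]
    have f4 : β ^ p = β ^ (p - 1) * β := by
      rw [← Real.rpow_add_one hβ0.ne']; congr 1; ring
    have f5 : β * (p - 1) = p := by rw [hβ]; field_simp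
    have f2' : r ^ (β - 1) = (R ^ β - W) / r := by
      rw [hWdef, eq_div_iff hr0.ne']
      rw [← f2]; ring
    rw [hA, hB, f1, f3, f4, f2', hk]
    field_simp
    linear_combination (α - 1) * W * f5
  rw [hval]
  exact hmain
end

section
/- Let d ≥ 1 be an integer and p, q real numbers with p > 1, q > p−1 and pq > d(q+1−p). Set m = (p(q−1)+1)/(p−1), α = (p−1)/(q+1−p), K = ((pq − d(q+1−p))/(q+1−p))^{1/(q+1−p)} · (p/(q+1−p))^{(p−1)/(q+1−p)}, L = q^{−1} ((pq − d(q+1−p))/(q+1−p))^{p/(p−1)}, and define u(r) = K (L + r^{p/(p−1)})^{−α} for r ≥ 0. Then u is continuously differentiable on [0,∞) with u'(0) = 0, u(r) → 0 and u'(r) → 0 as r → ∞, and for every r > 0 the function s ↦ |u'(s)|^{p−2}u'(s) is differentiable at r with (|u'|^{p−2}u')'(r) + ((d−1)/r)|u'(r)|^{p−2}u'(r) = u(r)^q − u(r)^m. -/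
open Filter Set Topology MeasureTheory

/-- The explicit positive profile `u(r) = K (L + r^{p/(p-1)})^{-α}`
is a closed-form solution of the radial generalized Lane-Emden equation
`Δ_p u + u^m = u^q` on `(0,∞)` with `u'(0) = 0` and `u, u' → 0` at infinity,
for the exponent relation `m = (p(q-1)+1)/(p-1)`. -/
theorem stmt17 (d : ℕ) (hd : 1 ≤ d) (p q : ℝ) (hp : 1 < p) (hq : p - 1 < q)
    (hpq : (d : ℝ) * (q + 1 - p) < p * q)
    (m α K L : ℝ)
    (hm : m = (p * (q - 1) + 1) / (p - 1))
    (hα : α = (p - 1) / (q + 1 - p))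
    (hK : K = ((p * q - (d : ℝ) * (q + 1 - p)) / (q + 1 - p)) ^ (1 / (q + 1 - p)) *
      (p / (q + 1 - p)) ^ ((p - 1) / (q + 1 - p)))
    (hL : L = q⁻¹ * ((p * q - (d : ℝ) * (q + 1 - p)) / (q + 1 - p)) ^ (p / (p - 1)))
    (u : ℝ → ℝ)
    (hu : ∀ r : ℝ, 0 ≤ r → u r = K * (L + r ^ (p / (p - 1))) ^ (-α)) :
    ∃ u' : ℝ → ℝ,
      (∀ r ∈ Ici (0:ℝ), HasDerivWithinAt u (u' r) (Ici 0) r) ∧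
      ContinuousOn u' (Ici 0) ∧
      u' 0 = 0 ∧
      Tendsto u atTop (𝓝 0) ∧
      Tendsto u' atTop (𝓝 0) ∧
      ∀ r ∈ Ioi (0:ℝ),
        HasDerivAt (fun s => |u' s| ^ (p - 2) * u' s)
          (u r ^ q - u r ^ m - (((d : ℝ) - 1) / r) * (|u' r| ^ (p - 2) * u' r)) r := by
  have hp1 : (0:ℝ) < p - 1 := by linarith
  have hσ : (0:ℝ) < q + 1 - p := by linarith
  have hq0 : (0:ℝ) < q := by linarith
  set σ : ℝ := q + 1 - p with hσdef
  set c : ℝ := (p * q - (d : ℝ) * σ) / σ with hcdef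
  set w : ℝ := p / σ with hwdef
  set β : ℝ := p / (p - 1) with hβdef
  have hσ' : σ ≠ 0 := hσ.ne'
  have hp1' : p - 1 ≠ 0 := hp1.ne'
  have hc0 : 0 < c := div_pos (by linarith) hσ
  have hw0 : 0 < w := div_pos (by linarith) hσ
  have hβ1 : 1 < β := (one_lt_div hp1).2 (by linarith)
  have hβ0 : 0 < β := lt_trans one_pos hβ1
  have hα0 : 0 < α := hα ▸ div_pos hp1 hσ
  have hK0 : 0 < K := by rw [hK]; positivity
  have hL0 : 0 < L := by rw [hL]; positivity
  have hαβ : α * β = w := by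
    rw [hα, hβdef, hwdef]; field_simp
  have hX : ∀ r : ℝ, 0 ≤ r → 0 < L + r ^ β := by
    intro r hr
    have : (0:ℝ) ≤ r ^ β := Real.rpow_nonneg hr β
    linarith
  -- the derivative
  set u' : ℝ → ℝ := fun r => -(K * α * β) * (r ^ (β - 1) * (L + r ^ β) ^ (-α - 1)) with hu'def
  -- derivative of inner function
  have hinner : ∀ r : ℝ, HasDerivAt (fun s : ℝ => L + s ^ β) (β * r ^ (β - 1)) r := by
    intro r
    exact (Real.hasDerivAt_rpow_const (Or.inr hβ1.le)).const_add L
  have hgderiv : ∀ r : ℝ, 0 ≤ r →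
      HasDerivAt (fun s : ℝ => K * (L + s ^ β) ^ (-α)) (u' r) r := by
    intro r hr
    have h1 := ((hinner r).rpow_const (p := -α) (Or.inl (hX r hr).ne')).const_mul K
    refine h1.congr_deriv ?_
    symm
    have : -α - 1 = (-α) - 1 := by ring
    rw [hu'def]
    simp only [this]
    ring
  have hderivWithin : ∀ r ∈ Ici (0:ℝ), HasDerivWithinAt u (u' r) (Ici 0) r := by
    intro r hr
    exact ((hgderiv r hr).hasDerivWithinAt).congr (fun x hx => hu x hx) (hu r hr)
  have hcont : ContinuousOn u' (Ici 0) := by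
    apply ContinuousOn.mul continuousOn_const
    apply ContinuousOn.mul
    · exact continuousOn_id.rpow_const (fun x _ => Or.inr (by linarith))
    · exact (continuousOn_const.add
        (continuousOn_id.rpow_const (fun x _ => Or.inr hβ0.le))).rpow_const
        (fun x hx => Or.inl (hX x hx).ne')
  have hu'0 : u' 0 = 0 := by
    rw [hu'def]
    simp [Real.zero_rpow (by linarith : β - 1 ≠ 0)]
  -- u tends to 0
  have hXtop : Tendsto (fun r : ℝ => L + r ^ β) atTop atTop :=
    tendsto_atTop_add_const_left atTop L (tendsto_rpow_atTop hβ0)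
  have hutop : Tendsto u atTop (𝓝 0) := by
    have h2 : Tendsto (fun r : ℝ => K * (L + r ^ β) ^ (-α)) atTop (𝓝 (K * 0)) :=
      (((tendsto_rpow_neg_atTop hα0).comp hXtop)).const_mul K
    rw [mul_zero] at h2
    refine Tendsto.congr' ?_ h2
    filter_upwards [eventually_ge_atTop (0:ℝ)] with r hr
    exact (hu r hr).symm
  -- u' tends to 0
  have hu'top : Tendsto u' atTop (𝓝 0) := by
    have hg : Tendsto (fun r : ℝ => r ^ (-(1 + β * α))) atTop (𝓝 0) :=
      tendsto_rpow_neg_atTop (by nlinarith)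
    have hsq : Tendsto (fun r : ℝ => r ^ (β - 1) * (L + r ^ β) ^ (-α - 1)) atTop (𝓝 0) := by
      apply squeeze_zero' ?_ ?_ hg
      · filter_upwards [eventually_ge_atTop (0:ℝ)] with r hr
        have := (hX r hr).le
        positivity
      · filter_upwards [eventually_ge_atTop (1:ℝ)] with r hr
        have hr0 : (0:ℝ) < r := lt_of_lt_of_le one_pos hr
        have hb : (L + r ^ β) ^ (-α - 1) ≤ (r ^ β) ^ (-α - 1) := by
          apply Real.rpow_le_rpow_of_nonpos (Real.rpow_pos_of_pos hr0 β)
          · linarith [hL0]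
          · linarith
        calc r ^ (β - 1) * (L + r ^ β) ^ (-α - 1)
            ≤ r ^ (β - 1) * (r ^ β) ^ (-α - 1) := by
              apply mul_le_mul_of_nonneg_left hb (Real.rpow_nonneg hr0.le _)
          _ = r ^ (-(1 + β * α)) := by
              rw [← Real.rpow_mul hr0.le, ← Real.rpow_add hr0]
              ring_nf
    have := hsq.const_mul (-(K * α * β))
    rw [mul_zero] at this
    exact this
  refine ⟨u', hderivWithin, hcont, hu'0, hutop, hu'top, ?_⟩
  -- main ODE part
  set A : ℝ := (K * α * β) ^ (p - 1) with hAdef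
  set γ : ℝ := α * q with hγdef
  have hA0 : 0 < A := Real.rpow_pos_of_pos (by positivity) _
  have hγ0 : 0 < γ := mul_pos hα0 hq0
  -- identity for K^σ
  have hKσ : K ^ σ = c * w ^ (p - 1) := by
    rw [hK]
    rw [Real.mul_rpow (Real.rpow_nonneg hc0.le _) (Real.rpow_nonneg hw0.le _),
      ← Real.rpow_mul hc0.le, ← Real.rpow_mul hw0.le,
      one_div_mul_cancel hσ.ne', div_mul_cancel₀ _ hσ.ne', Real.rpow_one]
  have hAexp : A = K ^ (p - 1) * w ^ (p - 1) := by
    rw [hAdef, mul_assoc, hαβ, Real.mul_rpow hK0.le hw0.le]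
  -- identity 1 : A * c = K ^ q
  have hid1 : A * c = K ^ q := by
    rw [hAexp]
    have : K ^ q = K ^ (p - 1) * K ^ σ := by
      rw [← Real.rpow_add hK0, hσdef]; ring_nf
    rw [this, hKσ]; ring
  -- identity 2 : A * γ * β * L = K ^ m
  have hid2 : A * γ * β * L = K ^ m := by
    have hm' : m = (p - 1) + σ + σ / (p - 1) := by
      rw [hm, hσdef]; field_simp; ring
    have hKm : K ^ m = K ^ (p - 1) * K ^ σ * K ^ (σ / (p - 1)) := by
      rw [hm', Real.rpow_add hK0, Real.rpow_add hK0]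
    have hKs : K ^ (σ / (p - 1)) = c ^ (p - 1)⁻¹ * w := by
      have : σ / (p - 1) = σ * (p - 1)⁻¹ := by ring
      rw [this, Real.rpow_mul hK0.le, hKσ,
        Real.mul_rpow hc0.le (Real.rpow_nonneg hw0.le _),
        ← Real.rpow_mul hw0.le, mul_inv_cancel₀ hp1.ne', Real.rpow_one]
    have hLc : L = q⁻¹ * c ^ β := by rw [hL]
    have hγβ : γ * β = w * q := by
      rw [hγdef, hwdef, hα, hβdef]; field_simp
    have hcβ : c ^ β = c * c ^ (p - 1)⁻¹ := by
      have hβeq : β = 1 + (p - 1)⁻¹ := by rw [hβdef]; field_simp; ring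
      rw [hβeq, Real.rpow_add hc0, Real.rpow_one]
    have hwp : w ^ (p - 1) * w = w ^ p := by
      have : p = (p - 1) + 1 := by ring
      rw [this, Real.rpow_add_one hw0.ne']
      ring_nf
    rw [hKm, hKσ, hKs, hAexp, hLc, hcβ]
    have : K ^ (p - 1) * w ^ (p - 1) * γ * β * (q⁻¹ * (c * c ^ (p - 1)⁻¹))
        = K ^ (p - 1) * (w ^ (p - 1) * w) * (γ * β * q⁻¹ * w⁻¹) * (c * c ^ (p - 1)⁻¹) := by
      field_simp
    rw [this, hγβ]
    have : w * q * q⁻¹ * w⁻¹ = 1 := by field_simp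
    rw [this]
    ring
  -- exponent facts
  have hexp1 : (β - 1) * (p - 1) = 1 := by rw [hβdef]; field_simp; ring
  have hexp2 : (-α - 1) * (p - 1) = -γ := by
    rw [hγdef, hα]; field_simp; ring
  have hαm : α * m = γ + 1 := by
    rw [hγdef, hα, hm]; field_simp; ring
  -- the key local form of the p-flux
  have hflux : ∀ s : ℝ, 0 < s →
      |u' s| ^ (p - 2) * u' s = -A * (s * (L + s ^ β) ^ (-γ)) := by
    intro s hs
    have hXs := hX s hs.le
    set T : ℝ := s ^ (β - 1) * (L + s ^ β) ^ (-α - 1) with hTdef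
    have hT0 : 0 < T := by positivity
    have habs : |u' s| = (K * α * β) * T := by
      rw [hu'def]
      simp only [neg_mul, abs_neg]
      rw [abs_of_pos (by positivity)]
    have hus : u' s = -((K * α * β) * T) := by rw [hu'def]; ring
    rw [habs, hus]
    have hKT : (0:ℝ) < K * α * β := by positivity
    have h1 : (K * α * β * T) ^ (p - 2) * -(K * α * β * T)
        = -((K * α * β * T) ^ (p - 1)) := by
      have : p - 1 = (p - 2) + 1 := by ring
      rw [this, Real.rpow_add_one (by positivity : (K * α * β * T) ≠ 0)]
      ring
    rw [h1, Real.mul_rpow hKT.le hT0.le]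
    have hT : T ^ (p - 1) = s * (L + s ^ β) ^ (-γ) := by
      rw [hTdef, Real.mul_rpow (Real.rpow_nonneg hs.le _) (Real.rpow_nonneg hXs.le _),
        ← Real.rpow_mul hs.le, ← Real.rpow_mul hXs.le, hexp1, hexp2, Real.rpow_one]
    rw [hT, ← hAdef]
    ring
  intro r hr
  rw [mem_Ioi] at hr
  have hXr := hX r hr.le
  -- derivative of the explicit flux
  have hW : HasDerivAt (fun s : ℝ => -A * (s * (L + s ^ β) ^ (-γ)))
      (-A * (1 * (L + r ^ β) ^ (-γ) + r * ((β * r ^ (β - 1)) * (-γ) * (L + r ^ β) ^ (-γ - 1)))) r := by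
    exact ((hasDerivAt_id r).mul ((hinner r).rpow_const (Or.inl hXr.ne'))).const_mul (-A)
  have heq : (fun s : ℝ => |u' s| ^ (p - 2) * u' s)
      =ᶠ[𝓝 r] (fun s : ℝ => -A * (s * (L + s ^ β) ^ (-γ))) := by
    filter_upwards [Ioi_mem_nhds hr] with s hs
    exact hflux s hs
  have hmain := hW.congr_of_eventuallyEq heq
  refine hmain.congr_deriv ?_
  symm
  -- now the algebraic identity
  rw [hflux r hr, hu r hr.le]
  set X : ℝ := L + r ^ β with hXdef
  have hrX : r * r ^ (β - 1) = r ^ β := by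
    nth_rewrite 1 [← Real.rpow_one r]
    rw [← Real.rpow_add hr]
    ring_nf
  have hXX : X * X ^ (-γ - 1) = X ^ (-γ) := by
    nth_rewrite 1 [← Real.rpow_one X]
    rw [← Real.rpow_add hXr]
    ring_nf
  have huq : (K * X ^ (-α)) ^ q = K ^ q * X ^ (-γ) := by
    rw [Real.mul_rpow hK0.le (Real.rpow_nonneg hXr.le _), ← Real.rpow_mul hXr.le]
    congr 1
    rw [hγdef]; ring
  have hum : (K * X ^ (-α)) ^ m = K ^ m * X ^ (-γ - 1) := by
    rw [Real.mul_rpow hK0.le (Real.rpow_nonneg hXr.le _), ← Real.rpow_mul hXr.le]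
    congr 1
    have : -α * m = -(α * m) := by ring
    rw [this, hαm]; ring
  rw [huq, hum, ← hid1, ← hid2]
  have hr' : r ≠ 0 := hr.ne'
  -- replace r * r^(β-1)
  have key : -A * (1 * X ^ (-γ) + r * (β * r ^ (β - 1) * -γ * X ^ (-γ - 1)))
      = -A * (X ^ (-γ)) + A * γ * β * (r ^ β) * X ^ (-γ - 1) := by
    have : r * (β * r ^ (β - 1) * -γ * X ^ (-γ - 1))
        = (r * r ^ (β - 1)) * (β * -γ * X ^ (-γ - 1)) := by ring
    rw [this, hrX]; ring
  rw [key]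
  have hrβ : (r : ℝ) ^ β = X - L := by rw [hXdef]; ring
  rw [hrβ]
  have expand : -A * X ^ (-γ) + A * γ * β * (X - L) * X ^ (-γ - 1)
      = -A * X ^ (-γ) + A * γ * β * (X * X ^ (-γ - 1)) - A * γ * β * L * X ^ (-γ - 1) := by
    ring
  rw [expand, hXX]
  have hcast : A * c = A * ((γ * β) - (d : ℝ)) := by
    congr 1
    have hγβ : γ * β = p * q / σ := by
      rw [hγdef, hα, hβdef]; field_simp
    rw [hγβ, hcdef]
    field_simp
  rw [hcast]
  field_simp
  ring
end

section
/- Let p > 1 and q ≥ 0 be real numbers. For each real m > q set η₁(m) = (p−1)(m+1)+p, η₂ = (p−1)(q+1)+p, ℓ(m) = (m−q)/((m+1)η₂), 𝓑(a,b) = ∫_0^1 t^{a−1}(1−t)^{b−1} dt, and C(m) = [ 2^p (p−1)^{1−p} η₁(m)^{η₁(m)/(m−q)} (m−q)^{1−2p} η₂^{−η₂/(m−q)} 𝓑(η₂/(p(m−q)), (2p−1)/p)^p ]^{−ℓ(m)}. Then lim_{m→∞} C(m) = ((p + (p−1)(q+1))/(2p))^{p/(p + (p−1)(q+1))}. -/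
open Filter Set Topology MeasureTheory

lemma my_beta {a b : ℝ} (ha : 0 < a) (hb : 0 < b) :
    ∫ t in Ioo (0:ℝ) 1, t ^ (a-1) * (1-t) ^ (b-1)
      = Real.Gamma a * Real.Gamma b / Real.Gamma (a+b) := by
  have key := Complex.Gamma_mul_Gamma_eq_betaIntegral (s := a) (t := b) (by simpa) (by simpa)
  have hbeta : Complex.betaIntegral a b
      = ((∫ t in Ioo (0:ℝ) 1, t ^ (a-1) * (1-t) ^ (b-1) : ℝ) : ℂ) := by
    rw [Complex.betaIntegral, intervalIntegral.integral_of_le zero_le_one,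
      ← MeasureTheory.integral_Ioc_eq_integral_Ioo,
      show ((∫ t in Ioc (0:ℝ) 1, t ^ (a-1) * (1-t) ^ (b-1) : ℝ) : ℂ)
        = ∫ t in Ioc (0:ℝ) 1, ((t ^ (a-1) * (1-t) ^ (b-1) : ℝ) : ℂ) from integral_ofReal.symm]
    refine setIntegral_congr_fun measurableSet_Ioc fun x hx => ?_
    rw [Complex.ofReal_mul, Complex.ofReal_cpow hx.1.le,
      Complex.ofReal_cpow (by linarith [hx.2] : (0:ℝ) ≤ 1 - x)]
    push_cast
    ring
  rw [hbeta, ← Complex.ofReal_add, Complex.Gamma_ofReal, Complex.Gamma_ofReal,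
    Complex.Gamma_ofReal, ← Complex.ofReal_mul, ← Complex.ofReal_mul] at key
  have := Complex.ofReal_injective key
  have hG : Real.Gamma (a+b) ≠ 0 := (Real.Gamma_pos_of_pos (by linarith)).ne'
  field_simp
  linarith [this]

lemma my_regroup {u A B D p : ℝ} (hu : 0 < u) (hA : 0 < A) (hB : 0 < B) (hD : 0 ≤ D)
    (hp : 0 < p) (hAB : A = (p-1)*u + B) :
    A ^ (A/u) * u ^ (1-2*p) * D ^ p
      = (A/u)^(p-1) * A^(B/u) * (p/B)^p * (B/(p*u)*D)^p := by
  have hu' : u ≠ 0 := hu.ne'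
  have h1 : A ^ (A/u) = A^(p-1) * A^(B/u) := by
    rw [← Real.rpow_add hA]; congr 1; rw [hAB]; field_simp
  have h2 : u ^ (1-2*p) = u^(-(p-1)) * u^(-p) := by
    rw [← Real.rpow_add hu]; congr 1; ring
  rw [h1, h2, Real.div_rpow hA.le hu.le, Real.div_rpow hp.le hB.le,
      Real.mul_rpow (by positivity) hD,
      Real.div_rpow hB.le (by positivity : (0:ℝ) ≤ p*u),
      Real.mul_rpow hp.le hu.le, Real.rpow_neg hu.le, Real.rpow_neg hu.le]
  have h3 : u ^ (p-1) ≠ 0 := (Real.rpow_pos_of_pos hu _).ne'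
  have h4 : u ^ p ≠ 0 := (Real.rpow_pos_of_pos hu _).ne'
  have h5 : B ^ p ≠ 0 := (Real.rpow_pos_of_pos hB _).ne'
  have h6 : p ^ p ≠ 0 := (Real.rpow_pos_of_pos hp _).ne'
  field_simp



/-- The explicit best constants `C(m)` of the one-dimensional
L^m-type Gagliardo-Nirenberg inequality converge, as `m → ∞`, to the best
constant of the one-dimensional L^∞-type Gagliardo-Nirenberg inequality. -/
theorem stmt18 (p q : ℝ) (hp : 1 < p) (hq : 0 ≤ q) :
    Tendsto (fun m : ℝ =>
      ((2:ℝ) ^ p * (p - 1) ^ (1 - p) *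
        ((p - 1) * (m + 1) + p) ^ (((p - 1) * (m + 1) + p) / (m - q)) *
        (m - q) ^ (1 - 2 * p) *
        ((p - 1) * (q + 1) + p) ^ (-(((p - 1) * (q + 1) + p) / (m - q))) *
        (∫ t in Ioo (0:ℝ) 1,
          t ^ (((p - 1) * (q + 1) + p) / (p * (m - q)) - 1) *
            (1 - t) ^ ((2 * p - 1) / p - 1)) ^ p) ^
        (-((m - q) / ((m + 1) * ((p - 1) * (q + 1) + p)))))
      atTop
      (𝓝 (((p + (p - 1) * (q + 1)) / (2 * p)) ^ (p / (p + (p - 1) * (q + 1))))) := by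
  have hp0 : (0:ℝ) < p := by linarith
  have hp1 : (0:ℝ) < p - 1 := by linarith
  have he2 : (0:ℝ) < (p - 1) * (q + 1) + p := by nlinarith
  have hb : (0:ℝ) < (2 * p - 1) / p := div_pos (by linarith) hp0
  set E2 := (p - 1) * (q + 1) + p with hE2
  set b := (2 * p - 1) / p with hbdef
  -- basic tendsto facts
  have hu_t : Tendsto (fun m : ℝ => m - q) atTop atTop := by
    simpa [sub_eq_add_neg] using tendsto_atTop_add_const_right atTop (-q) tendsto_id
  have hA_t : Tendsto (fun m : ℝ => (p - 1) * (m + 1) + p) atTop atTop := by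
    have h1 : Tendsto (fun m : ℝ => (p - 1) * m) atTop atTop :=
      Tendsto.const_mul_atTop hp1 tendsto_id
    exact (tendsto_atTop_add_const_right atTop ((p - 1) + p) h1).congr fun m => by ring
  have hz : Tendsto (fun m : ℝ => E2 / (m - q)) atTop (𝓝 0) :=
    tendsto_const_nhds.div_atTop hu_t
  have hAu : Tendsto (fun m : ℝ => ((p - 1) * (m + 1) + p) / (m - q)) atTop (𝓝 (p - 1)) := by
    have h1 : Tendsto (fun m : ℝ => (p - 1) + E2 / (m - q)) atTop (𝓝 (p - 1)) := by
      simpa using tendsto_const_nhds.add hz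
    refine h1.congr' ?_
    filter_upwards [eventually_gt_atTop q] with m hm
    have hm0 : m - q ≠ 0 := sub_ne_zero_of_ne hm.ne'
    rw [hE2]; field_simp; ring
  -- T3 : A ^ (E2 / u) → 1
  have hlogA : Tendsto
      (fun m : ℝ => Real.log ((p - 1) * (m + 1) + p) / ((p - 1) * (m + 1) + p)) atTop (𝓝 0) :=
    Real.isLittleO_log_id_atTop.tendsto_div_nhds_zero.comp hA_t
  have hT3 : Tendsto (fun m : ℝ => ((p - 1) * (m + 1) + p) ^ (E2 / (m - q))) atTop (𝓝 1) := by
    have hexp : Tendsto (fun m : ℝ => E2 *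
        (Real.log ((p - 1) * (m + 1) + p) / ((p - 1) * (m + 1) + p) *
          (((p - 1) * (m + 1) + p) / (m - q)))) atTop (𝓝 (E2 * (0 * (p - 1)))) :=
      tendsto_const_nhds.mul (hlogA.mul hAu)
    rw [zero_mul, mul_zero] at hexp
    have h2 := (Real.continuous_exp.tendsto 0).comp hexp
    rw [Real.exp_zero] at h2
    refine h2.congr' ?_
    filter_upwards [eventually_gt_atTop q] with m hm
    have hm1 : (0:ℝ) < m + 1 := by linarith
    have hApos : 0 < (p - 1) * (m + 1) + p := by nlinarith
    have hm0 : m - q ≠ 0 := sub_ne_zero_of_ne hm.ne'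
    rw [Function.comp_apply, Real.rpow_def_of_pos hApos]
    congr 1
    field_simp
  have hE2pow : Tendsto (fun m : ℝ => E2 ^ (-(E2 / (m - q)))) atTop (𝓝 1) := by
    have := (tendsto_const_nhds (x := E2) (f := atTop)).rpow hz.neg (Or.inl he2.ne')
    simpa using this
  -- T5 : a * D → 1
  have hGb : (0:ℝ) < Real.Gamma b := Real.Gamma_pos_of_pos hb
  have hc1 : ContinuousAt Real.Gamma 1 := by
    refine (Real.differentiableAt_Gamma fun n => ?_).continuousAt
    intro hcon
    have h0 := Nat.cast_nonneg (α := ℝ) n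
    linarith
  have hcb : ContinuousAt Real.Gamma b := by
    refine (Real.differentiableAt_Gamma fun n => ?_).continuousAt
    intro hcon
    have h0 := Nat.cast_nonneg (α := ℝ) n
    linarith
  have ha_t : Tendsto (fun m : ℝ => E2 / (p * (m - q))) atTop (𝓝 0) :=
    tendsto_const_nhds.div_atTop (Tendsto.const_mul_atTop hp0 hu_t)
  have hT5 : Tendsto (fun m : ℝ => E2 / (p * (m - q)) *
      ∫ t in Ioo (0:ℝ) 1, t ^ (E2 / (p * (m - q)) - 1) * (1 - t) ^ (b - 1)) atTop (𝓝 1) := by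
    have c1 : Tendsto (fun m : ℝ => Real.Gamma (E2 / (p * (m - q)) + 1)) atTop
        (𝓝 (Real.Gamma 1)) := by
      refine hc1.tendsto.comp ?_
      simpa using ha_t.add (tendsto_const_nhds (x := (1:ℝ)))
    have c2 : Tendsto (fun m : ℝ => Real.Gamma (E2 / (p * (m - q)) + b)) atTop
        (𝓝 (Real.Gamma b)) := by
      refine hcb.tendsto.comp ?_
      simpa using ha_t.add (tendsto_const_nhds (x := b))
    have h1 := (c1.mul (tendsto_const_nhds (x := Real.Gamma b))).div c2 hGb.ne'
    rw [Real.Gamma_one, one_mul, div_self hGb.ne'] at h1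
    refine h1.congr' ?_
    filter_upwards [eventually_gt_atTop q] with m hm
    have hu : (0:ℝ) < m - q := by linarith
    have ha : (0:ℝ) < E2 / (p * (m - q)) := div_pos he2 (by positivity)
    simp only [Pi.div_apply]
    rw [my_beta ha hb, Real.Gamma_add_one ha.ne']
    ring
  -- the factored product converges
  have hfact : Tendsto (fun m : ℝ =>
      (2:ℝ) ^ p * (p - 1) ^ (1 - p) * E2 ^ (-(E2 / (m - q))) *
        ((((p - 1) * (m + 1) + p) / (m - q)) ^ (p - 1) *
          ((p - 1) * (m + 1) + p) ^ (E2 / (m - q)) * (p / E2) ^ p *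
          (E2 / (p * (m - q)) *
            ∫ t in Ioo (0:ℝ) 1, t ^ (E2 / (p * (m - q)) - 1) * (1 - t) ^ (b - 1)) ^ p))
      atTop
      (𝓝 ((2:ℝ) ^ p * (p - 1) ^ (1 - p) * 1 *
        ((p - 1) ^ (p - 1) * 1 * (p / E2) ^ p * 1 ^ p))) :=
    (tendsto_const_nhds.mul hE2pow).mul
      ((((hAu.rpow_const (Or.inl hp1.ne')).mul hT3).mul tendsto_const_nhds).mul
        (hT5.rpow_const (Or.inl one_ne_zero)))
  have hL0eq : (2:ℝ) ^ p * (p - 1) ^ (1 - p) * 1 *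
      ((p - 1) ^ (p - 1) * 1 * (p / E2) ^ p * 1 ^ p) = (2 * p / E2) ^ p := by
    rw [Real.one_rpow, mul_one, mul_one, mul_one]
    rw [show (2:ℝ) ^ p * (p - 1) ^ (1 - p) * ((p - 1) ^ (p - 1) * (p / E2) ^ p)
        = (p - 1) ^ (1 - p) * (p - 1) ^ (p - 1) * ((2:ℝ) ^ p * (p / E2) ^ p) from by ring]
    rw [← Real.rpow_add hp1, show (1 - p) + (p - 1) = 0 from by ring, Real.rpow_zero, one_mul,
      ← Real.mul_rpow (by norm_num) (div_pos hp0 he2).le, ← mul_div_assoc]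
  rw [hL0eq] at hfact
  -- the factored product eventually equals the original base
  have hG : Tendsto (fun m : ℝ =>
      (2:ℝ) ^ p * (p - 1) ^ (1 - p) *
        ((p - 1) * (m + 1) + p) ^ (((p - 1) * (m + 1) + p) / (m - q)) *
        (m - q) ^ (1 - 2 * p) * E2 ^ (-(E2 / (m - q))) *
        (∫ t in Ioo (0:ℝ) 1,
          t ^ (E2 / (p * (m - q)) - 1) * (1 - t) ^ (b - 1)) ^ p)
      atTop (𝓝 ((2 * p / E2) ^ p)) := by
    refine hfact.congr' ?_
    filter_upwards [eventually_gt_atTop q] with m hm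
    have hu : (0:ℝ) < m - q := by linarith
    have hm1 : (0:ℝ) < m + 1 := by linarith
    have hA : (0:ℝ) < (p - 1) * (m + 1) + p := by nlinarith
    have hD : (0:ℝ) ≤ ∫ t in Ioo (0:ℝ) 1,
        t ^ (E2 / (p * (m - q)) - 1) * (1 - t) ^ (b - 1) := by
      refine setIntegral_nonneg measurableSet_Ioo fun t ht => ?_
      have h1 : 0 ≤ t := ht.1.le
      have h2 : 0 ≤ 1 - t := by linarith [ht.2]
      positivity
    have hre := my_regroup hu hA he2 hD hp0
      (show (p - 1) * (m + 1) + p = (p - 1) * (m - q) + E2 from by rw [hE2]; ring)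
    rw [← hre]
    ring
  -- exponent tendsto
  have hE : Tendsto (fun m : ℝ => -((m - q) / ((m + 1) * E2))) atTop (𝓝 (-(1 / E2))) := by
    have h0 : Tendsto (fun m : ℝ => (q + 1) / (m + 1)) atTop (𝓝 0) :=
      tendsto_const_nhds.div_atTop (tendsto_atTop_add_const_right atTop 1 tendsto_id)
    have h1 : Tendsto (fun m : ℝ => (1 - (q + 1) / (m + 1)) / E2) atTop (𝓝 (1 / E2)) := by
      have := (tendsto_const_nhds (x := (1:ℝ)) (f := atTop)).sub h0
      rw [sub_zero] at this
      exact this.div_const E2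
    refine h1.neg.congr' ?_
    filter_upwards [eventually_gt_atTop q] with m hm
    have hm1 : m + 1 ≠ 0 := (by linarith : (0:ℝ) < m + 1).ne'
    field_simp
    ring
  -- conclude
  have h2p : (0:ℝ) < 2 * p / E2 := div_pos (by linarith) he2
  have hfin : ((p + (p - 1) * (q + 1)) / (2 * p)) ^ (p / (p + (p - 1) * (q + 1)))
      = ((2 * p / E2) ^ p) ^ (-(1 / E2)) := by
    have e1 : p + (p - 1) * (q + 1) = E2 := by rw [hE2]; ring
    rw [e1, ← Real.rpow_mul h2p.le, show p * -(1 / E2) = -(p / E2) from by ring,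
      Real.rpow_neg h2p.le, ← Real.inv_rpow h2p.le, inv_div]
  rw [hfin]
  exact hG.rpow hE (Or.inl (Real.rpow_pos_of_pos h2p p).ne')
end
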